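/- arXiv:2009.08433 — 3 statements merged into one kernel-verified Lean document; each statement's English description precedes it below -/
import Mathlib

section
/- Let I = (i₋, i₊) ⊆ ℝ be an open interval and f : I → ℝ twice continuously differentiable with ‖f'‖_{C⁰(I)} < ∞ and ‖f''‖_{C⁰(I)} < ∞. Let I'₁, I'₂ ⊆ I be intervals with [|f|]_{I'₁} > 0 and [|f|]_{I'₂} > 0. Let a < b and let ū, ψ ∈ C¹([a,b]) with Im(ū) ⊊ I'₁ and Im(ψ) ⊊ I'₂ satisfy ‖ū'‖_{C⁰([a,b])} < [|f|]_{I'₁} / ((b−a)·‖f''‖_{C⁰(I)}) and ‖ψ'‖_{C⁰([a,b])} < [|f|]_{I'₂} / ((b−a)·‖f''‖_{C⁰(I)}). Then for every T > T* := (b−a)/[|f|]_{I'₁} + (b−a)/[|f|]_{I'₂} there exists h ∈ C⁰([0,T]) such that the balance law ∂ₜu + ∂ₓf(u) = h(t) admits a classical solution u ∈ C¹([0,T]×[a,b]) with u(0,x) = ū(x) and u(T,x) = ψ(x) for all x ∈ [a,b]. -/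
open Set Filter MeasureTheory Topology

/-- The sup (C⁰) norm of `φ` on the set `s`: `‖φ‖_{C⁰(s)} = sup_{x ∈ s} |φ x|`. -/
noncomputable def supNorm (φ : ℝ → ℝ) (s : Set ℝ) : ℝ :=
  sSup ((fun x => |φ x|) '' s)

/-- `[|f|]_{J}` relative to the domain `I`: the sup over all `k ≠ 0` with `J + k ⊆ I`
of `inf_{u ∈ J} |(f (u + k) - f u) / k|`. -/
noncomputable def bracketNorm (f : ℝ → ℝ) (I J : Set ℝ) : ℝ :=
  sSup {r : ℝ | ∃ k : ℝ, k ≠ 0 ∧ (fun u => u + k) '' J ⊆ I ∧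
    r = sInf ((fun u => |(f (u + k) - f u) / k|) '' J)}

/-- A classical solution of `∂ₜ u + ∂ₓ f(u) = h(t)` on `[0,T] × [a,b]`, taking values in `I`. -/
def IsClassicalSolution (I : Set ℝ) (f h : ℝ → ℝ) (T a b : ℝ) (u : ℝ → ℝ → ℝ) : Prop :=
  ContDiffOn ℝ 1 (fun p : ℝ × ℝ => u p.1 p.2) (Set.Icc 0 T ×ˢ Set.Icc a b) ∧
  (∀ t ∈ Set.Icc 0 T, ∀ x ∈ Set.Icc a b, u t x ∈ I) ∧
  (∀ t ∈ Set.Icc 0 T, ∀ x ∈ Set.Icc a b,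
    derivWithin (fun s => u s x) (Set.Icc 0 T) t
      + deriv f (u t x) * derivWithin (fun y => u t y) (Set.Icc a b) x = h t)

/-- A classical solution of `∂ₜ u + ∂ₓ f(u) = h(t)` on `[0,T] × ℝ`, taking values in `I`. -/
def IsClassicalSolutionLine (I : Set ℝ) (f h : ℝ → ℝ) (T : ℝ) (u : ℝ → ℝ → ℝ) : Prop :=
  ContDiffOn ℝ 1 (fun p : ℝ × ℝ => u p.1 p.2) (Set.Icc 0 T ×ˢ (Set.univ : Set ℝ)) ∧
  (∀ t ∈ Set.Icc 0 T, ∀ x : ℝ, u t x ∈ I) ∧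
  (∀ t ∈ Set.Icc 0 T, ∀ x : ℝ,
    derivWithin (fun s => u s x) (Set.Icc 0 T) t
      + deriv f (u t x) * deriv (fun y => u t y) x = h t)

/-- Hypothesis (H2)-(ii): `i₊ = +∞`, `|f'(u)| → ∞` as `u → +∞`, and
`|f'(u)| / sup_{z ∈ (i₋, u)} |f''(z)| → ∞` as `u → +∞`. -/
def H2ii (I : Set ℝ) (f : ℝ → ℝ) : Prop :=
  ¬ BddAbove I ∧ Filter.Tendsto (fun u => |deriv f u|) Filter.atTop Filter.atTop ∧
    Filter.Tendsto
      (fun u => |deriv f u| / sSup ((fun z => |deriv (deriv f) z|) '' {z ∈ I | z < u}))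
      Filter.atTop Filter.atTop

/-- Hypothesis (H2)-(iii): `i₋ = -∞`, `|f'(u)| → ∞` as `u → -∞`, and
`|f'(u)| / sup_{z ∈ (u, i₊)} |f''(z)| → ∞` as `u → -∞`. -/
def H2iii (I : Set ℝ) (f : ℝ → ℝ) : Prop :=
  ¬ BddBelow I ∧ Filter.Tendsto (fun u => |deriv f u|) Filter.atBot Filter.atTop ∧
    Filter.Tendsto
      (fun u => |deriv f u| / sSup ((fun z => |deriv (deriv f) z|) '' {z ∈ I | u < z}))
      Filter.atBot Filter.atTop

/-- The upper Dini derivative `D⁺φ(x)` of `φ` at `x`, with increments restricted to `s`. -/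
noncomputable def upperDini (φ : ℝ → ℝ) (s : Set ℝ) (x : ℝ) : EReal :=
  Filter.limsup (fun k => (((φ (x + k) - φ x) / k : ℝ) : EReal))
    (nhdsWithin 0 {k : ℝ | k ≠ 0 ∧ x + k ∈ s})

/-- The lower Dini derivative `D⁻φ(x)` of `φ` at `x`, with increments restricted to `s`. -/
noncomputable def lowerDini (φ : ℝ → ℝ) (s : Set ℝ) (x : ℝ) : EReal :=
  Filter.liminf (fun k => (((φ (x + k) - φ x) / k : ℝ) : EReal))
    (nhdsWithin 0 {k : ℝ | k ≠ 0 ∧ x + k ∈ s})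

/-- An entropy / entropy-flux pair `(η, q)` for the flux `f` on `I`. -/
def IsEntropyPair (I : Set ℝ) (f η q : ℝ → ℝ) : Prop :=
  ContDiffOn ℝ 1 η I ∧ ContDiffOn ℝ 1 q I ∧ ∀ v ∈ I, deriv q v = deriv η v * deriv f v

/-- An entropy weak solution of `∂ₜ u + ∂ₓ f(u) = h(t)`, `u(0,·) = ū`, on `[0,T] × [a,b]`. -/
def IsEntropyWeakSolution (I : Set ℝ) (f h : ℝ → ℝ) (T a b : ℝ)
    (ubar : ℝ → ℝ) (u : ℝ → ℝ → ℝ) : Prop :=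
  (∀ t ∈ Set.Icc 0 T, ∀ x ∈ Set.Icc a b, u t x ∈ I) ∧
  (∀ t₀ ∈ Set.Icc 0 T,
    Filter.Tendsto (fun t => ∫ x in Set.Icc a b, |u t x - u t₀ x|)
      (nhdsWithin t₀ (Set.Icc 0 T)) (nhds 0)) ∧
  (∀ᵐ x ∂(MeasureTheory.volume.restrict (Set.Icc a b)), u 0 x = ubar x) ∧
  (∀ η q : ℝ → ℝ, IsEntropyPair I f η q → ConvexOn ℝ I η →
    ∀ φ : ℝ × ℝ → ℝ, ContDiff ℝ 1 φ → HasCompactSupport φ →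
      tsupport φ ⊆ Set.Ioo 0 T ×ˢ Set.Ioo a b → (∀ p, 0 ≤ φ p) →
      0 ≤ ∫ t in Set.Ioo 0 T, ∫ x in Set.Ioo a b,
        (η (u t x) * deriv (fun s => φ (s, x)) t +
         q (u t x) * deriv (fun y => φ (t, y)) x +
         deriv η (u t x) * h t * φ (t, x)))



set_option maxHeartbeats 1000000


section AuxProof

private lemma contDiffWithinAt_of_open {u F : ℝ × ℝ → ℝ} {O s : Set (ℝ × ℝ)} {p : ℝ × ℝ}
    (hO : IsOpen O) (hp : p ∈ O) (hF : ContDiffOn ℝ 1 F O) (heq : Set.EqOn u F O) :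
    ContDiffWithinAt ℝ 1 u s p := by
  have h1 : ContDiffAt ℝ 1 F p := hF.contDiffAt (hO.mem_nhds hp)
  have h2 : u =ᶠ[nhds p] F := by
    filter_upwards [hO.mem_nhds hp] with q hq using heq hq
  exact (h1.congr_of_eventuallyEq h2).contDiffWithinAt

private noncomputable def etaFn (s : ℝ) : ℝ := if s ≤ -1 then 0 else (1 + s) * (1 + 3 * s)

private lemma etaFn_cont : Continuous etaFn := by
  unfold etaFn
  apply Continuous.if_le continuous_const (by continuity) continuous_id continuous_const
  intro s hs; simp only [id] at hs; rw [hs]; ring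

private lemma etaFn_zero : etaFn 0 = 1 := by norm_num [etaFn]

private lemma etaFn_of_le {s : ℝ} (h : s ≤ -1) : etaFn s = 0 := by simp [etaFn, h]

private lemma etaFn_abs_le {s : ℝ} (hs : s ≤ 0) : |etaFn s| ≤ 1 := by
  unfold etaFn
  split_ifs with h
  · simp
  · push_neg at h
    rw [abs_le]; constructor <;> nlinarith

private lemma etaFn_integral_left {a : ℝ} (δ : ℝ) (hδ : 0 < δ) :
    (∫ t in (a - δ)..a, etaFn ((t - a)/δ)) = 0 := by
  have hδ' : δ ≠ 0 := ne_of_gt hδ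
  have hEq : Set.EqOn (fun t => etaFn ((t - a)/δ))
      (fun t => (1 + (t - a)/δ) * (1 + 3 * ((t - a)/δ))) (Set.uIcc (a - δ) a) := by
    intro t ht
    rw [Set.uIcc_of_le (by linarith)] at ht
    by_cases h : (t - a)/δ ≤ -1
    · have h1 : (t - a)/δ = -1 := by
        have := ht.1
        have : -1 ≤ (t - a)/δ := by
          rw [le_div_iff₀ hδ] at *; linarith
        linarith
      simp only [etaFn, h1]
      norm_num
    · simp [etaFn, h]
  rw [intervalIntegral.integral_congr hEq]
  have key : ∀ t ∈ Set.uIcc (a - δ) a,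
      HasDerivAt (fun t => (t - a) + 2*(t - a)^2/δ + (t - a)^3/δ^2)
        ((1 + (t - a)/δ) * (1 + 3 * ((t - a)/δ))) t := by
    intro t _
    have h1 : HasDerivAt (fun t : ℝ => t - a) 1 t := (hasDerivAt_id t).sub_const a
    have h2 : HasDerivAt (fun t : ℝ => (t - a)^2) (2*(t - a)) t := by
      simpa using h1.fun_pow 2
    have h3 : HasDerivAt (fun t : ℝ => (t - a)^3) (3*(t - a)^2) t := by
      simpa using h1.fun_pow 3
    have := (h1.fun_add ((h2.div_const δ).const_mul 2)).fun_add (h3.div_const (δ^2))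
    convert this using 1
    · rfl
    · rfl
    · funext x; ring
    field_simp
    ring
  rw [intervalIntegral.integral_eq_sub_of_hasDerivAt key (by apply Continuous.intervalIntegrable; continuity)]
  field_simp
  ring

private lemma etaFn_integral_right {b : ℝ} (δ : ℝ) (hδ : 0 < δ) :
    (∫ t in b..(b + δ), etaFn ((b - t)/δ)) = 0 := by
  have := intervalIntegral.integral_comp_sub_left (a := b) (b := b + δ)
    (fun u => etaFn ((u - b)/δ)) (2*b)
  have h2 : (fun t => etaFn ((2*b - t - b)/δ)) = fun t => etaFn ((b - t)/δ) := by
    funext t; ring_nf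
  rw [show (2*b - (b+δ)) = b - δ by ring, show (2*b - b) = b by ring] at this
  calc (∫ t in b..(b + δ), etaFn ((b - t)/δ))
      = ∫ t in b..(b + δ), etaFn ((2*b - t - b)/δ) := by rw [h2]
    _ = ∫ u in (b - δ)..b, etaFn ((u - b)/δ) := this
    _ = 0 := etaFn_integral_left δ hδ

lemma exists_extension (a b : ℝ) (hab : a < b) (φ : ℝ → ℝ)
    (hφ : ContDiffOn ℝ 1 φ (Icc a b)) (D δ : ℝ) (hδ : 0 < δ)
    (hD : ∀ x ∈ Icc a b, |derivWithin φ (Icc a b) x| ≤ D) :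
    ∃ W : ℝ → ℝ, ContDiff ℝ 1 W ∧ (∀ x ∈ Icc a b, W x = φ x) ∧
      (∀ y, |deriv W y| ≤ D) ∧ (∀ y, y ≤ a - δ → W y = φ a) ∧
      (∀ y, b + δ ≤ y → W y = φ b) ∧
      (∀ y, ∃ z ∈ Icc a b, |W y - φ z| ≤ δ * D) := by
  have hD0 : 0 ≤ D := le_trans (abs_nonneg _) (hD a ⟨le_rfl, hab.le⟩)
  set dφ := derivWithin φ (Icc a b) with hdφ
  have hdφc : ContinuousOn dφ (Icc a b) :=
    hφ.continuousOn_derivWithin (uniqueDiffOn_Icc hab) le_rfl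
  set cl : ℝ → ℝ := fun y => max a (min b y) with hcl
  have hclmem : ∀ y, cl y ∈ Icc a b := fun y =>
    ⟨le_max_left _ _, max_le hab.le (min_le_left _ _)⟩
  have hclx : ∀ x ∈ Icc a b, cl x = x := by
    intro x hx
    simp only [hcl]
    rw [min_eq_right hx.2, max_eq_right hx.1]
  set P : ℝ → ℝ := fun y =>
    if y ≤ a then etaFn ((y - a)/δ) else if y ≤ b then 1 else etaFn ((b - y)/δ) with hP
  have hPcont : Continuous P := by
    apply Continuous.if_le (etaFn_cont.comp (by continuity)) _ continuous_id continuous_const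
    · intro y hy
      simp only [id] at hy
      subst hy
      simp [etaFn_zero, hab.le]
    · apply Continuous.if_le continuous_const (etaFn_cont.comp (by continuity))
        continuous_id continuous_const
      intro y hy
      simp only [id] at hy
      subst hy
      simp [etaFn_zero]
  have hPbound : ∀ y, |P y| ≤ 1 := by
    intro y
    simp only [hP]
    split_ifs with h1 h2
    · exact etaFn_abs_le (div_nonpos_of_nonpos_of_nonneg (by linarith) hδ.le)
    · simp
    · push_neg at h2
      exact etaFn_abs_le (div_nonpos_of_nonpos_of_nonneg (by linarith) hδ.le)
  have hPIcc : ∀ y ∈ Icc a b, P y = 1 := by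
    intro y hy
    simp only [hP]
    split_ifs with h1 h2
    · have : y = a := le_antisymm h1 hy.1
      subst this
      rw [sub_self, zero_div]; exact etaFn_zero
    · rfl
    · exact absurd hy.2 h2
  set g : ℝ → ℝ := fun y => dφ (cl y) * P y with hg
  have hgcont : Continuous g := (hdφc.comp_continuous (continuous_const.max (continuous_const.min continuous_id)) hclmem).mul hPcont
  have hgbound : ∀ y, |g y| ≤ D := by
    intro y
    rw [abs_mul]
    calc |dφ (cl y)| * |P y| ≤ D * 1 :=
          mul_le_mul (hD _ (hclmem y)) (hPbound y) (abs_nonneg _) hD0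
      _ = D := mul_one D
  set W : ℝ → ℝ := fun y => φ a + ∫ t in a..y, g t with hW
  have hW' : ∀ y, HasDerivAt W (g y) y := by
    intro y
    exact (intervalIntegral.integral_hasDerivAt_right (hgcont.intervalIntegrable _ _)
      (hgcont.stronglyMeasurableAtFilter _ _) hgcont.continuousAt).const_add _
  have hderivW : deriv W = g := funext fun y => (hW' y).deriv
  have hWC1 : ContDiff ℝ 1 W := contDiff_one_iff_deriv.2
    ⟨fun y => (hW' y).differentiableAt, by rw [hderivW]; exact hgcont⟩
  -- W = φ on Icc
  have hWeq : ∀ x ∈ Icc a b, W x = φ x := by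
    intro x hx
    have hEqg : Set.EqOn g dφ (Set.uIcc a x) := by
      intro t ht
      rw [Set.uIcc_of_le hx.1] at ht
      have htI : t ∈ Icc a b := ⟨ht.1, le_trans ht.2 hx.2⟩
      simp only [hg]
      rw [hclx t htI, hPIcc t htI, mul_one]
    have hint : IntervalIntegrable dφ MeasureTheory.volume a x :=
      (hdφc.mono (by rw [Set.uIcc_of_le hx.1]; exact Icc_subset_Icc le_rfl hx.2)).intervalIntegrable
    have hFTC : (∫ t in a..x, dφ t) = φ x - φ a := by
      apply intervalIntegral.integral_eq_sub_of_hasDeriv_right_of_le hx.1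
        (hφ.continuousOn.mono (Icc_subset_Icc le_rfl hx.2))
      · intro t ht
        have htI : t ∈ Ioo a b := ⟨ht.1, lt_of_lt_of_le ht.2 hx.2⟩
        have h1 : HasDerivWithinAt φ (dφ t) (Icc a b) t :=
          (hφ.differentiableOn one_ne_zero t ⟨htI.1.le, htI.2.le⟩).hasDerivWithinAt
        exact (h1.hasDerivAt (Icc_mem_nhds htI.1 htI.2)).hasDerivWithinAt
      · exact hint
    simp only [hW]
    rw [intervalIntegral.integral_congr hEqg, hFTC]
    ring
  -- flat left
  have hflatL : ∀ y, y ≤ a - δ → W y = φ a := by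
    intro y hy
    have h1 : (∫ t in y..(a - δ), g t) = 0 := by
      have : Set.EqOn g (fun _ => (0:ℝ)) (Set.uIcc y (a - δ)) := by
        intro t ht
        rw [Set.uIcc_of_le hy] at ht
        have ht1 : t ≤ a - δ := ht.2
        have hta : ¬ (a < t) := by linarith
        simp only [hg, hP]
        rw [if_pos (by linarith : t ≤ a)]
        rw [etaFn_of_le (by rw [div_le_iff₀ hδ]; linarith)]
        ring
      rw [intervalIntegral.integral_congr this]
      simp
    have h2 : (∫ t in (a - δ)..a, g t) = dφ a * ∫ t in (a - δ)..a, etaFn ((t - a)/δ) := by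
      rw [← intervalIntegral.integral_const_mul]
      apply intervalIntegral.integral_congr
      intro t ht
      rw [Set.uIcc_of_le (by linarith)] at ht
      obtain ⟨ht1, ht2⟩ := ht
      have hcla : cl t = a := by
        simp only [hcl]
        rw [min_eq_right (by linarith : t ≤ b), max_eq_left ht2]
      simp only [hg, hP]
      rw [hcla, if_pos ht2]
    have h3 : (∫ t in a..y, g t) = 0 := by
      have hsplit : (∫ t in y..(a-δ), g t) + (∫ t in (a-δ)..a, g t) = ∫ t in y..a, g t :=
        intervalIntegral.integral_add_adjacent_intervals
          (hgcont.intervalIntegrable _ _) (hgcont.intervalIntegrable _ _)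
      rw [h1, h2, etaFn_integral_left δ hδ, mul_zero, add_zero] at hsplit
      rw [intervalIntegral.integral_symm y a, ← hsplit, neg_zero]
    simp only [hW]
    rw [h3]; ring
  -- flat right
  have hflatR : ∀ y, b + δ ≤ y → W y = φ b := by
    intro y hy
    have hWb : W b = φ b := hWeq b ⟨hab.le, le_rfl⟩
    have h2 : (∫ t in b..(b+δ), g t) = dφ b * ∫ t in b..(b+δ), etaFn ((b - t)/δ) := by
      rw [← intervalIntegral.integral_const_mul]
      apply intervalIntegral.integral_congr
      intro t ht
      rw [Set.uIcc_of_le (by linarith)] at ht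
      obtain ⟨ht1, ht2⟩ := ht
      have hclb : cl t = b := by
        simp only [hcl]
        rw [min_eq_left ht1, max_eq_right hab.le]
      simp only [hg, hP]
      rw [hclb]
      by_cases h1 : t ≤ a
      · exfalso; linarith
      · rw [if_neg h1]
        by_cases h2 : t ≤ b
        · have : t = b := le_antisymm h2 ht1
          subst this
          rw [if_pos le_rfl, sub_self, zero_div, etaFn_zero]
        · rw [if_neg h2]
    have h1 : (∫ t in (b+δ)..y, g t) = 0 := by
      have : Set.EqOn g (fun _ => (0:ℝ)) (Set.uIcc (b+δ) y) := by
        intro t ht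
        rw [Set.uIcc_of_le hy] at ht
        obtain ⟨ht1, ht2⟩ := ht
        simp only [hg, hP]
        rw [if_neg (not_le.mpr (by linarith : a < t)), if_neg (not_le.mpr (by linarith : b < t))]
        rw [etaFn_of_le (by rw [div_le_iff₀ hδ]; linarith)]
        ring
      rw [intervalIntegral.integral_congr this]
      simp
    have hsplit : (∫ t in b..(b+δ), g t) + (∫ t in (b+δ)..y, g t) = ∫ t in b..y, g t :=
      intervalIntegral.integral_add_adjacent_intervals
        (hgcont.intervalIntegrable _ _) (hgcont.intervalIntegrable _ _)
    rw [h1, h2, etaFn_integral_right δ hδ, mul_zero, add_zero] at hsplit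
    have hsplit2 : (∫ t in a..b, g t) + (∫ t in b..y, g t) = ∫ t in a..y, g t :=
      intervalIntegral.integral_add_adjacent_intervals
        (hgcont.intervalIntegrable _ _) (hgcont.intervalIntegrable _ _)
    simp only [hW] at hWb ⊢
    rw [← hsplit2, ← add_assoc, hWb, ← hsplit, add_zero]
  -- image bound
  have himg : ∀ y, ∃ z ∈ Icc a b, |W y - φ z| ≤ δ * D := by
    intro y
    rcases le_or_gt y a with hya | hya
    · refine ⟨a, ⟨le_rfl, hab.le⟩, ?_⟩
      rcases le_or_gt y (a - δ) with hyd | hyd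
      · rw [hflatL y hyd]; simp [mul_nonneg hδ.le hD0]
      · have heq0 : W y - φ a = ∫ t in a..y, g t := by simp only [hW]; ring
        rw [heq0, intervalIntegral.integral_symm y a, abs_neg]
        have hb2 := intervalIntegral.norm_integral_le_of_norm_le_const
          (C := D) (f := g) (a := y) (b := a) (fun t _ => by
            rw [Real.norm_eq_abs]; exact hgbound t)
        rw [Real.norm_eq_abs] at hb2
        calc |∫ t in y..a, g t| ≤ D * |a - y| := hb2
          _ ≤ D * δ := by
              apply mul_le_mul_of_nonneg_left _ hD0
              rw [abs_of_nonneg (by linarith)]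
              linarith
          _ = δ * D := mul_comm _ _
    · rcases le_or_gt y b with hyb | hyb
      · exact ⟨y, ⟨hya.le, hyb⟩, by rw [hWeq y ⟨hya.le, hyb⟩]; simp [mul_nonneg hδ.le hD0]⟩
      · refine ⟨b, ⟨hab.le, le_rfl⟩, ?_⟩
        rcases le_or_gt (b + δ) y with hyd | hyd
        · rw [hflatR y hyd]; simp [mul_nonneg hδ.le hD0]
        · have hWb : W b = φ b := hWeq b ⟨hab.le, le_rfl⟩
          have hsplit : (∫ t in a..b, g t) + (∫ t in b..y, g t) = ∫ t in a..y, g t :=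
            intervalIntegral.integral_add_adjacent_intervals
              (hgcont.intervalIntegrable _ _) (hgcont.intervalIntegrable _ _)
          have : W y - φ b = ∫ t in b..y, g t := by
            simp only [hW] at hWb ⊢
            rw [← hsplit, ← add_assoc, hWb]
            ring
          rw [this]
          have := intervalIntegral.norm_integral_le_of_norm_le_const
            (C := D) (f := g) (a := b) (b := y) (fun t _ => by
              rw [Real.norm_eq_abs]; exact hgbound t)
          rw [Real.norm_eq_abs] at this
          calc |∫ t in b..y, g t| ≤ D * |y - b| := this
            _ ≤ D * δ := by
                apply mul_le_mul_of_nonneg_left _ hD0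
                rw [abs_of_nonneg (by linarith)]
                linarith
            _ = δ * D := mul_comm _ _
  exact ⟨W, hWC1, hWeq, fun y => by rw [hderivW]; exact hgbound y, hflatL, hflatR, himg⟩

noncomputable def cl01 (x : ℝ) : ℝ := max 0 (min 1 x)
lemma cl01_cont : Continuous cl01 := Continuous.max continuous_const (continuous_const.min continuous_id)
lemma cl01_nonneg (x : ℝ) : 0 ≤ cl01 x := le_max_left _ _
lemma cl01_le_one (x : ℝ) : cl01 x ≤ 1 := max_le zero_le_one (min_le_left _ _)
lemma cl01_of_le {x : ℝ} (h : x ≤ 0) : cl01 x = 0 := by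
  unfold cl01; rw [max_eq_left]; exact le_trans (min_le_right _ _) h
lemma cl01_of_ge {x : ℝ} (h : 1 ≤ x) : cl01 x = 1 := by
  unfold cl01; rw [min_eq_left h, max_eq_right zero_le_one]

section intbounds
variable {φ : ℝ → ℝ}

lemma intb_nonneg (h0 : ∀ s, 0 ≤ φ s) {x y : ℝ} (hxy : x ≤ y) :
    0 ≤ ∫ s in x..y, φ s :=
  intervalIntegral.integral_nonneg hxy (fun s _ => h0 s)

lemma intb_le_len (hc : Continuous φ) (h1 : ∀ s, φ s ≤ 1) {x y : ℝ} (hxy : x ≤ y) :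
    (∫ s in x..y, φ s) ≤ y - x := by
  have := intervalIntegral.integral_mono_on hxy
    (hc.intervalIntegrable (μ := MeasureTheory.volume) x y)
    (_root_.intervalIntegrable_const (c := (1:ℝ))) (fun s _ => h1 s)
  simpa using this

lemma intb_cut_right (hc : Continuous φ) (hq : ∀ s, q ≤ s → φ s = 0) {x y : ℝ} (hx : x ≤ q) (hy : q ≤ y) :
    (∫ s in x..y, φ s) = ∫ s in x..q, φ s := by
  have hsplit := intervalIntegral.integral_add_adjacent_intervals
    (hc.intervalIntegrable (μ := MeasureTheory.volume) x q)
    (hc.intervalIntegrable (μ := MeasureTheory.volume) q y)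
  have hz : (∫ s in q..y, φ s) = 0 := by
    have : Set.EqOn φ (fun _ => (0:ℝ)) (Set.uIcc q y) := by
      intro s hs; rw [Set.uIcc_of_le hy] at hs; exact hq s hs.1
    rw [intervalIntegral.integral_congr this]; simp
  rw [← hsplit, hz, add_zero]

lemma intb_cut_left (hc : Continuous φ) (hp : ∀ s, s ≤ p → φ s = 0) {x y : ℝ} (hx : x ≤ p) (hy : p ≤ y) :
    (∫ s in x..y, φ s) = ∫ s in p..y, φ s := by
  have hsplit := intervalIntegral.integral_add_adjacent_intervals
    (hc.intervalIntegrable (μ := MeasureTheory.volume) x p)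
    (hc.intervalIntegrable (μ := MeasureTheory.volume) p y)
  have hz : (∫ s in x..p, φ s) = 0 := by
    have : Set.EqOn φ (fun _ => (0:ℝ)) (Set.uIcc x p) := by
      intro s hs; rw [Set.uIcc_of_le hx] at hs; exact hp s hs.2
    rw [intervalIntegral.integral_congr this]; simp
  rw [← hsplit, hz, zero_add]

end intbounds

lemma middle_interp (l r m σ₁ σ₃ A₁ A₂ : ℝ) (hm : 0 < m) (hgap : l + 8*m < r) :
    ∃ c : ℝ → ℝ, ContDiff ℝ 1 c ∧
      (∀ t ∈ Ioo (l - m) (l + m), c t = A₁ + σ₁ * (t - l)) ∧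
      (∀ t ∈ Ioo (r - m) (r + m), c t = A₂ + σ₃ * (t - r)) ∧
      (∀ t ∈ Icc (l - m) (r + m), ∃ z ∈ segment ℝ A₁ A₂,
        |c t - z| ≤ 6 * m * (|σ₁| + |σ₃|)) := by
  have hm' : m ≠ 0 := ne_of_gt hm
  set ramp₁ : ℝ → ℝ := fun s => cl01 ((l + 2*m - s)/m) with hramp₁
  set ramp₂ : ℝ → ℝ := fun s => cl01 ((s - (r - 2*m))/m) with hramp₂
  set bump : ℝ → ℝ := fun s => cl01 ((s - (l + 3*m))/m) * cl01 (((r - 3*m) - s)/m) with hbump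
  have hr₁c : Continuous ramp₁ := cl01_cont.comp (by continuity)
  have hr₂c : Continuous ramp₂ := cl01_cont.comp (by continuity)
  have hbc : Continuous bump := (cl01_cont.comp (by continuity)).mul (cl01_cont.comp (by continuity))
  have hr₁01 : ∀ s, 0 ≤ ramp₁ s ∧ ramp₁ s ≤ 1 := fun s => ⟨cl01_nonneg _, cl01_le_one _⟩
  have hr₂01 : ∀ s, 0 ≤ ramp₂ s ∧ ramp₂ s ≤ 1 := fun s => ⟨cl01_nonneg _, cl01_le_one _⟩
  have hb01 : ∀ s, 0 ≤ bump s ∧ bump s ≤ 1 := fun s =>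
    ⟨mul_nonneg (cl01_nonneg _) (cl01_nonneg _),
     mul_le_one₀ (cl01_le_one _) (cl01_nonneg _) (cl01_le_one _)⟩
  have hr₁one : ∀ s, s ≤ l + m → ramp₁ s = 1 := by
    intro s hs; apply cl01_of_ge; rw [le_div_iff₀ hm]; linarith
  have hr₁zero : ∀ s, l + 2*m ≤ s → ramp₁ s = 0 := by
    intro s hs; apply cl01_of_le; apply div_nonpos_of_nonpos_of_nonneg (by linarith) hm.le
  have hr₂one : ∀ s, r - m ≤ s → ramp₂ s = 1 := by
    intro s hs; apply cl01_of_ge; rw [le_div_iff₀ hm]; linarith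
  have hr₂zero : ∀ s, s ≤ r - 2*m → ramp₂ s = 0 := by
    intro s hs; apply cl01_of_le; apply div_nonpos_of_nonpos_of_nonneg (by linarith) hm.le
  have hbzero₁ : ∀ s, s ≤ l + 3*m → bump s = 0 := by
    intro s hs
    have : cl01 ((s - (l + 3*m))/m) = 0 := cl01_of_le
      (div_nonpos_of_nonpos_of_nonneg (by linarith) hm.le)
    simp only [hbump, this, zero_mul]
  have hbzero₂ : ∀ s, r - 3*m ≤ s → bump s = 0 := by
    intro s hs
    have : cl01 (((r - 3*m) - s)/m) = 0 := cl01_of_le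
      (div_nonpos_of_nonpos_of_nonneg (by linarith) hm.le)
    simp only [hbump, this, mul_zero]
  have hbone : ∀ s, l + 4*m ≤ s → s ≤ r - 4*m → bump s = 1 := by
    intro s h1 h2
    have e1 : cl01 ((s - (l + 3*m))/m) = 1 := cl01_of_ge (by rw [le_div_iff₀ hm]; linarith)
    have e2 : cl01 (((r - 3*m) - s)/m) = 1 := cl01_of_ge (by rw [le_div_iff₀ hm]; linarith)
    simp only [hbump, e1, e2, mul_one]
  -- J and its positivity
  set J : ℝ := ∫ s in l..r, bump s with hJ
  have hJpos : 0 < J := by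
    have h1 : (∫ s in (l+4*m)..(r-4*m), bump s) = r - 4*m - (l + 4*m) := by
      have : Set.EqOn bump (fun _ => (1:ℝ)) (Set.uIcc (l+4*m) (r-4*m)) := by
        intro s hs; rw [Set.uIcc_of_le (by linarith)] at hs; exact hbone s hs.1 hs.2
      rw [intervalIntegral.integral_congr this]; simp
    have hsp1 := intervalIntegral.integral_add_adjacent_intervals
      (hbc.intervalIntegrable (μ := MeasureTheory.volume) l (l+4*m))
      (hbc.intervalIntegrable (μ := MeasureTheory.volume) (l+4*m) (r-4*m))
    have hsp2 := intervalIntegral.integral_add_adjacent_intervals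
      (hbc.intervalIntegrable (μ := MeasureTheory.volume) l (r-4*m))
      (hbc.intervalIntegrable (μ := MeasureTheory.volume) (r-4*m) r)
    have hn1 : 0 ≤ ∫ s in l..(l+4*m), bump s :=
      intb_nonneg (fun s => (hb01 s).1) (by linarith)
    have hn3 : 0 ≤ ∫ s in (r-4*m)..r, bump s :=
      intb_nonneg (fun s => (hb01 s).1) (by linarith)
    have : J = ((∫ s in l..(l+4*m), bump s) + ∫ s in (l+4*m)..(r-4*m), bump s)
        + ∫ s in (r-4*m)..r, bump s := by rw [hsp1, hsp2]
    rw [this, h1]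
    linarith
  set μ : ℝ := (A₂ - A₁ - σ₁ * (∫ s in l..r, ramp₁ s) - σ₃ * (∫ s in l..r, ramp₂ s)) / J with hμ
  set γ : ℝ → ℝ := fun s => σ₁ * ramp₁ s + μ * bump s + σ₃ * ramp₂ s with hγ
  have hγc : Continuous γ := ((continuous_const.mul hr₁c).add (continuous_const.mul hbc)).add
    (continuous_const.mul hr₂c)
  set c : ℝ → ℝ := fun t => A₁ + ∫ s in l..t, γ s with hcdef
  have hc' : ∀ t, HasDerivAt c (γ t) t := fun t =>
    (intervalIntegral.integral_hasDerivAt_right (hγc.intervalIntegrable _ _)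
      (hγc.stronglyMeasurableAtFilter _ _) hγc.continuousAt).const_add _
  have hcC1 : ContDiff ℝ 1 c := contDiff_one_iff_deriv.2
    ⟨fun t => (hc' t).differentiableAt,
      by have : deriv c = γ := funext fun t => (hc' t).deriv
         rw [this]; exact hγc⟩
  -- linearity decomposition
  set R₁ : ℝ → ℝ := fun t => ∫ s in l..t, ramp₁ s with hR₁def
  set R₂ : ℝ → ℝ := fun t => ∫ s in l..t, ramp₂ s with hR₂def
  set B : ℝ → ℝ := fun t => ∫ s in l..t, bump s with hBdef
  have hdecomp : ∀ t, c t = A₁ + σ₁ * R₁ t + μ * B t + σ₃ * R₂ t := by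
    intro t
    have h1 : (∫ s in l..t, γ s)
        = (∫ s in l..t, σ₁ * ramp₁ s + μ * bump s) + ∫ s in l..t, σ₃ * ramp₂ s := by
      rw [← intervalIntegral.integral_add (f := fun s => σ₁ * ramp₁ s + μ * bump s) (g := fun s => σ₃ * ramp₂ s)
        (((continuous_const.mul hr₁c).add (continuous_const.mul hbc)).intervalIntegrable _ _)
        ((continuous_const.mul hr₂c).intervalIntegrable _ _)]
    have h2 : (∫ s in l..t, σ₁ * ramp₁ s + μ * bump s)
        = (∫ s in l..t, σ₁ * ramp₁ s) + ∫ s in l..t, μ * bump s := by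
      rw [← intervalIntegral.integral_add (f := fun s => σ₁ * ramp₁ s) (g := fun s => μ * bump s)
        ((continuous_const.mul hr₁c).intervalIntegrable _ _)
        ((continuous_const.mul hbc).intervalIntegrable _ _)]
    simp only [hcdef, h1, h2, intervalIntegral.integral_const_mul]
    ring
  have hJr₁ : R₁ r = ∫ s in l..r, ramp₁ s := rfl
  have hμJ : μ * J = A₂ - A₁ - σ₁ * R₁ r - σ₃ * R₂ r := by
    simp only [hμ]
    field_simp
    rfl
  -- left window
  have hleft : ∀ t ∈ Ioo (l - m) (l + m), c t = A₁ + σ₁ * (t - l) := by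
    intro t ht
    obtain ⟨ht1, ht2⟩ := ht
    have hEq : Set.EqOn γ (fun _ => σ₁) (Set.uIcc l t) := by
      intro s hs
      have hsb : s ≤ l + m := by
        rcases Set.mem_uIcc.1 hs with ⟨h1, h2⟩ | ⟨h1, h2⟩ <;> linarith
      have e1 : ramp₁ s = 1 := hr₁one s hsb
      have e2 : ramp₂ s = 0 := hr₂zero s (by linarith)
      have e3 : bump s = 0 := hbzero₁ s (by linarith)
      simp only [hγ, e1, e2, e3, mul_zero, mul_one, add_zero]
    simp only [hcdef]
    rw [intervalIntegral.integral_congr hEq]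
    simp [mul_comm]
  -- right window
  have hIlr : ∀ t, (∫ s in l..t, γ s) = (∫ s in l..r, γ s) + ∫ s in r..t, γ s := by
    intro t
    rw [intervalIntegral.integral_add_adjacent_intervals
      (hγc.intervalIntegrable _ _) (hγc.intervalIntegrable _ _)]
  have hlr : (∫ s in l..r, γ s) = A₂ - A₁ := by
    have := hdecomp r
    simp only [hcdef] at this
    -- this : A₁ + ∫ γ = A₁ + σ₁ R₁ r + μ B r + σ₃ R₂ r
    linarith [hμJ, this, (rfl : B r = J)]
  have hright : ∀ t ∈ Ioo (r - m) (r + m), c t = A₂ + σ₃ * (t - r) := by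
    intro t ht
    obtain ⟨ht1, ht2⟩ := ht
    have hEq : Set.EqOn γ (fun _ => σ₃) (Set.uIcc r t) := by
      intro s hs
      have hsb : r - m ≤ s := by
        rcases Set.mem_uIcc.1 hs with ⟨h1, h2⟩ | ⟨h1, h2⟩ <;> linarith
      have e1 : ramp₂ s = 1 := hr₂one s hsb
      have e2 : ramp₁ s = 0 := hr₁zero s (by linarith)
      have e3 : bump s = 0 := hbzero₂ s (by linarith)
      simp only [hγ, e1, e2, e3, mul_zero, mul_one, zero_add, add_zero]
    simp only [hcdef]
    rw [hIlr t, hlr, intervalIntegral.integral_congr hEq]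
    simp [mul_comm]
    ring
  -- value bounds
  have hval : ∀ t ∈ Icc (l - m) (r + m), ∃ z ∈ segment ℝ A₁ A₂,
      |c t - z| ≤ 6 * m * (|σ₁| + |σ₃|) := by
    intro t ht
    obtain ⟨ht1, ht2⟩ := ht
    -- R₁ bounds
    have hR₁b : ∀ u, l - m ≤ u → u ≤ r + m → |R₁ u| ≤ 2*m := by
      intro u hu1 hu2
      rcases le_or_gt l u with hlu | hlu
      · have h0 : 0 ≤ R₁ u := intb_nonneg (fun s => (hr₁01 s).1) hlu
        have hup : R₁ u ≤ 2*m := by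
          rcases le_or_gt u (l + 2*m) with h | h
          · calc R₁ u ≤ u - l := intb_le_len hr₁c (fun s => (hr₁01 s).2) hlu
              _ ≤ 2*m := by linarith
          · have := intb_cut_right hr₁c hr₁zero (by linarith : l ≤ l + 2*m) h.le
            rw [hR₁def]
            simp only []
            rw [this]
            calc (∫ s in l..(l+2*m), ramp₁ s) ≤ (l + 2*m) - l :=
                intb_le_len hr₁c (fun s => (hr₁01 s).2) (by linarith)
              _ = 2*m := by ring
        rw [abs_of_nonneg h0]; exact hup
      · have hsym : R₁ u = -∫ s in u..l, ramp₁ s := intervalIntegral.integral_symm u l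
        rw [hsym, abs_neg]
        have h0 : 0 ≤ ∫ s in u..l, ramp₁ s := intb_nonneg (fun s => (hr₁01 s).1) hlu.le
        rw [abs_of_nonneg h0]
        calc (∫ s in u..l, ramp₁ s) ≤ l - u := intb_le_len hr₁c (fun s => (hr₁01 s).2) hlu.le
          _ ≤ m := by linarith
          _ ≤ 2*m := by linarith
    -- R₂ bounds
    have hR₂b : ∀ u, l - m ≤ u → u ≤ r + m → |R₂ u| ≤ 3*m := by
      intro u hu1 hu2
      rcases le_or_gt u (r - 2*m) with h | h
      · have : R₂ u = 0 := by
          have hEq : Set.EqOn ramp₂ (fun _ => (0:ℝ)) (Set.uIcc l u) := by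
            intro s hs
            apply hr₂zero
            rcases Set.mem_uIcc.1 hs with ⟨h1, h2⟩ | ⟨h1, h2⟩ <;> linarith
          rw [hR₂def]
          simp only []
          rw [intervalIntegral.integral_congr hEq]
          simp
        rw [this, abs_zero]
        positivity
      · have hlu : l ≤ u := by linarith
        have h0 : 0 ≤ R₂ u := intb_nonneg (fun s => (hr₂01 s).1) hlu
        have := intb_cut_left hr₂c hr₂zero (by linarith : l ≤ r - 2*m) h.le
        rw [abs_of_nonneg h0, hR₂def]
        simp only []
        rw [this]
        calc (∫ s in (r-2*m)..u, ramp₂ s) ≤ u - (r - 2*m) :=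
            intb_le_len hr₂c (fun s => (hr₂01 s).2) (by linarith)
          _ ≤ 3*m := by linarith
    -- B bounds
    have hB0 : 0 ≤ B t := by
      rcases le_or_gt l t with hlt | hlt
      · exact intb_nonneg (fun s => (hb01 s).1) hlt
      · have : B t = 0 := by
          have hEq : Set.EqOn bump (fun _ => (0:ℝ)) (Set.uIcc l t) := by
            intro s hs
            apply hbzero₁
            rcases Set.mem_uIcc.1 hs with ⟨h1, h2⟩ | ⟨h1, h2⟩ <;> linarith
          rw [hBdef]; simp only []
          rw [intervalIntegral.integral_congr hEq]; simp
        rw [this]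
    have hBJ : B t ≤ J := by
      rcases le_or_gt t r with htr | htr
      · have hsplit := intervalIntegral.integral_add_adjacent_intervals
          (hbc.intervalIntegrable (μ := MeasureTheory.volume) l t) (hbc.intervalIntegrable (μ := MeasureTheory.volume) t r)
        have h0 : 0 ≤ ∫ s in t..r, bump s := intb_nonneg (fun s => (hb01 s).1) htr
        have : B t + (∫ s in t..r, bump s) = J := hsplit
        linarith
      · have hsplit := intervalIntegral.integral_add_adjacent_intervals
          (hbc.intervalIntegrable (μ := MeasureTheory.volume) l r) (hbc.intervalIntegrable (μ := MeasureTheory.volume) r t)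
        have h0 : (∫ s in r..t, bump s) = 0 := by
          have hEq : Set.EqOn bump (fun _ => (0:ℝ)) (Set.uIcc r t) := by
            intro s hs
            apply hbzero₂
            rcases Set.mem_uIcc.1 hs with ⟨h1, h2⟩ | ⟨h1, h2⟩ <;> linarith
          rw [intervalIntegral.integral_congr hEq]; simp
        have : J + (∫ s in r..t, bump s) = B t := hsplit
        rw [h0, add_zero] at this
        linarith
    set θ : ℝ := B t / J with hθ
    have hθ0 : 0 ≤ θ := div_nonneg hB0 hJpos.le
    have hθ1 : θ ≤ 1 := (div_le_one hJpos).2 hBJ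
    refine ⟨A₁ + θ * (A₂ - A₁), ?_, ?_⟩
    · rw [segment_eq_image ℝ A₁ A₂]
      exact ⟨θ, ⟨hθ0, hθ1⟩, by simp only [smul_eq_mul]; ring⟩
    · have hμB : μ * B t = θ * (A₂ - A₁ - σ₁ * R₁ r - σ₃ * R₂ r) := by
        rw [← hμJ, hθ]
        field_simp
      have hkey : c t - (A₁ + θ * (A₂ - A₁))
          = σ₁ * (R₁ t - θ * R₁ r) + σ₃ * (R₂ t - θ * R₂ r) := by
        rw [hdecomp t, hμB]
        ring
      rw [hkey]
      have hb1 : |R₁ t - θ * R₁ r| ≤ 4*m := by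
        have h1 := hR₁b t ht1 ht2
        have h2 := hR₁b r (by linarith) (by linarith)
        have h3 : |θ * R₁ r| ≤ 2*m := by
          rw [abs_mul, abs_of_nonneg hθ0]
          calc θ * |R₁ r| ≤ 1 * (2*m) :=
              mul_le_mul hθ1 h2 (abs_nonneg _) zero_le_one
            _ = 2*m := one_mul _
        calc |R₁ t - θ * R₁ r| ≤ |R₁ t| + |θ * R₁ r| := abs_sub _ _
          _ ≤ 2*m + 2*m := add_le_add h1 h3
          _ = 4*m := by ring
      have hb2 : |R₂ t - θ * R₂ r| ≤ 6*m := by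
        have h1 := hR₂b t ht1 ht2
        have h2 := hR₂b r (by linarith) (by linarith)
        have h3 : |θ * R₂ r| ≤ 3*m := by
          rw [abs_mul, abs_of_nonneg hθ0]
          calc θ * |R₂ r| ≤ 1 * (3*m) :=
              mul_le_mul hθ1 h2 (abs_nonneg _) zero_le_one
            _ = 3*m := one_mul _
        calc |R₂ t - θ * R₂ r| ≤ |R₂ t| + |θ * R₂ r| := abs_sub _ _
          _ ≤ 3*m + 3*m := add_le_add h1 h3
          _ = 6*m := by ring
      calc |σ₁ * (R₁ t - θ * R₁ r) + σ₃ * (R₂ t - θ * R₂ r)|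
          ≤ |σ₁ * (R₁ t - θ * R₁ r)| + |σ₃ * (R₂ t - θ * R₂ r)| := abs_add_le _ _
        _ = |σ₁| * |R₁ t - θ * R₁ r| + |σ₃| * |R₂ t - θ * R₂ r| := by
            rw [abs_mul, abs_mul]
        _ ≤ |σ₁| * (6*m) + |σ₃| * (6*m) := by
            apply add_le_add
            · exact mul_le_mul_of_nonneg_left (le_trans hb1 (by linarith)) (abs_nonneg _)
            · exact mul_le_mul_of_nonneg_left hb2 (abs_nonneg _)
        _ = 6 * m * (|σ₁| + |σ₃|) := by ring
  exact ⟨c, hcC1, hleft, hright, hval⟩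

lemma stagePos (I : Set ℝ) (hIo : IsOpen I) (hIc : Convex ℝ I)
    (f : ℝ → ℝ) (hf : ContDiffOn ℝ 2 f I)
    (M1 M2 : ℝ) (hM1 : ∀ z ∈ I, |deriv f z| ≤ M1) (hM2 : ∀ z ∈ I, |deriv (deriv f) z| ≤ M2)
    (k τ ρ : ℝ) (hk : k ≠ 0) (hτ : 0 < τ) (hρ : 0 < ρ) (hρ1 : ρ ≤ 1)
    (w : ℝ → ℝ) (hw : ContDiff ℝ 1 w)
    (hwI : ∀ y : ℝ, ∀ s ∈ Icc (-ρ) (1+ρ), w y + s * k ∈ I)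
    (θ : ℝ) (hθ : θ < 1)
    (hwd : ∀ y : ℝ, |deriv w y| * ((1+ρ) * τ * M2) ≤ θ)
    (α ξ : ℝ) (hflat : ∀ y, y ≤ α → w y = w α)
    (hdisp : ξ < α + τ * ((f (w α + k) - f (w α)) / k)) :
    ∃ u : ℝ → ℝ → ℝ, ∃ ε : ℝ, 0 < ε ∧
      ContDiffOn ℝ 1 (fun p : ℝ × ℝ => u p.1 p.2)
        (Ioo (-(ρ*τ)) ((1+ρ)*τ) ×ˢ (univ : Set ℝ)) ∧
      (∀ t ∈ Ioo (-(ρ*τ)) ((1+ρ)*τ), ∀ x : ℝ, u t x ∈ I) ∧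
      (∀ x, u 0 x = w x) ∧
      (∀ t ∈ Ioo (-(ρ*τ)) ((1+ρ)*τ), ∀ x : ℝ,
        deriv (fun s => u s x) t + deriv f (u t x) * deriv (fun y => u t y) x = k/τ) ∧
      ε ≤ ρ*τ ∧
      (∀ t ∈ Ioo (τ-ε) (τ+ε), ∀ x, x ≤ ξ → u t x = (w α + k) + (k/τ)*(t-τ)) := by
  have hτ' : τ ≠ 0 := ne_of_gt hτ
  set B : Set ℝ := Ioo (-(ρ*τ)) ((1+ρ)*τ) with hB
  have hρτ : 0 < ρ * τ := mul_pos hρ hτ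
  have h0B : (0:ℝ) ∈ B := ⟨by linarith, by positivity⟩
  have hτB : τ ∈ B := ⟨by nlinarith, by nlinarith⟩
  -- membership facts
  have hqI : ∀ t ∈ B, ∀ y : ℝ, w y + (k/τ)*t ∈ I := by
    intro t ht y
    have h1 : w y + (k/τ)*t = w y + (t/τ)*k := by ring
    rw [h1]
    apply hwI y (t/τ)
    constructor
    · rw [le_div_iff₀ hτ]; nlinarith [ht.1]
    · rw [div_le_iff₀ hτ]; nlinarith [ht.2]
  have hwmem : ∀ y : ℝ, w y ∈ I := by
    intro y
    have := hwI y 0 ⟨by linarith, by linarith⟩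
    simpa using this
  -- f is C¹ with derivative facts
  have hfd : ∀ z ∈ I, HasDerivAt f (deriv f z) z := fun z hz =>
    (((hf.contDiffAt (hIo.mem_nhds hz)).differentiableAt (by norm_num)).hasDerivAt)
  have hf' : ContDiffOn ℝ 1 (deriv f) I := hf.deriv_of_isOpen hIo (by norm_num)
  have hf'd : ∀ z ∈ I, DifferentiableAt ℝ (deriv f) z := fun z hz =>
    (hf'.contDiffAt (hIo.mem_nhds hz)).differentiableAt one_ne_zero
  have hM20 : 0 ≤ M2 := le_trans (abs_nonneg _) (hM2 _ (hwmem 0))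
  have hM10 : 0 ≤ M1 := le_trans (abs_nonneg _) (hM1 _ (hwmem 0))
  have hθ0 : 0 ≤ θ := le_trans (by positivity) (hwd 0)
  -- Lipschitz facts
  have hlipf : ∀ z₁ ∈ I, ∀ z₂ ∈ I, |f z₂ - f z₁| ≤ M1 * |z₂ - z₁| := by
    intro z₁ h₁ z₂ h₂
    have hseg : segment ℝ z₁ z₂ ⊆ I := hIc.segment_subset h₁ h₂
    have := Convex.norm_image_sub_le_of_norm_deriv_le
      (f := f) (s := segment ℝ z₁ z₂) (C := M1)
      (fun z hz => ((hf.contDiffAt (hIo.mem_nhds (hseg hz))).differentiableAt (by norm_num)))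
      (fun z hz => by rw [Real.norm_eq_abs]; exact hM1 z (hseg hz))
      (convex_segment _ _) (left_mem_segment _ _ _) (right_mem_segment _ _ _)
    simpa [Real.norm_eq_abs] using this
  have hlipf' : ∀ z₁ ∈ I, ∀ z₂ ∈ I, |deriv f z₂ - deriv f z₁| ≤ M2 * |z₂ - z₁| := by
    intro z₁ h₁ z₂ h₂
    have hseg : segment ℝ z₁ z₂ ⊆ I := hIc.segment_subset h₁ h₂
    have := Convex.norm_image_sub_le_of_norm_deriv_le
      (f := deriv f) (s := segment ℝ z₁ z₂) (C := M2)
      (fun z hz => hf'd z (hseg hz))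
      (fun z hz => by rw [Real.norm_eq_abs]; exact hM2 z (hseg hz))
      (convex_segment _ _) (left_mem_segment _ _ _) (right_mem_segment _ _ _)
    simpa [Real.norm_eq_abs] using this
  -- the characteristic map
  set X : ℝ → ℝ → ℝ := fun t y => y + (τ/k) * (f (w y + (k/τ)*t) - f (w y)) with hX
  set Xt : ℝ → ℝ → ℝ := fun t y => deriv f (w y + (k/τ)*t) with hXt
  set Xy : ℝ → ℝ → ℝ := fun t y =>
    1 + (τ/k) * ((deriv f (w y + (k/τ)*t) - deriv f (w y)) * deriv w y) with hXy
  have hwdiff : ∀ y, HasDerivAt w (deriv w y) y := fun y =>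
    (hw.differentiable one_ne_zero y).hasDerivAt
  have habs_t : ∀ t ∈ B, |t| ≤ (1+ρ)*τ := by
    intro t ht
    rw [abs_le]
    constructor
    · nlinarith [ht.1]
    · exact ht.2.le
  -- 1D derivative in y
  have hXyD : ∀ t ∈ B, ∀ y, HasDerivAt (fun y' => X t y') (Xy t y) y := by
    intro t ht y
    have hinner : HasDerivAt (fun y' => w y' + (k/τ)*t) (deriv w y) y :=
      (hwdiff y).add_const _
    have hc1 : HasDerivAt (fun y' => f (w y' + (k/τ)*t))
        (deriv f (w y + (k/τ)*t) * deriv w y) y :=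
      (hfd _ (hqI t ht y)).comp y hinner
    have hc2 : HasDerivAt (fun y' => f (w y'))
        (deriv f (w y) * deriv w y) y := (hfd _ (hwmem y)).comp y (hwdiff y)
    have := (hasDerivAt_id y).add (((hc1.sub hc2).const_mul (τ/k)))
    exact this.congr_deriv (by simp only [hXy]; ring)
  have hXybound : ∀ t ∈ B, ∀ y, |Xy t y - 1| ≤ θ := by
    intro t ht y
    have hd : |deriv f (w y + (k/τ)*t) - deriv f (w y)| ≤ M2 * (|k|/τ * |t|) := by
      have := hlipf' (w y) (hwmem y) (w y + (k/τ)*t) (hqI t ht y)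
      have h2 : |w y + (k/τ)*t - w y| = |k|/τ * |t| := by
        rw [show w y + (k/τ)*t - w y = (k/τ)*t by ring, abs_mul, abs_div,
          abs_of_pos hτ]
      rw [h2] at this
      exact this
    have habs : |Xy t y - 1| = (τ/|k|) * (|deriv f (w y + (k/τ)*t) - deriv f (w y)| * |deriv w y|) := by
      simp only [hXy]
      rw [show (1:ℝ) + (τ/k) * ((deriv f (w y + (k/τ)*t) - deriv f (w y)) * deriv w y) - 1
        = (τ/k) * ((deriv f (w y + (k/τ)*t) - deriv f (w y)) * deriv w y) by ring]
      rw [abs_mul, abs_mul, abs_div, abs_of_pos hτ]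
    rw [habs]
    have hk' : 0 < |k| := abs_pos.2 hk
    calc (τ/|k|) * (|deriv f (w y + (k/τ)*t) - deriv f (w y)| * |deriv w y|)
        ≤ (τ/|k|) * ((M2 * (|k|/τ * |t|)) * |deriv w y|) := by
          apply mul_le_mul_of_nonneg_left _ (by positivity)
          exact mul_le_mul_of_nonneg_right hd (abs_nonneg _)
      _ = |deriv w y| * (M2 * |t|) := by field_simp
      _ ≤ |deriv w y| * ((1+ρ)*τ*M2) := by
          apply mul_le_mul_of_nonneg_left _ (abs_nonneg _)
          have := habs_t t ht
          nlinarith [abs_nonneg t]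
      _ ≤ θ := hwd y
  have hXypos : ∀ t ∈ B, ∀ y, 0 < Xy t y := by
    intro t ht y
    have := hXybound t ht y
    rw [abs_le] at this
    linarith [this.1]
  have hmono : ∀ t ∈ B, StrictMono (X t) := by
    intro t ht
    apply strictMono_of_deriv_pos
    intro y
    rw [(hXyD t ht y).deriv]
    exact hXypos t ht y
  have hXcont : ∀ t ∈ B, Continuous (X t) := by
    intro t ht
    have : Differentiable ℝ (X t) := fun y => (hXyD t ht y).differentiableAt
    exact this.continuous
  have hXbnd : ∀ t ∈ B, ∀ y, |X t y - y| ≤ M1 * ((1+ρ)*τ) := by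
    intro t ht y
    have h1 : |f (w y + (k/τ)*t) - f (w y)| ≤ M1 * (|k|/τ * |t|) := by
      have := hlipf (w y) (hwmem y) (w y + (k/τ)*t) (hqI t ht y)
      have h2 : |w y + (k/τ)*t - w y| = |k|/τ * |t| := by
        rw [show w y + (k/τ)*t - w y = (k/τ)*t by ring, abs_mul, abs_div,
          abs_of_pos hτ]
      rw [h2] at this; exact this
    have hk' : 0 < |k| := abs_pos.2 hk
    have h3 : |X t y - y| = (τ/|k|) * |f (w y + (k/τ)*t) - f (w y)| := by
      simp only [hX]
      rw [show y + (τ/k) * (f (w y + (k/τ)*t) - f (w y)) - y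
        = (τ/k) * (f (w y + (k/τ)*t) - f (w y)) by ring]
      rw [abs_mul, abs_div, abs_of_pos hτ]
    rw [h3]
    calc (τ/|k|) * |f (w y + (k/τ)*t) - f (w y)|
        ≤ (τ/|k|) * (M1 * (|k|/τ * |t|)) := by
          apply mul_le_mul_of_nonneg_left h1 (by positivity)
      _ = M1 * |t| := by field_simp
      _ ≤ M1 * ((1+ρ)*τ) := mul_le_mul_of_nonneg_left (habs_t t ht) hM10
  have hsurj : ∀ t ∈ B, Function.Surjective (X t) := by
    intro t ht
    set C := M1 * ((1+ρ)*τ) with hC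
    apply Continuous.surjective (hXcont t ht)
    · apply tendsto_atTop_mono (fun y => ?_) (tendsto_atTop_add_const_right _ (-C) tendsto_id)
      have := hXbnd t ht y
      rw [abs_le] at this
      simp only [id]
      linarith [this.1]
    · apply tendsto_atBot_mono (fun y => ?_) (tendsto_atBot_add_const_right _ C tendsto_id)
      have := hXbnd t ht y
      rw [abs_le] at this
      simp only [id]
      linarith [this.2]
  have hinj : ∀ t ∈ B, Function.Injective (X t) := fun t ht => (hmono t ht).injective
  set Y : ℝ → ℝ → ℝ := fun t x => Function.invFun (X t) x with hY
  have hXYinv : ∀ t ∈ B, ∀ x, X t (Y t x) = x := by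
    intro t ht x
    exact Function.invFun_eq (hsurj t ht x)
  have hYXinv : ∀ t ∈ B, ∀ y, Y t (X t y) = y := by
    intro t ht y
    exact Function.leftInverse_invFun (hinj t ht) y
  -- joint smoothness of the map (t,y) ↦ X t y
  set fstL : ℝ × ℝ →L[ℝ] ℝ := ContinuousLinearMap.fst ℝ ℝ ℝ with hfstL
  set sndL : ℝ × ℝ →L[ℝ] ℝ := ContinuousLinearMap.snd ℝ ℝ ℝ with hsndL
  set Xmap : ℝ × ℝ → ℝ := fun p => X p.1 p.2 with hXmap
  have hinnerC : ContDiff ℝ 1 (fun p : ℝ × ℝ => w p.2 + (k/τ)*p.1) :=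
    (hw.comp contDiff_snd).add (contDiff_const.mul contDiff_fst)
  have hXmapC : ∀ p : ℝ × ℝ, p.1 ∈ B → ContDiffAt ℝ 1 Xmap p := by
    intro p hp
    have h1 : ContDiffAt ℝ 1 (fun p : ℝ × ℝ => f (w p.2 + (k/τ)*p.1)) p := by
      apply ContDiffAt.comp
      · exact (hf.contDiffAt (hIo.mem_nhds (hqI p.1 hp p.2))).of_le one_le_two
      · exact hinnerC.contDiffAt
    have h2 : ContDiffAt ℝ 1 (fun p : ℝ × ℝ => f (w p.2)) p := by
      apply ContDiffAt.comp
      · exact (hf.contDiffAt (hIo.mem_nhds (hwmem p.2))).of_le one_le_two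
      · exact (hw.comp contDiff_snd).contDiffAt
    exact contDiffAt_snd.add ((contDiffAt_const (c := τ/k)).mul (h1.sub h2))
  have hXmapD : ∀ p : ℝ × ℝ, p.1 ∈ B →
      HasFDerivAt Xmap (Xt p.1 p.2 • fstL + Xy p.1 p.2 • sndL) p := by
    intro p hp
    have hsnd' : HasFDerivAt (fun p : ℝ × ℝ => w p.2) (deriv w p.2 • sndL) p :=
      (hwdiff p.2).comp_hasFDerivAt p (sndL.hasFDerivAt)
    have hinner : HasFDerivAt (fun p : ℝ × ℝ => w p.2 + (k/τ)*p.1)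
        (deriv w p.2 • sndL + (k/τ) • fstL) p :=
      hsnd'.add (fstL.hasFDerivAt.const_mul (k/τ))
    have hc1 : HasFDerivAt (fun p : ℝ × ℝ => f (w p.2 + (k/τ)*p.1))
        (deriv f (w p.2 + (k/τ)*p.1) • (deriv w p.2 • sndL + (k/τ) • fstL)) p :=
      (hfd _ (hqI p.1 hp p.2)).comp_hasFDerivAt p hinner
    have hc2 : HasFDerivAt (fun p : ℝ × ℝ => f (w p.2))
        (deriv f (w p.2) • (deriv w p.2 • sndL)) p :=
      (hfd _ (hwmem p.2)).comp_hasFDerivAt p hsnd'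
    have := sndL.hasFDerivAt.add ((hc1.sub hc2).const_mul (τ/k))
    have heq : sndL + (τ/k) • (deriv f (w p.2 + (k/τ)*p.1) • (deriv w p.2 • sndL + (k/τ) • fstL)
        - deriv f (w p.2) • (deriv w p.2 • sndL))
        = Xt p.1 p.2 • fstL + Xy p.1 p.2 • sndL := by
      apply ContinuousLinearMap.ext
      intro v
      simp only [ContinuousLinearMap.add_apply, ContinuousLinearMap.smul_apply,
        ContinuousLinearMap.sub_apply, smul_eq_mul, hXt, hXy]
      field_simp
      ring
    rw [← heq]
    exact this
  -- joint smoothness of Y via the inverse function theorem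
  set Ymap : ℝ × ℝ → ℝ := fun p => Y p.1 p.2 with hYmap
  set G : ℝ × ℝ → ℝ × ℝ := fun p => (p.1, Xmap p) with hG
  have hYmapC : ∀ p : ℝ × ℝ, p.1 ∈ B → ContDiffAt ℝ 1 Ymap p := by
    intro p hp
    set a : ℝ × ℝ := (p.1, Y p.1 p.2) with ha
    have haB : a.1 ∈ B := hp
    have hGa : G a = p := by
      simp only [hG, hXmap, ha]
      rw [show X a.1 a.2 = X p.1 (Y p.1 p.2) from rfl, hXYinv p.1 hp p.2]
    have hGC : ContDiffAt ℝ 1 G a := contDiffAt_fst.prodMk (hXmapC a haB)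
    -- invertible derivative
    set A1 : ℝ := Xt a.1 a.2 with hA1
    set A2 : ℝ := Xy a.1 a.2 with hA2
    have hA2pos : 0 < A2 := hXypos a.1 haB a.2
    have hA2ne : A2 ≠ 0 := ne_of_gt hA2pos
    set L : ℝ × ℝ →L[ℝ] ℝ × ℝ := fstL.prod (A1 • fstL + A2 • sndL) with hL
    set L' : ℝ × ℝ →L[ℝ] ℝ × ℝ := fstL.prod (A2⁻¹ • (sndL - A1 • fstL)) with hL'
    have hLinv1 : Function.LeftInverse L' L := by
      intro v
      refine Prod.ext ?_ ?_ <;>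
        simp only [hL, hL', ContinuousLinearMap.prod_apply, ContinuousLinearMap.add_apply,
          ContinuousLinearMap.sub_apply, ContinuousLinearMap.smul_apply, smul_eq_mul,
          ContinuousLinearMap.coe_fst', ContinuousLinearMap.coe_snd', hfstL, hsndL]
      field_simp
      ring
    have hLinv2 : Function.RightInverse L' L := by
      intro v
      refine Prod.ext ?_ ?_ <;>
        simp only [hL, hL', ContinuousLinearMap.prod_apply, ContinuousLinearMap.add_apply,
          ContinuousLinearMap.sub_apply, ContinuousLinearMap.smul_apply, smul_eq_mul,
          ContinuousLinearMap.coe_fst', ContinuousLinearMap.coe_snd', hfstL, hsndL]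
      field_simp
      ring
    set e : (ℝ × ℝ) ≃L[ℝ] (ℝ × ℝ) := ContinuousLinearEquiv.equivOfInverse L L' hLinv1 hLinv2
      with he
    have hGD : HasFDerivAt G (e : (ℝ × ℝ) →L[ℝ] (ℝ × ℝ)) a := by
      have : HasFDerivAt G L a := (fstL.hasFDerivAt).prodMk (hXmapD a haB)
      convert this using 1
      rfl
    set φ : ℝ × ℝ → ℝ × ℝ := hGC.localInverse hGD one_ne_zero with hφ
    have hφC : ContDiffAt ℝ 1 φ (G a) := hGC.to_localInverse hGD one_ne_zero
    have hφev : ∀ᶠ z in nhds (G a), G (φ z) = z :=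
      (hGC.hasStrictFDerivAt' hGD one_ne_zero).eventually_right_inverse
    have hBev : ∀ᶠ z : ℝ × ℝ in nhds (G a), z.1 ∈ B := by
      rw [hGa]
      filter_upwards [(isOpen_Ioo.prod isOpen_univ).mem_nhds
        (show p ∈ B ×ˢ (univ : Set ℝ) from ⟨hp, trivial⟩)] with z hz using hz.1
    have hYeq : Ymap =ᶠ[nhds p] (fun z => (φ z).2) := by
      rw [← hGa]
      filter_upwards [hφev, hBev] with z hz hzB
      simp only [hG] at hz
      obtain ⟨h1, h2⟩ := Prod.ext_iff.1 hz
      simp only [hXmap] at h2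
      rw [h1] at h2
      have h3 : X z.1 (Y z.1 z.2) = z.2 := hXYinv z.1 hzB z.2
      exact hinj z.1 hzB (h3.trans h2.symm)
    rw [hGa] at hφC
    exact (contDiffAt_snd.comp p hφC).congr_of_eventuallyEq hYeq
  set umap : ℝ → ℝ → ℝ := fun t x => w (Y t x) + (k/τ)*t with humap
  have huC : ∀ p : ℝ × ℝ, p.1 ∈ B → ContDiffAt ℝ 1 (fun p : ℝ × ℝ => umap p.1 p.2) p := by
    intro p hp
    exact ((hw.contDiffAt).comp p (hYmapC p hp)).add (contDiffAt_const.mul contDiffAt_fst)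
  have hval : ∀ t x, umap t x = w (Y t x) + (k/τ)*t := fun t x => rfl
  -- initial condition
  have hX0 : ∀ z, X 0 z = z := by
    intro z
    simp only [hX, mul_zero, add_zero, sub_self]
  have hY0 : ∀ x, Y 0 x = x := by
    intro x
    have h := hXYinv 0 h0B x
    rw [hX0 (Y 0 x)] at h
    exact h
  -- PDE
  have hPDE : ∀ t ∈ B, ∀ x : ℝ,
      deriv (fun s => umap s x) t + deriv f (umap t x) * deriv (fun y => umap t y) x = k/τ := by
    intro t ht x
    have hyD : DifferentiableAt ℝ Ymap (t, x) := (hYmapC (t, x) ht).differentiableAt one_ne_zero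
    set DY : ℝ × ℝ →L[ℝ] ℝ := fderiv ℝ Ymap (t, x) with hDY
    have hYD : HasFDerivAt Ymap DY (t, x) := hyD.hasFDerivAt
    set y : ℝ := Y t x with hy
    have hXDq : HasFDerivAt Xmap (Xt t y • fstL + Xy t y • sndL) (t, y) := hXmapD (t, y) ht
    have hin : HasFDerivAt (fun z : ℝ × ℝ => (z.1, Ymap z)) (fstL.prod DY) (t, x) :=
      (fstL.hasFDerivAt).prodMk hYD
    have hcompD : HasFDerivAt (fun z : ℝ × ℝ => Xmap (z.1, Ymap z))
        ((Xt t y • fstL + Xy t y • sndL).comp (fstL.prod DY)) (t, x) := by have := hXDq.comp (t, x) hin; exact this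
    have hsndD : HasFDerivAt (fun z : ℝ × ℝ => Xmap (z.1, Ymap z)) sndL (t, x) := by
      have hev : (fun z : ℝ × ℝ => Xmap (z.1, Ymap z)) =ᶠ[nhds (t, x)]
          (fun z : ℝ × ℝ => z.2) := by
        filter_upwards [(isOpen_Ioo.prod isOpen_univ).mem_nhds
          (show (t, x) ∈ B ×ˢ (univ : Set ℝ) from ⟨ht, trivial⟩)] with z hz
        exact hXYinv z.1 hz.1 z.2
      exact (sndL.hasFDerivAt).congr_of_eventuallyEq hev
    have huniq := hcompD.unique hsndD
    have e1 : Xt t y + Xy t y * DY (1, 0) = 0 := by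
      have h := ContinuousLinearMap.ext_iff.1 huniq ((1 : ℝ), (0 : ℝ))
      simp only [ContinuousLinearMap.comp_apply, ContinuousLinearMap.prod_apply,
        ContinuousLinearMap.add_apply, ContinuousLinearMap.smul_apply, smul_eq_mul,
        ContinuousLinearMap.coe_fst', ContinuousLinearMap.coe_snd', hfstL, hsndL] at h
      linarith [h]
    have e2 : Xy t y * DY (0, 1) = 1 := by
      have h := ContinuousLinearMap.ext_iff.1 huniq ((0 : ℝ), (1 : ℝ))
      simp only [ContinuousLinearMap.comp_apply, ContinuousLinearMap.prod_apply,
        ContinuousLinearMap.add_apply, ContinuousLinearMap.smul_apply, smul_eq_mul,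
        ContinuousLinearMap.coe_fst', ContinuousLinearMap.coe_snd', hfstL, hsndL] at h
      linarith [h]
    have htslice : HasDerivAt (fun s => umap s x) (deriv w y * DY (1, 0) + k/τ) t := by
      have hg : HasDerivAt (fun s : ℝ => ((s : ℝ), x)) ((1 : ℝ), (0 : ℝ)) t :=
        (hasDerivAt_id t).prodMk (hasDerivAt_const t x)
      have hY1 : HasDerivAt (fun s => Ymap (s, x)) (DY (1, 0)) t :=
        by have := hYD.comp_hasDerivAt t hg; exact this
      have hw1 : HasDerivAt (fun s => w (Ymap (s, x))) (deriv w y * DY (1, 0)) t :=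
        (hwdiff y).comp t hY1
      have := hw1.add ((hasDerivAt_id t).const_mul (k/τ))
      exact this.congr_deriv (by ring)
    have hxslice : HasDerivAt (fun x' => umap t x') (deriv w y * DY (0, 1)) x := by
      have hg : HasDerivAt (fun x' : ℝ => ((t : ℝ), (x' : ℝ))) ((0 : ℝ), (1 : ℝ)) x :=
        (hasDerivAt_const x t).prodMk (hasDerivAt_id x)
      have hY1 : HasDerivAt (fun x' => Ymap (t, x')) (DY (0, 1)) x :=
        hYD.comp_hasDerivAt x hg
      have hw1 : HasDerivAt (fun x' => w (Ymap (t, x'))) (deriv w y * DY (0, 1)) x :=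
        (hwdiff y).comp x hY1
      have := hw1.add_const ((k/τ)*t)
      convert this using 1
    have hfu : deriv f (umap t x) = Xt t y := rfl
    rw [htslice.deriv, hxslice.deriv, hfu]
    linear_combination (deriv w y * DY (0, 1)) * e1 - (deriv w y * DY (1, 0)) * e2
  -- exit window
  have hcd : ContinuousAt (fun t => X t α) τ := by
    have h1 : ContinuousAt Xmap (τ, α) := (hXmapC (τ, α) hτB).continuousAt
    exact ContinuousAt.comp (x := τ) (g := Xmap) (f := fun t : ℝ => ((t : ℝ), α)) h1
      ((continuous_id.prodMk continuous_const).continuousAt)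
  have hXτα : ξ < X τ α := by
    have hkτ : (k/τ)*τ = k := by field_simp
    have h1 : X τ α = α + τ * ((f (w α + k) - f (w α)) / k) := by
      simp only [hX, hkτ]
      ring
    rw [h1]
    exact hdisp
  have hev : {t : ℝ | ξ < X t α} ∈ nhds τ := hcd (lt_mem_nhds hXτα)
  obtain ⟨ε₀, hε₀, hball⟩ := Metric.mem_nhds_iff.1 hev
  set ε : ℝ := min ε₀ (ρ*τ) with hε
  have hεpos : 0 < ε := lt_min hε₀ hρτ
  have hερτ : ε ≤ ρ*τ := min_le_right _ _
  have hwin : ∀ t ∈ Ioo (τ-ε) (τ+ε), ∀ x, x ≤ ξ →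
      umap t x = (w α + k) + (k/τ)*(t-τ) := by
    intro t ht x hx
    have htB : t ∈ B := by
      constructor
      · have : τ - ρ*τ ≥ 0 := by nlinarith
        have := ht.1
        have hh : τ - ε ≥ τ - ρ*τ := by linarith
        linarith
      · have := ht.2
        have : t < τ + ρ*τ := by linarith
        nlinarith
    have htball : t ∈ Metric.ball τ ε₀ := by
      rw [Metric.mem_ball, Real.dist_eq, abs_lt]
      constructor
      · have := ht.1; have : τ - ε₀ ≤ τ - ε := by
          have : ε ≤ ε₀ := min_le_left _ _
          linarith
        linarith [ht.1]
      · have : ε ≤ ε₀ := min_le_left _ _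
        linarith [ht.2]
    have h3 : ξ < X t α := hball htball
    have hYle : Y t x ≤ α := by
      by_contra hcon
      push_neg at hcon
      have h2 : X t α < X t (Y t x) := hmono t htB hcon
      rw [hXYinv t htB x] at h2
      linarith
    have hkτ : (k/τ)*τ = k := by field_simp
    calc umap t x = w (Y t x) + (k/τ)*t := rfl
      _ = w α + (k/τ)*t := by rw [hflat _ hYle]
      _ = (w α + k) + (k/τ)*(t-τ) := by
          rw [mul_sub, hkτ]
          ring
  exact ⟨umap, ε, hεpos,
    fun p hp => (huC p hp.1).contDiffWithinAt,
    fun t ht x => hqI t ht (Y t x),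
    fun x => by rw [hval, hY0 x, mul_zero, add_zero],
    hPDE, hερτ, hwin⟩

lemma exists_tau (l tb A : ℝ) (hl : 0 ≤ l) (hltb : l < tb) (hAl : A * l < 1) :
    ∃ τ, l < τ ∧ τ < tb ∧ A * τ < 1 := by
  rcases le_or_gt A 0 with hA | hA
  · refine ⟨(l + tb)/2, by linarith, by linarith, ?_⟩
    have h1 : 0 < (l + tb)/2 := by linarith
    nlinarith
  · have h1 : l < 1/A := by
      rw [lt_div_iff₀ hA]
      linarith [mul_comm A l]
    refine ⟨min ((l + tb)/2) ((l + 1/A)/2), ?_, ?_, ?_⟩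
    · apply lt_min <;> linarith
    · exact lt_of_le_of_lt (min_le_left _ _) (by linarith)
    · have h2 : min ((l + tb)/2) ((l + 1/A)/2) ≤ (l + 1/A)/2 := min_le_right _ _
      have h3 : (l + 1/A)/2 < 1/A := by linarith
      have h4 : min ((l + tb)/2) ((l + 1/A)/2) < 1/A := lt_of_le_of_lt h2 h3
      calc A * min ((l + tb)/2) ((l + 1/A)/2) < A * (1/A) := by
            exact mul_lt_mul_of_pos_left h4 hA
        _ = 1 := by field_simp

lemma stageForwardPos (I : Set ℝ) (hIo : IsOpen I) (hIc : Convex ℝ I)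
    (g : ℝ → ℝ) (hg : ContDiffOn ℝ 2 g I)
    (M1 M2 : ℝ) (hM1 : ∀ z ∈ I, |deriv g z| ≤ M1) (hM2 : ∀ z ∈ I, |deriv (deriv g) z| ≤ M2)
    (J : Set ℝ) (hJI : J ⊆ I)
    (a b : ℝ) (hab : a < b)
    (φ : ℝ → ℝ) (hφ : ContDiffOn ℝ 1 φ (Icc a b)) (him : ∀ x ∈ Icc a b, φ x ∈ J)
    (k c : ℝ) (hk : k ≠ 0) (hkJ : ∀ v ∈ J, v + k ∈ I)
    (hc : 0 < c) (hsep : ∀ v ∈ J, c ≤ (g (v + k) - g v) / k)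
    (D : ℝ) (hD : ∀ x ∈ Icc a b, |derivWithin φ (Icc a b) x| ≤ D) (hD0 : 0 ≤ D)
    (hgrad : D * M2 * (b - a) < c)
    (tb : ℝ) (htb : (b - a) / c < tb) :
    ∃ (τ ε A σ : ℝ) (u : ℝ → ℝ → ℝ),
      0 < τ ∧ τ < tb ∧ 0 < ε ∧ ε < τ ∧ A ∈ I ∧
      ContDiffOn ℝ 1 (fun p : ℝ × ℝ => u p.1 p.2) (Ioo (-ε) (τ+ε) ×ˢ (univ : Set ℝ)) ∧
      (∀ t ∈ Ioo (-ε) (τ+ε), ∀ x : ℝ, u t x ∈ I) ∧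
      (∀ x ∈ Icc a b, u 0 x = φ x) ∧
      (∀ t ∈ Ioo (-ε) (τ+ε), ∀ x : ℝ,
        deriv (fun s => u s x) t + deriv g (u t x) * deriv (fun y => u t y) x = σ) ∧
      (∀ t ∈ Ioo (τ-ε) (τ+ε), ∀ x ∈ Icc (a-ε) (b+ε), u t x = A + σ*(t-τ)) := by
  have hba : 0 < b - a := by linarith
  have hφa : φ a ∈ J := him a ⟨le_rfl, hab.le⟩
  have hM20 : 0 ≤ M2 := le_trans (abs_nonneg _) (hM2 _ (hJI hφa))
  -- compact K and thickening
  set K : Set ℝ := (fun p : ℝ × ℝ => p.1 + p.2 * k) '' ((φ '' Icc a b) ×ˢ Icc 0 1) with hK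
  have hKcomp : IsCompact K := by
    apply IsCompact.image
    · exact (isCompact_Icc.image_of_continuousOn hφ.continuousOn).prod isCompact_Icc
    · continuity
  have hKI : K ⊆ I := by
    rintro z ⟨⟨v, s⟩, ⟨⟨x, hx, rfl⟩, hs⟩, rfl⟩
    have h1 : φ x ∈ J := him x hx
    have h2 := hIc (hJI h1) (hkJ _ h1) (by linarith [hs.2] : 0 ≤ 1 - s) hs.1 (by ring)
    have h3 : (1 - s) • φ x + s • (φ x + k) = φ x + s * k := by
      simp only [smul_eq_mul]; ring
    rw [h3] at h2
    exact h2
  obtain ⟨ε₀, hε₀, hthick⟩ := hKcomp.exists_cthickening_subset_open hIo hKI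
  -- choose ρ
  set q : ℝ := D * M2 * (b - a) with hq
  have hq0 : 0 ≤ q := by positivity
  set ρ : ℝ := min 1 (min ((c - q)/(2*(q+1))) (ε₀/(2*(|k|+1)))) with hρdef
  have hρ : 0 < ρ := by
    apply lt_min one_pos
    apply lt_min
    · apply div_pos (by linarith) (by linarith)
    · apply div_pos hε₀ (by positivity)
  have hρ1 : ρ ≤ 1 := min_le_left _ _
  have hρq : (1 + ρ) * q < c := by
    have h1 : ρ ≤ (c - q)/(2*(q+1)) := le_trans (min_le_right _ _) (min_le_left _ _)
    have h2 : ρ * (2*(q+1)) ≤ c - q := (le_div_iff₀ (by positivity)).1 h1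
    nlinarith [hρ, hq0]
  have hρk : ρ * |k| ≤ ε₀/2 := by
    have h1 : ρ ≤ ε₀/(2*(|k|+1)) := le_trans (min_le_right _ _) (min_le_right _ _)
    have h2 : (0:ℝ) < 2*(|k|+1) := by positivity
    have h3 : ρ * (2*(|k|+1)) ≤ ε₀ := (le_div_iff₀ h2).1 h1
    nlinarith [abs_nonneg k, hρ]
  -- choose τ
  have hAl : ((1+ρ) * D * M2) * ((b-a)/c) < 1 := by
    rw [div_eq_mul_inv]
    have h1 : (1+ρ) * D * M2 * (b - a) = (1+ρ) * q := by rw [hq]; ring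
    calc (1+ρ) * D * M2 * ((b-a) * c⁻¹) = ((1+ρ) * q) * c⁻¹ := by rw [← h1]; ring
      _ < c * c⁻¹ := by
          apply mul_lt_mul_of_pos_right hρq
          exact inv_pos.2 hc
      _ = 1 := by field_simp
  obtain ⟨τ, hτ1, hτ2, hτ3⟩ := exists_tau ((b-a)/c) tb ((1+ρ) * D * M2)
    (by positivity) htb hAl
  have hτ : 0 < τ := lt_of_le_of_lt (by positivity) hτ1
  have hτc : b - a < τ * c := by
    rw [div_lt_iff₀ hc] at hτ1
    linarith
  -- margins
  set m : ℝ := (τ*c - (b-a))/2 with hm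
  have hmpos : 0 < m := by rw [hm]; linarith
  set δ : ℝ := min (m/2) (ε₀/(2*(D+1))) with hδdef
  have hδ : 0 < δ := lt_min (by linarith) (by positivity)
  have hδm : δ ≤ m/2 := min_le_left _ _
  have hδD : δ * D ≤ ε₀/2 := by
    have h1 : δ ≤ ε₀/(2*(D+1)) := min_le_right _ _
    have h2 : δ * (2*(D+1)) ≤ ε₀ := (le_div_iff₀ (by positivity)).1 h1
    nlinarith [hδ.le, hD0]
  -- extension
  obtain ⟨W, hWC1, hWeq, hWd, hWflatL, hWflatR, hWimg⟩ :=
    exists_extension a b hab φ hφ D δ hδ hD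
  -- hypotheses of stagePos
  have hwI : ∀ y : ℝ, ∀ s ∈ Icc (-ρ) (1+ρ), W y + s * k ∈ I := by
    intro y s hs
    obtain ⟨z, hz, hzb⟩ := hWimg y
    set s' : ℝ := min 1 (max 0 s) with hs'
    have hs'm : s' ∈ Icc (0:ℝ) 1 := ⟨le_min zero_le_one (le_max_left _ _), min_le_left _ _⟩
    have hss' : |s - s'| ≤ ρ := by
      rcases le_or_gt s 0 with h1 | h1
      · have : s' = 0 := by
          rw [hs', max_eq_left h1, min_eq_right zero_le_one]
        rw [this, sub_zero, abs_le]
        exact ⟨hs.1, by linarith⟩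
      · rcases le_or_gt s 1 with h2 | h2
        · have : s' = s := by
            rw [hs', max_eq_right h1.le, min_eq_right h2]
          rw [this, sub_self, abs_zero]
          exact hρ.le
        · have : s' = 1 := by
            rw [hs', max_eq_right h1.le, min_eq_left h2.le]
          rw [this, abs_le]
          constructor
          · linarith [hρ]
          · linarith [hs.2]
    have hpK : φ z + s' * k ∈ K := ⟨(φ z, s'), ⟨⟨z, hz, rfl⟩, hs'm⟩, rfl⟩
    have hdist : dist (W y + s * k) (φ z + s' * k) ≤ ε₀ := by
      rw [Real.dist_eq]
      have h1 : W y + s * k - (φ z + s' * k) = (W y - φ z) + (s - s') * k := by ring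
      rw [h1]
      calc |(W y - φ z) + (s - s') * k| ≤ |W y - φ z| + |(s - s') * k| := abs_add_le _ _
        _ ≤ δ * D + ρ * |k| := by
            apply add_le_add hzb
            rw [abs_mul]
            exact mul_le_mul_of_nonneg_right hss' (abs_nonneg _)
        _ ≤ ε₀/2 + ε₀/2 := add_le_add hδD hρk
        _ = ε₀ := by ring
    exact hthick (Metric.mem_cthickening_of_dist_le _ _ _ _ hpK hdist)
  set θ : ℝ := D * ((1+ρ) * τ * M2) with hθdef
  have hθ : θ < 1 := by
    have : θ = ((1+ρ) * D * M2) * τ := by rw [hθdef]; ring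
    rw [this]
    exact hτ3
  have hwd : ∀ y : ℝ, |deriv W y| * ((1+ρ) * τ * M2) ≤ θ := by
    intro y
    rw [hθdef]
    apply mul_le_mul_of_nonneg_right (hWd y) (by positivity)
  have hflat : ∀ y, y ≤ a - δ → W y = W (a - δ) := by
    intro y hy
    rw [hWflatL y hy, hWflatL (a-δ) le_rfl]
  have hWα : W (a - δ) = φ a := hWflatL (a-δ) le_rfl
  have hdisp : b + δ < (a - δ) + τ * ((g (W (a-δ) + k) - g (W (a-δ))) / k) := by
    rw [hWα]
    have h1 : c ≤ (g (φ a + k) - g (φ a)) / k := hsep _ hφa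
    have h2 : τ * c ≤ τ * ((g (φ a + k) - g (φ a)) / k) :=
      mul_le_mul_of_nonneg_left h1 hτ.le
    have h3 : 2 * δ ≤ m := by linarith
    have h4 : τ * c = b - a + 2 * m := by rw [hm]; ring
    nlinarith [hmpos]
  obtain ⟨u, εw, hεw, huC, huI, hu0, huPDE, hεwρτ, huwin⟩ :=
    stagePos I hIo hIc g hg M1 M2 hM1 hM2 k τ ρ hk hτ hρ hρ1 W hWC1 hwI θ hθ hwd
      (a - δ) (b + δ) hflat hdisp
  -- final data
  set ε : ℝ := min (min εw δ) (τ/2) with hεdef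
  have hεpos : 0 < ε := lt_min (lt_min hεw hδ) (by linarith)
  have hετ : ε < τ := lt_of_le_of_lt (min_le_right _ _) (by linarith)
  have hεεw : ε ≤ εw := le_trans (min_le_left _ _) (min_le_left _ _)
  have hεδ : ε ≤ δ := le_trans (min_le_left _ _) (min_le_right _ _)
  have hbandsub : Ioo (-ε) (τ+ε) ⊆ Ioo (-(ρ*τ)) ((1+ρ)*τ) := by
    apply Ioo_subset_Ioo
    · have : ε ≤ ρ*τ := le_trans hεεw hεwρτ
      linarith
    · have : ε ≤ ρ*τ := le_trans hεεw hεwρτ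
      linarith
  refine ⟨τ, ε, φ a + k, k/τ, u, hτ, hτ2, hεpos, hετ, hkJ _ hφa, ?_, ?_, ?_, ?_, ?_⟩
  · exact (huC.mono (Set.prod_mono hbandsub subset_rfl))
  · exact fun t ht x => huI t (hbandsub ht) x
  · intro x hx
    rw [hu0 x, hWeq x hx]
  · exact fun t ht x => huPDE t (hbandsub ht) x
  · intro t ht x hx
    have h1 : t ∈ Ioo (τ - εw) (τ + εw) := by
      obtain ⟨h1, h2⟩ := ht
      exact ⟨by linarith, by linarith⟩
    have h2 : x ≤ b + δ := le_trans hx.2 (by linarith)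
    rw [huwin t h1 x h2, hWα]

lemma stageForward (I : Set ℝ) (hIo : IsOpen I) (hIc : Convex ℝ I)
    (g : ℝ → ℝ) (hg : ContDiffOn ℝ 2 g I)
    (M1 M2 : ℝ) (hM1 : ∀ z ∈ I, |deriv g z| ≤ M1) (hM2 : ∀ z ∈ I, |deriv (deriv g) z| ≤ M2)
    (J : Set ℝ) (hJI : J ⊆ I) (hJc : Convex ℝ J)
    (a b : ℝ) (hab : a < b)
    (φ : ℝ → ℝ) (hφ : ContDiffOn ℝ 1 φ (Icc a b)) (him : ∀ x ∈ Icc a b, φ x ∈ J)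
    (k c : ℝ) (hk : k ≠ 0) (hkJ : ∀ v ∈ J, v + k ∈ I)
    (hc : 0 < c) (hsep : ∀ v ∈ J, c ≤ |(g (v + k) - g v) / k|)
    (D : ℝ) (hD : ∀ x ∈ Icc a b, |derivWithin φ (Icc a b) x| ≤ D) (hD0 : 0 ≤ D)
    (hgrad : D * M2 * (b - a) < c)
    (tb : ℝ) (htb : (b - a) / c < tb) :
    ∃ (τ ε A σ : ℝ) (u : ℝ → ℝ → ℝ),
      0 < τ ∧ τ < tb ∧ 0 < ε ∧ ε < τ ∧ A ∈ I ∧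
      ContDiffOn ℝ 1 (fun p : ℝ × ℝ => u p.1 p.2) (Ioo (-ε) (τ+ε) ×ˢ (univ : Set ℝ)) ∧
      (∀ t ∈ Ioo (-ε) (τ+ε), ∀ x : ℝ, u t x ∈ I) ∧
      (∀ x ∈ Icc a b, u 0 x = φ x) ∧
      (∀ t ∈ Ioo (-ε) (τ+ε), ∀ x : ℝ,
        deriv (fun s => u s x) t + deriv g (u t x) * deriv (fun y => u t y) x = σ) ∧
      (∀ t ∈ Ioo (τ-ε) (τ+ε), ∀ x ∈ Icc (a-ε) (b+ε), u t x = A + σ*(t-τ)) := by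
  -- dichotomy of sign
  set Δ : ℝ → ℝ := fun v => (g (v + k) - g v) / k with hΔ
  have hΔc : ContinuousOn Δ J := by
    apply ContinuousOn.div_const
    apply ContinuousOn.sub
    · exact hg.continuousOn.comp (continuous_id.add continuous_const).continuousOn
        (fun v hv => hkJ v hv)
    · exact hg.continuousOn.mono hJI
  have hdich : (∀ v ∈ J, c ≤ Δ v) ∨ (∀ v ∈ J, Δ v ≤ -c) := by
    by_contra hcon
    push_neg at hcon
    obtain ⟨⟨v₁, hv₁, h₁⟩, ⟨v₂, hv₂, h₂⟩⟩ := hcon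
    have hΔ₁ : Δ v₁ ≤ -c := by
      have := hsep v₁ hv₁
      rcases abs_cases (Δ v₁) with ⟨he, _⟩ | ⟨he, _⟩
      · exfalso; rw [he] at this; linarith
      · rw [he] at this; linarith
    have hΔ₂ : c ≤ Δ v₂ := by
      have := hsep v₂ hv₂
      rcases abs_cases (Δ v₂) with ⟨he, _⟩ | ⟨he, _⟩
      · rw [he] at this; linarith
      · exfalso; rw [he] at this; linarith
    have huIcc : uIcc v₁ v₂ ⊆ J := (hJc.ordConnected).uIcc_subset hv₁ hv₂
    have h0mem : (0:ℝ) ∈ uIcc (Δ v₁) (Δ v₂) := by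
      rw [Set.mem_uIcc]
      left
      exact ⟨by linarith, by linarith⟩
    obtain ⟨z, hz, hz0⟩ := intermediate_value_uIcc (hΔc.mono huIcc) h0mem
    have := hsep z (huIcc hz)
    rw [show ((g (z + k) - g z) / k) = Δ z from rfl, hz0] at this
    simp at this
    linarith
  rcases hdich with hpos | hneg
  · exact stageForwardPos I hIo hIc g hg M1 M2 hM1 hM2 J hJI a b hab φ hφ him k c hk hkJ
      hc hpos D hD hD0 hgrad tb htb
  · -- reflected problem with flux -g
    set g' : ℝ → ℝ := fun v => -(g v) with hg'def
    have hderivg' : deriv g' = fun z => -(deriv g z) := funext (fun z => deriv.neg)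
    have hg' : ContDiffOn ℝ 2 g' I := hg.neg
    have hM1' : ∀ z ∈ I, |deriv g' z| ≤ M1 := by
      intro z hz; rw [hderivg']; simp only [abs_neg]; exact hM1 z hz
    have hM2' : ∀ z ∈ I, |deriv (deriv g') z| ≤ M2 := by
      intro z hz
      rw [hderivg']
      rw [show deriv (fun z => -(deriv g z)) z = -(deriv (deriv g) z) from deriv.neg]
      simp only [abs_neg]
      exact hM2 z hz
    set r : ℝ → ℝ := fun x => a + b - x with hr
    have hrmap : ∀ x ∈ Icc a b, r x ∈ Icc a b := by
      intro x hx
      exact ⟨by simp only [hr]; linarith [hx.2], by simp only [hr]; linarith [hx.1]⟩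
    have hrmap' : ∀ ε' > 0, ∀ x ∈ Icc (a-ε') (b+ε'), r x ∈ Icc (a-ε') (b+ε') := by
      intro ε' hε' x hx
      exact ⟨by simp only [hr]; linarith [hx.2], by simp only [hr]; linarith [hx.1]⟩
    set φ' : ℝ → ℝ := fun x => φ (r x) with hφ'def
    have hrC : ContDiff ℝ 1 r := contDiff_const.sub contDiff_id
    have hφ' : ContDiffOn ℝ 1 φ' (Icc a b) :=
      hφ.comp (hrC.contDiffOn) hrmap
    have him' : ∀ x ∈ Icc a b, φ' x ∈ J := fun x hx => him (r x) (hrmap x hx)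
    have hsep' : ∀ v ∈ J, c ≤ (g' (v + k) - g' v) / k := by
      intro v hv
      have h1 : (g' (v + k) - g' v) / k = -((g (v + k) - g v) / k) := by
        simp only [hg'def]
        ring
      rw [h1]
      have := hneg v hv
      simp only [hΔ] at this
      linarith
    have hD' : ∀ x ∈ Icc a b, |derivWithin φ' (Icc a b) x| ≤ D := by
      intro x hx
      have hrx : r x ∈ Icc a b := hrmap x hx
      have hφd : HasDerivWithinAt φ (derivWithin φ (Icc a b) (r x)) (Icc a b) (r x) :=
        (hφ.differentiableOn one_ne_zero (r x) hrx).hasDerivWithinAt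
      have hrd : HasDerivWithinAt r (-1) (Icc a b) x := by
        have : HasDerivAt r (-1) x := by
          simpa using (hasDerivAt_id x).const_sub (a + b)
        exact this.hasDerivWithinAt
      have hcomp : HasDerivWithinAt φ' (derivWithin φ (Icc a b) (r x) * (-1)) (Icc a b) x :=
        hφd.comp x hrd hrmap
      rw [hcomp.derivWithin (uniqueDiffOn_Icc hab x hx)]
      rw [mul_neg_one, abs_neg]
      exact hD (r x) hrx
    obtain ⟨τ, ε, A, σ, v, hτ0, hτtb, hε0, hετ, hAI, hvC, hvI, hv0, hvPDE, hvwin⟩ :=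
      stageForwardPos I hIo hIc g' hg' M1 M2 hM1' hM2' J hJI a b hab φ' hφ' him' k c hk hkJ
        hc hsep' D hD' hD0 hgrad tb htb
    set u : ℝ → ℝ → ℝ := fun t x => v t (r x) with hu
    refine ⟨τ, ε, A, σ, u, hτ0, hτtb, hε0, hετ, hAI, ?_, ?_, ?_, ?_, ?_⟩
    · have hmap2 : Set.MapsTo (fun p : ℝ × ℝ => (p.1, r p.2))
          (Ioo (-ε) (τ+ε) ×ˢ (univ : Set ℝ)) (Ioo (-ε) (τ+ε) ×ˢ (univ : Set ℝ)) :=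
        fun p hp => ⟨hp.1, trivial⟩
      have : ContDiffOn ℝ 1 ((fun p : ℝ × ℝ => v p.1 p.2) ∘ (fun p : ℝ × ℝ => (p.1, r p.2)))
          (Ioo (-ε) (τ+ε) ×ˢ (univ : Set ℝ)) :=
        hvC.comp ((contDiff_fst.prodMk (hrC.comp contDiff_snd)).contDiffOn) hmap2
      exact this
    · exact fun t ht x => hvI t ht (r x)
    · intro x hx
      have h1 : u 0 x = φ' (r x) := hv0 (r x) (hrmap x hx)
      rw [h1]
      simp only [hφ'def, hr]
      ring_nf
    · intro t ht x
      have hPDEv := hvPDE t ht (r x)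
      have h1 : (fun s => u s x) = (fun s => v s (r x)) := rfl
      have h2 : deriv (fun y => u t y) x = -(deriv (fun y => v t y) (r x)) := by
        have := deriv_comp_const_sub (fun y => v t y) (a + b) x
        simpa [hu, hr] using this
      have h3 : deriv g (u t x) = -(deriv g' (v t (r x))) := by
        rw [hderivg']
        simp [hu]
      rw [h1, h2, h3]
      calc deriv (fun s => v s (r x)) t + -deriv g' (v t (r x)) * -deriv (fun y => v t y) (r x)
          = deriv (fun s => v s (r x)) t
            + deriv g' (v t (r x)) * deriv (fun y => v t y) (r x) := by ring
        _ = σ := hPDEv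
    · intro t ht x hx
      exact hvwin t ht (r x) (hrmap' ε hε0 x hx)

private lemma contDiffWithinAt_of_open' {u F : ℝ × ℝ → ℝ} {O s : Set (ℝ × ℝ)} {p : ℝ × ℝ}
    (hO : IsOpen O) (hp : p ∈ O) (hF : ContDiffOn ℝ 1 F O) (heq : Set.EqOn u F O) :
    ContDiffWithinAt ℝ 1 u s p := by
  have h1 : ContDiffAt ℝ 1 F p := hF.contDiffAt (hO.mem_nhds hp)
  have h2 : u =ᶠ[nhds p] F := by
    filter_upwards [hO.mem_nhds hp] with q hq using heq hq
  exact (h1.congr_of_eventuallyEq h2).contDiffWithinAt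

private lemma derivWithin_eq_of_nhds {f g : ℝ → ℝ} {s : Set ℝ} {t : ℝ}
    (h : f =ᶠ[nhds t] g) (hg : DifferentiableAt ℝ g t) (hs : UniqueDiffWithinAt ℝ s t) :
    derivWithin f s t = deriv g t := by
  have h1 : derivWithin f s t = derivWithin g s t :=
    Filter.EventuallyEq.derivWithin_eq (h.filter_mono nhdsWithin_le_nhds) h.eq_of_nhds
  rw [h1, hg.derivWithin hs]

-- extraction of a good (k, c) from positivity of the bracket norm
private lemma bracket_extract (f : ℝ → ℝ) (I J : Set ℝ) (L : ℝ)
    (hL : L < bracketNorm f I J) (hL0 : 0 ≤ L) :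
    ∃ k c : ℝ, k ≠ 0 ∧ ((fun u => u + k) '' J ⊆ I) ∧ L < c ∧
      (∀ v ∈ J, c ≤ |(f (v + k) - f v) / k|) := by
  set S := {r : ℝ | ∃ k : ℝ, k ≠ 0 ∧ (fun u => u + k) '' J ⊆ I ∧
    r = sInf ((fun u => |(f (u + k) - f u) / k|) '' J)} with hS
  have hSne : S.Nonempty := by
    by_contra hcon
    rw [Set.not_nonempty_iff_eq_empty] at hcon
    have : bracketNorm f I J = 0 := by
      rw [bracketNorm, ← hS, hcon, Real.sSup_empty]
    rw [this] at hL
    linarith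
  obtain ⟨r, hrS, hrgt⟩ := exists_lt_of_lt_csSup hSne hL
  obtain ⟨k, hkne, hksub, hrdef⟩ := hrS
  refine ⟨k, r, hkne, hksub, hrgt, ?_⟩
  intro v hv
  rw [hrdef]
  apply csInf_le
  · exact ⟨0, fun y ⟨z, hz, hze⟩ => hze ▸ abs_nonneg _⟩
  · exact ⟨v, hv, rfl⟩


end AuxProof

/-- global controllability of `C¹` states for a general flux with bounded
`f'`, `f''` on the open interval `I`. -/
theorem statement0
    (I : Set ℝ) (hIopen : IsOpen I) (hIord : I.OrdConnected)
    (f : ℝ → ℝ) (hf : ContDiffOn ℝ 2 f I)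
    (hf'bdd : BddAbove ((fun x => |deriv f x|) '' I))
    (hf''bdd : BddAbove ((fun x => |deriv (deriv f) x|) '' I))
    (I₁ I₂ : Set ℝ) (hI₁ : I₁ ⊆ I) (hI₂ : I₂ ⊆ I)
    (hI₁o : I₁.OrdConnected) (hI₂o : I₂.OrdConnected)
    (hb₁ : 0 < bracketNorm f I I₁) (hb₂ : 0 < bracketNorm f I I₂)
    (a b : ℝ) (hab : a < b)
    (ubar ψ : ℝ → ℝ)
    (hub : ContDiffOn ℝ 1 ubar (Set.Icc a b)) (hψ : ContDiffOn ℝ 1 ψ (Set.Icc a b))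
    (him₁ : ubar '' Set.Icc a b ⊂ I₁) (him₂ : ψ '' Set.Icc a b ⊂ I₂)
    (hder₁ : supNorm (fun x => derivWithin ubar (Set.Icc a b) x) (Set.Icc a b)
      < bracketNorm f I I₁ / ((b - a) * supNorm (deriv (deriv f)) I))
    (hder₂ : supNorm (fun x => derivWithin ψ (Set.Icc a b) x) (Set.Icc a b)
      < bracketNorm f I I₂ / ((b - a) * supNorm (deriv (deriv f)) I))
    (T : ℝ)
    (hT : (b - a) / bracketNorm f I I₁ + (b - a) / bracketNorm f I I₂ < T) :
    ∃ (h : ℝ → ℝ) (u : ℝ → ℝ → ℝ),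
      ContinuousOn h (Set.Icc 0 T) ∧
      IsClassicalSolution I f h T a b u ∧
      (∀ x ∈ Set.Icc a b, u 0 x = ubar x) ∧
      (∀ x ∈ Set.Icc a b, u T x = ψ x) := by
  have hIc : Convex ℝ I := hIord.convex
  have hI₁c : Convex ℝ I₁ := hI₁o.convex
  have hI₂c : Convex ℝ I₂ := hI₂o.convex
  have hba : 0 < b - a := by linarith
  set β₁ : ℝ := bracketNorm f I I₁ with hβ₁def
  set β₂ : ℝ := bracketNorm f I I₂ with hβ₂def
  set M2 : ℝ := supNorm (deriv (deriv f)) I with hM2def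
  set D₁ : ℝ := supNorm (fun x => derivWithin ubar (Set.Icc a b) x) (Set.Icc a b) with hD₁def
  set D₂ : ℝ := supNorm (fun x => derivWithin ψ (Set.Icc a b) x) (Set.Icc a b) with hD₂def
  clear_value β₁ β₂ M2 D₁ D₂
  set M1 : ℝ := sSup ((fun x => |deriv f x|) '' I) with hM1def
  clear_value M1
  have hM1 : ∀ z ∈ I, |deriv f z| ≤ M1 := by
    intro z hz
    rw [hM1def]
    exact le_csSup hf'bdd ⟨z, hz, rfl⟩
  have hM2 : ∀ z ∈ I, |deriv (deriv f) z| ≤ M2 := fun z hz => by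
    rw [hM2def, supNorm]
    exact le_csSup hf''bdd ⟨z, hz, rfl⟩
  have him₁' : ∀ x ∈ Icc a b, ubar x ∈ I₁ := fun x hx => him₁.subset ⟨x, hx, rfl⟩
  have him₂' : ∀ x ∈ Icc a b, ψ x ∈ I₂ := fun x hx => him₂.subset ⟨x, hx, rfl⟩
  have hamem : a ∈ Icc a b := ⟨le_rfl, hab.le⟩
  -- derivative sup bounds
  have hD₁p : ∀ x ∈ Icc a b, |derivWithin ubar (Icc a b) x| ≤ D₁ := by
    intro x hx
    have hcont : ContinuousOn (fun x => |derivWithin ubar (Icc a b) x|) (Icc a b) :=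
      (hub.continuousOn_derivWithin (uniqueDiffOn_Icc hab) le_rfl).abs
    have hbdd : BddAbove ((fun x => |derivWithin ubar (Icc a b) x|) '' Icc a b) :=
      (isCompact_Icc.image_of_continuousOn hcont).bddAbove
    rw [hD₁def, supNorm]
    exact le_csSup hbdd ⟨x, hx, rfl⟩
  have hD₂p : ∀ x ∈ Icc a b, |derivWithin ψ (Icc a b) x| ≤ D₂ := by
    intro x hx
    have hcont : ContinuousOn (fun x => |derivWithin ψ (Icc a b) x|) (Icc a b) :=
      (hψ.continuousOn_derivWithin (uniqueDiffOn_Icc hab) le_rfl).abs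
    have hbdd : BddAbove ((fun x => |derivWithin ψ (Icc a b) x|) '' Icc a b) :=
      (isCompact_Icc.image_of_continuousOn hcont).bddAbove
    rw [hD₂def, supNorm]
    exact le_csSup hbdd ⟨x, hx, rfl⟩
  have hD₁0 : 0 ≤ D₁ := le_trans (abs_nonneg _) (hD₁p a hamem)
  have hD₂0 : 0 ≤ D₂ := le_trans (abs_nonneg _) (hD₂p a hamem)
  have hM20 : 0 ≤ M2 := le_trans (abs_nonneg _) (hM2 _ (hI₁ (him₁' a hamem)))
  have hM2pos : 0 < M2 := by
    rcases lt_or_eq_of_le hM20 with h | h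
    · exact h
    · exfalso
      rw [← h, mul_zero, div_zero] at hder₁
      linarith
  have hgradβ₁ : D₁ * M2 * (b - a) < β₁ := by
    have h1 : D₁ * ((b - a) * M2) < β₁ := (lt_div_iff₀ (by positivity)).1 hder₁
    have h2 : D₁ * M2 * (b - a) = D₁ * ((b - a) * M2) := by ring
    rw [h2]; exact h1
  have hgradβ₂ : D₂ * M2 * (b - a) < β₂ := by
    have h1 : D₂ * ((b - a) * M2) < β₂ := (lt_div_iff₀ (by positivity)).1 hder₂
    have h2 : D₂ * M2 * (b - a) = D₂ * ((b - a) * M2) := by ring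
    rw [h2]; exact h1
  -- time budgets
  set s : ℝ := T - ((b - a)/β₁ + (b - a)/β₂) with hsdef
  have hs : 0 < s := by rw [hsdef]; linarith
  set tb₁ : ℝ := (b - a)/β₁ + s/3 with htb₁def
  set tb₂ : ℝ := (b - a)/β₂ + s/3 with htb₂def
  clear_value s tb₁ tb₂
  have htb₁pos : 0 < tb₁ := by
    have : 0 < (b - a)/β₁ := div_pos hba hb₁
    rw [htb₁def]; linarith
  have htb₂pos : 0 < tb₂ := by
    have : 0 < (b - a)/β₂ := div_pos hba hb₂
    rw [htb₂def]; linarith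
  have hLb₁ : (b - a)/tb₁ < β₁ := by
    rw [div_lt_iff₀ htb₁pos]
    have h3 : β₁ * tb₁ = (b - a) + β₁ * (s/3) := by
      rw [htb₁def, mul_add, mul_div_cancel₀ _ (ne_of_gt hb₁)]
    have h4 : 0 < β₁ * (s/3) := by positivity
    linarith
  have hLb₂ : (b - a)/tb₂ < β₂ := by
    rw [div_lt_iff₀ htb₂pos]
    have h3 : β₂ * tb₂ = (b - a) + β₂ * (s/3) := by
      rw [htb₂def, mul_add, mul_div_cancel₀ _ (ne_of_gt hb₂)]
    have h4 : 0 < β₂ * (s/3) := by positivity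
    linarith
  -- extract k,c for each stage
  have hmax₁ : max (D₁ * M2 * (b - a)) ((b - a)/tb₁) < bracketNorm f I I₁ := by
    rw [← hβ₁def]; exact max_lt hgradβ₁ hLb₁
  have hmax₂ : max (D₂ * M2 * (b - a)) ((b - a)/tb₂) < bracketNorm f I I₂ := by
    rw [← hβ₂def]; exact max_lt hgradβ₂ hLb₂
  obtain ⟨k₁, c₁, hk₁, hk₁sub, hc₁gt, hsep₁⟩ := bracket_extract f I I₁
    (max (D₁ * M2 * (b - a)) ((b - a)/tb₁))
    hmax₁ (le_max_of_le_left (by positivity))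
  obtain ⟨k₂, c₂, hk₂, hk₂sub, hc₂gt, hsep₂f⟩ := bracket_extract f I I₂
    (max (D₂ * M2 * (b - a)) ((b - a)/tb₂))
    hmax₂ (le_max_of_le_left (by positivity))
  have hc₁ : 0 < c₁ := lt_of_lt_of_le (div_pos hba htb₁pos)
    (le_trans (le_max_right _ _) hc₁gt.le)
  have hc₂ : 0 < c₂ := lt_of_lt_of_le (div_pos hba htb₂pos)
    (le_trans (le_max_right _ _) hc₂gt.le)
  have hgrad₁ : D₁ * M2 * (b - a) < c₁ := lt_of_le_of_lt (le_max_left _ _) hc₁gt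
  have hgrad₂ : D₂ * M2 * (b - a) < c₂ := lt_of_le_of_lt (le_max_left _ _) hc₂gt
  have htb₁' : (b - a)/c₁ < tb₁ := by
    rw [div_lt_iff₀ hc₁]
    have h1 : (b - a)/tb₁ < c₁ := lt_of_le_of_lt (le_max_right _ _) hc₁gt
    rw [div_lt_iff₀ htb₁pos] at h1
    linarith [h1]
  have htb₂' : (b - a)/c₂ < tb₂ := by
    rw [div_lt_iff₀ hc₂]
    have h1 : (b - a)/tb₂ < c₂ := lt_of_le_of_lt (le_max_right _ _) hc₂gt
    rw [div_lt_iff₀ htb₂pos] at h1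
    linarith [h1]
  have hkJ₁ : ∀ v ∈ I₁, v + k₁ ∈ I := fun v hv => hk₁sub ⟨v, hv, rfl⟩
  have hkJ₂ : ∀ v ∈ I₂, v + k₂ ∈ I := fun v hv => hk₂sub ⟨v, hv, rfl⟩
  -- stage 1
  obtain ⟨τ₁, ε₁, A₁, σ₁, u₁, hτ₁0, hτ₁tb, hε₁0, hε₁τ, hA₁I, hu₁C, hu₁I, hu₁0, hu₁PDE, hu₁win⟩ :=
    stageForward I hIopen hIc f hf M1 M2 hM1 hM2 I₁ hI₁ hI₁c a b hab ubar hub him₁'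
      k₁ c₁ hk₁ hkJ₁ hc₁ hsep₁ D₁ hD₁p hD₁0 hgrad₁ tb₁ htb₁'
  -- stage 2 : reversed flux
  set g₂ : ℝ → ℝ := fun v => -(f v) with hg₂def
  have hderivg₂ : deriv g₂ = fun z => -(deriv f z) := funext fun z => deriv.neg
  have hg₂C : ContDiffOn ℝ 2 g₂ I := hf.neg
  have hM1₂ : ∀ z ∈ I, |deriv g₂ z| ≤ M1 := by
    intro z hz; rw [hderivg₂]; simp only [abs_neg]; exact hM1 z hz
  have hM2₂ : ∀ z ∈ I, |deriv (deriv g₂) z| ≤ M2 := by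
    intro z hz
    rw [hderivg₂, show deriv (fun z => -(deriv f z)) z = -(deriv (deriv f) z) from deriv.neg]
    simp only [abs_neg]
    exact hM2 z hz
  have hsep₂ : ∀ v ∈ I₂, c₂ ≤ |(g₂ (v + k₂) - g₂ v) / k₂| := by
    intro v hv
    have h1 : (g₂ (v + k₂) - g₂ v) / k₂ = -((f (v + k₂) - f v) / k₂) := by
      simp only [hg₂def]; ring
    rw [h1, abs_neg]
    exact hsep₂f v hv
  obtain ⟨τ₂, ε₂, A₂, σ₂, u₂, hτ₂0, hτ₂tb, hε₂0, hε₂τ, hA₂I, hu₂C, hu₂I, hu₂0, hu₂PDE, hu₂win⟩ :=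
    stageForward I hIopen hIc g₂ hg₂C M1 M2 hM1₂ hM2₂ I₂ hI₂ hI₂c a b hab ψ hψ him₂'
      k₂ c₂ hk₂ hkJ₂ hc₂ hsep₂ D₂ hD₂p hD₂0 hgrad₂ tb₂ htb₂'
  -- junction times
  set rr : ℝ := T - τ₂ with hrrdef
  clear_value rr
  have hτT : τ₁ + τ₂ < T := by
    have h1 : tb₁ + tb₂ = T - s/3 := by rw [htb₁def, htb₂def, hsdef]; ring
    linarith
  clear hsdef htb₁def htb₂def hβ₁def hβ₂def hM1def hM2def hD₁def hD₂def
  have hτ₁rr : τ₁ < rr := by rw [hrrdef]; linarith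
  have hrrT : rr < T := by rw [hrrdef]; linarith
  have h0T : (0:ℝ) < T := by linarith
  -- segment between the two constants, with a safety thickening
  have hsegI : uIcc A₁ A₂ ⊆ I := hIc.ordConnected.uIcc_subset hA₁I hA₂I
  obtain ⟨εA, hεA, hthickA⟩ := isCompact_uIcc.exists_cthickening_subset_open hIopen hsegI
  -- the margin m
  have hrrτ : 0 < rr - τ₁ := by linarith
  obtain ⟨m, hm, hmε₁, hmε₂, hmgap, hmεA'⟩ :
      ∃ m : ℝ, 0 < m ∧ m ≤ ε₁ ∧ m ≤ ε₂ ∧ m ≤ (rr - τ₁)/9 ∧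
        m * (6*(|σ₁| + |-σ₂|)+1) ≤ εA := by
    refine ⟨min (min ε₁ ε₂) (min ((rr - τ₁)/9) (εA/(6*(|σ₁| + |-σ₂|)+1))), ?_, ?_, ?_, ?_, ?_⟩
    · apply lt_min (lt_min hε₁0 hε₂0)
      apply lt_min
      · exact div_pos hrrτ (by norm_num)
      · apply div_pos hεA (by positivity)
    · exact le_trans (min_le_left _ _) (min_le_left _ _)
    · exact le_trans (min_le_left _ _) (min_le_right _ _)
    · exact le_trans (min_le_right _ _) (min_le_left _ _)
    · exact (le_div_iff₀ (by positivity)).1 (le_trans (min_le_right _ _) (min_le_right _ _))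
  have hgap8 : τ₁ + 8*m < rr := by
    rw [le_div_iff₀ (by norm_num : (0:ℝ) < 9)] at hmgap
    linarith
  have hmεA : 6*m*(|σ₁| + |-σ₂|) ≤ εA := by
    nlinarith [hm.le, abs_nonneg σ₁, abs_nonneg (-σ₂), hmεA']
  obtain ⟨cm, hcmC1, hcmL, hcmR, hcmval⟩ := middle_interp τ₁ rr m σ₁ (-σ₂) A₁ A₂ hm hgap8
  -- handy facts about cm's derivative
  have hdcmC : Continuous (deriv cm) := (contDiff_one_iff_deriv.1 hcmC1).2
  have hcmderL : ∀ t ∈ Ioo (τ₁ - m) (τ₁ + m), deriv cm t = σ₁ := by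
    intro t ht
    have hev : cm =ᶠ[nhds t] (fun t' => A₁ + σ₁*(t' - τ₁)) := by
      filter_upwards [Ioo_mem_nhds ht.1 ht.2] with t' ht' using hcmL t' ht'
    rw [hev.deriv_eq]
    have hD : HasDerivAt (fun t' => A₁ + σ₁*(t' - τ₁)) σ₁ t := by
      simpa using (((hasDerivAt_id t).sub_const τ₁).const_mul σ₁).const_add A₁
    exact hD.deriv
  have hcmderR : ∀ t ∈ Ioo (rr - m) (rr + m), deriv cm t = -σ₂ := by
    intro t ht
    have hev : cm =ᶠ[nhds t] (fun t' => A₂ + (-σ₂)*(t' - rr)) := by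
      filter_upwards [Ioo_mem_nhds ht.1 ht.2] with t' ht' using hcmR t' ht'
    rw [hev.deriv_eq]
    have hD : HasDerivAt (fun t' => A₂ + (-σ₂)*(t' - rr)) (-σ₂) t := by
      simpa using (((hasDerivAt_id t).sub_const rr).const_mul (-σ₂)).const_add A₂
    exact hD.deriv
  -- value of cm within I on the middle range
  have hcmI : ∀ t ∈ Icc (τ₁ - m) (rr + m), cm t ∈ I := by
    intro t ht
    obtain ⟨z, hzseg, hzb⟩ := hcmval t ht
    have hzI : z ∈ uIcc A₁ A₂ := by rw [← segment_eq_uIcc]; exact hzseg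
    apply hthickA
    apply Metric.mem_cthickening_of_dist_le _ z _ _ hzI
    rw [Real.dist_eq]
    exact le_trans hzb hmεA
  -- combined windows
  have hW1 : ∀ t, τ₁ - m < t → t ≤ τ₁ → ∀ x ∈ Icc (a - m) (b + m),
      u₁ t x = A₁ + σ₁*(t - τ₁) := by
    intro t h1 h2 x hx
    apply hu₁win t ⟨by linarith, by linarith⟩ x
      ⟨by linarith [hx.1], by linarith [hx.2]⟩
  have hW2 : ∀ t, rr ≤ t → t < rr + m → ∀ x ∈ Icc (a - m) (b + m),
      u₂ (T - t) x = A₂ + (-σ₂)*(t - rr) := by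
    intro t h1 h2 x hx
    have h3 : T - t ∈ Ioo (τ₂ - ε₂) (τ₂ + ε₂) := by
      constructor
      · rw [hrrdef] at h2; linarith
      · rw [hrrdef] at h1; linarith
    have h4 := hu₂win (T - t) h3 x ⟨by linarith [hx.1], by linarith [hx.2]⟩
    rw [h4, hrrdef]
    ring
  -- the solution and the source term
  set uu : ℝ → ℝ → ℝ := fun t x =>
    if t ≤ τ₁ then u₁ t x else if t < rr then cm t else u₂ (T - t) x with huudef
  set hh : ℝ → ℝ := fun t =>
    if t ≤ τ₁ then σ₁ else if t < rr then deriv cm t else -σ₂ with hhhdef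
  refine ⟨hh, uu, ?_, ⟨?_, ?_, ?_⟩, ?_, ?_⟩
  · -- continuity of hh
    intro t _
    apply ContinuousAt.continuousWithinAt
    rcases lt_trichotomy t τ₁ with h1 | h1 | h1
    · apply continuousAt_const.congr
      apply Filter.eventuallyEq_of_mem (Iio_mem_nhds h1)
      intro t' ht'
      simp only [hhhdef]
      rw [if_pos (le_of_lt ht')]
    · apply continuousAt_const.congr
      apply Filter.eventuallyEq_of_mem (Ioo_mem_nhds (by linarith : τ₁ - m < t)
        (by linarith : t < τ₁ + m))
      intro t' ht'
      simp only [hhhdef]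
      rcases le_or_gt t' τ₁ with h2 | h2
      · rw [if_pos h2]
      · rw [if_neg (not_le.2 h2), if_pos (by linarith [ht'.2, hgap8, hm] : t' < rr),
          hcmderL t' ht']
    · rcases lt_trichotomy t rr with h2 | h2 | h2
      · apply (hdcmC.continuousAt).congr
        apply Filter.eventuallyEq_of_mem (Ioo_mem_nhds h1 h2)
        intro t' ht'
        simp only [hhhdef]
        rw [if_neg (not_le.2 ht'.1), if_pos ht'.2]
      · apply continuousAt_const.congr
        apply Filter.eventuallyEq_of_mem (Ioo_mem_nhds (by linarith : rr - m < t)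
          (by linarith : t < rr + m))
        intro t' ht'
        simp only [hhhdef]
        have hτ₁t' : ¬ t' ≤ τ₁ := by
          have : τ₁ + 7*m < rr - m := by linarith
          push_neg
          linarith [ht'.1]
        rcases lt_or_ge t' rr with h3 | h3
        · rw [if_neg hτ₁t', if_pos h3, hcmderR t' ht']
        · rw [if_neg hτ₁t', if_neg (not_lt.2 h3)]
      · apply continuousAt_const.congr
        apply Filter.eventuallyEq_of_mem (Ioi_mem_nhds h2)
        intro t' ht'
        simp only [hhhdef]
        have h3 : ¬ t' ≤ τ₁ := by push_neg; linarith [mem_Ioi.1 ht']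
        rw [if_neg h3, if_neg (not_lt.2 (le_of_lt (mem_Ioi.1 ht')))]
  · -- ContDiffOn of uu
    intro p hp
    obtain ⟨hpt, hpx⟩ := hp
    rcases lt_trichotomy p.1 τ₁ with h1 | h1 | h1
    · apply contDiffWithinAt_of_open' (isOpen_Ioo.prod isOpen_univ)
        (⟨⟨by linarith [hpt.1], h1⟩, trivial⟩ : p ∈ Ioo (-ε₁) τ₁ ×ˢ univ)
        (hu₁C.mono (Set.prod_mono (Ioo_subset_Ioo le_rfl (by linarith)) subset_rfl))
      intro z hz
      simp only [huudef]
      rw [if_pos (le_of_lt hz.1.2)]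
    · apply contDiffWithinAt_of_open' (isOpen_Ioo.prod isOpen_Ioo)
        (⟨⟨by linarith, by linarith⟩,
          ⟨by linarith [hpx.1], by linarith [hpx.2]⟩⟩ :
          p ∈ Ioo (τ₁ - m) (τ₁ + m) ×ˢ Ioo (a - m) (b + m))
        (F := fun z : ℝ × ℝ => A₁ + σ₁ * (z.1 - τ₁))
        ((contDiff_const.add (contDiff_const.mul (contDiff_fst.sub contDiff_const))).contDiffOn)
      intro z hz
      obtain ⟨hzt, hzx⟩ := hz
      simp only [huudef]
      rcases le_or_gt z.1 τ₁ with h2 | h2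
      · rw [if_pos h2]
        exact hW1 z.1 hzt.1 h2 z.2 ⟨hzx.1.le, hzx.2.le⟩
      · rw [if_neg (not_le.2 h2), if_pos (by linarith [hzt.2, hgap8, hm] : z.1 < rr)]
        exact hcmL z.1 hzt
    · rcases lt_trichotomy p.1 rr with h2 | h2 | h2
      · apply contDiffWithinAt_of_open' (isOpen_Ioo.prod isOpen_univ)
          (⟨⟨h1, h2⟩, trivial⟩ : p ∈ Ioo τ₁ rr ×ˢ univ)
          (F := fun z : ℝ × ℝ => cm z.1)
          ((hcmC1.comp contDiff_fst).contDiffOn)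
        intro z hz
        simp only [huudef]
        rw [if_neg (not_le.2 hz.1.1), if_pos hz.1.2]
      · apply contDiffWithinAt_of_open' (isOpen_Ioo.prod isOpen_Ioo)
          (⟨⟨by linarith, by linarith⟩,
            ⟨by linarith [hpx.1], by linarith [hpx.2]⟩⟩ :
            p ∈ Ioo (rr - m) (rr + m) ×ˢ Ioo (a - m) (b + m))
          (F := fun z : ℝ × ℝ => A₂ + (-σ₂) * (z.1 - rr))
          ((contDiff_const.add (contDiff_const.mul (contDiff_fst.sub contDiff_const))).contDiffOn)
        intro z hz
        obtain ⟨hzt, hzx⟩ := hz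
        have hzτ₁ : ¬ z.1 ≤ τ₁ := by push_neg; linarith [hzt.1]
        simp only [huudef]
        rcases lt_or_ge z.1 rr with h3 | h3
        · rw [if_neg hzτ₁, if_pos h3]
          exact hcmR z.1 hzt
        · rw [if_neg hzτ₁, if_neg (not_lt.2 h3)]
          exact hW2 z.1 h3 hzt.2 z.2 ⟨hzx.1.le, hzx.2.le⟩
      · apply contDiffWithinAt_of_open' (isOpen_Ioo.prod isOpen_univ)
          (⟨⟨h2, by linarith [hpt.2]⟩, trivial⟩ : p ∈ Ioo rr (T + ε₂) ×ˢ univ)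
          (F := fun z : ℝ × ℝ => u₂ (T - z.1) z.2) ?_
        · intro z hz
          have hzτ₁ : ¬ z.1 ≤ τ₁ := by push_neg; linarith [hz.1.1]
          simp only [huudef]
          rw [if_neg hzτ₁, if_neg (not_lt.2 (le_of_lt hz.1.1))]
        · apply hu₂C.comp
            ((contDiff_const.sub contDiff_fst).prodMk contDiff_snd).contDiffOn
          intro z hz
          exact ⟨⟨by simp only; linarith [hz.1.2], by simp only; linarith [hz.1.1]⟩, trivial⟩
  · -- values in I
    intro t ht x hx
    simp only [huudef]
    rcases le_or_gt t τ₁ with h1 | h1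
    · rw [if_pos h1]
      exact hu₁I t ⟨by linarith [ht.1], by linarith⟩ x
    · rcases lt_or_ge t rr with h2 | h2
      · rw [if_neg (not_le.2 h1), if_pos h2]
        exact hcmI t ⟨by linarith, by linarith⟩
      · rw [if_neg (not_le.2 h1), if_neg (not_lt.2 h2)]
        apply hu₂I (T - t) _ x
        constructor
        · rw [hrrdef] at h2; linarith [ht.2]
        · rw [hrrdef] at h2
          have : T - t ≤ τ₂ := by linarith
          linarith
  · -- the PDE
    intro t ht x hx
    have hx' : x ∈ Ioo (a - m) (b + m) := ⟨by linarith [hx.1], by linarith [hx.2]⟩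
    rcases lt_trichotomy t τ₁ with h1 | h1 | h1
    · -- use u₁
      have htB : t ∈ Ioo (-ε₁) (τ₁ + ε₁) := ⟨by linarith [ht.1], by linarith⟩
      have hFC : ContDiffAt ℝ 1 (fun z : ℝ × ℝ => u₁ z.1 z.2) (t, x) :=
        hu₁C.contDiffAt ((isOpen_Ioo.prod isOpen_univ).mem_nhds ⟨htB, trivial⟩)
      have hevt : (fun s => uu s x) =ᶠ[nhds t] (fun s => u₁ s x) := by
        filter_upwards [Iio_mem_nhds h1] with s hs
        simp only [huudef]
        rw [if_pos (le_of_lt hs)]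
      have hevx : (fun y => uu t y) =ᶠ[nhds x] (fun y => u₁ t y) := by
        apply Filter.Eventually.of_forall
        intro y
        simp only [huudef]
        rw [if_pos h1.le]
      have hdt : DifferentiableAt ℝ (fun s => u₁ s x) t :=
        by have := (hFC.differentiableAt one_ne_zero).comp t (differentiableAt_id.prodMk (differentiableAt_const x) : DifferentiableAt ℝ (fun s : ℝ => (s, x)) t); exact this
      have hdx : DifferentiableAt ℝ (fun y => u₁ t y) x :=
        (hFC.differentiableAt one_ne_zero).comp x ((differentiableAt_const t).prodMk differentiableAt_id)
      rw [derivWithin_eq_of_nhds hevt hdt ((uniqueDiffOn_Icc h0T) t ht),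
        derivWithin_eq_of_nhds hevx hdx ((uniqueDiffOn_Icc hab) x hx)]
      have hval : uu t x = u₁ t x := by simp only [huudef]; rw [if_pos h1.le]
      rw [hval]
      rw [show hh t = σ₁ by simp only [hhhdef]; rw [if_pos h1.le]]
      exact hu₁PDE t htB x
    · -- t = τ₁ : affine window
      have hevt : (fun s => uu s x) =ᶠ[nhds t] (fun s => A₁ + σ₁ * (s - τ₁)) := by
        filter_upwards [Ioo_mem_nhds (by linarith : τ₁ - m < t) (by linarith : t < τ₁ + m)]
          with s hs
        simp only [huudef]
        rcases le_or_gt s τ₁ with h2 | h2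
        · rw [if_pos h2]
          exact hW1 s hs.1 h2 x ⟨hx'.1.le, hx'.2.le⟩
        · rw [if_neg (not_le.2 h2), if_pos (by linarith [hs.2, hgap8, hm] : s < rr)]
          exact hcmL s hs
      have hevx : (fun y => uu t y) =ᶠ[nhds x] (fun _ => A₁ + σ₁ * (t - τ₁)) := by
        filter_upwards [Ioo_mem_nhds hx'.1 hx'.2] with y hy
        simp only [huudef]
        rw [if_pos h1.le]
        exact hW1 t (by linarith) h1.le y ⟨hy.1.le, hy.2.le⟩
      have hdaff : HasDerivAt (fun s => A₁ + σ₁ * (s - τ₁)) σ₁ t := by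
        simpa using (((hasDerivAt_id t).sub_const τ₁).const_mul σ₁).const_add A₁
      rw [derivWithin_eq_of_nhds hevt hdaff.differentiableAt ((uniqueDiffOn_Icc h0T) t ht),
        derivWithin_eq_of_nhds hevx (differentiableAt_const _) ((uniqueDiffOn_Icc hab) x hx)]
      rw [hdaff.deriv, deriv_const]
      rw [show hh t = σ₁ by simp only [hhhdef]; rw [if_pos h1.le]]
      ring
    · rcases lt_trichotomy t rr with h2 | h2 | h2
      · -- middle
        have hevt : (fun s => uu s x) =ᶠ[nhds t] cm := by
          filter_upwards [Ioo_mem_nhds h1 h2] with s hs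
          simp only [huudef]
          rw [if_neg (not_le.2 hs.1), if_pos hs.2]
        have hevx : (fun y => uu t y) =ᶠ[nhds x] (fun _ => cm t) := by
          apply Filter.Eventually.of_forall
          intro y
          simp only [huudef]
          rw [if_neg (not_le.2 h1), if_pos h2]
        have hdcm : DifferentiableAt ℝ cm t := (hcmC1.differentiable one_ne_zero).differentiableAt
        rw [derivWithin_eq_of_nhds hevt hdcm ((uniqueDiffOn_Icc h0T) t ht),
          derivWithin_eq_of_nhds hevx (differentiableAt_const _) ((uniqueDiffOn_Icc hab) x hx)]
        rw [deriv_const]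
        rw [show hh t = deriv cm t by
          simp only [hhhdef]; rw [if_neg (not_le.2 h1), if_pos h2]]
        ring
      · -- t = rr : affine window
        have hgapm : τ₁ < rr - m := by linarith
        have hevt : (fun s => uu s x) =ᶠ[nhds t] (fun s => A₂ + (-σ₂) * (s - rr)) := by
          filter_upwards [Ioo_mem_nhds (by linarith : rr - m < t) (by linarith : t < rr + m)]
            with s hs
          have hsτ₁ : ¬ s ≤ τ₁ := by push_neg; linarith [hs.1]
          simp only [huudef]
          rcases lt_or_ge s rr with h3 | h3
          · rw [if_neg hsτ₁, if_pos h3]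
            exact hcmR s hs
          · rw [if_neg hsτ₁, if_neg (not_lt.2 h3)]
            exact hW2 s h3 hs.2 x ⟨hx'.1.le, hx'.2.le⟩
        have hevx : (fun y => uu t y) =ᶠ[nhds x] (fun _ => A₂ + (-σ₂) * (t - rr)) := by
          filter_upwards [Ioo_mem_nhds hx'.1 hx'.2] with y hy
          have htτ₁ : ¬ t ≤ τ₁ := by push_neg; linarith
          simp only [huudef]
          rw [if_neg htτ₁, if_neg (not_lt.2 (le_of_eq h2.symm))]
          rw [h2] at *
          exact hW2 rr le_rfl (by linarith) y ⟨hy.1.le, hy.2.le⟩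
        have hdaff : HasDerivAt (fun s => A₂ + (-σ₂) * (s - rr)) (-σ₂) t := by
          simpa using (((hasDerivAt_id t).sub_const rr).const_mul (-σ₂)).const_add A₂
        rw [derivWithin_eq_of_nhds hevt hdaff.differentiableAt ((uniqueDiffOn_Icc h0T) t ht),
          derivWithin_eq_of_nhds hevx (differentiableAt_const _) ((uniqueDiffOn_Icc hab) x hx)]
        rw [hdaff.deriv, deriv_const]
        rw [show hh t = -σ₂ by
          simp only [hhhdef]
          rw [if_neg (by push_neg; linarith : ¬ t ≤ τ₁), if_neg (not_lt.2 (le_of_eq h2.symm))]]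
        ring
      · -- use u₂, time reversed
        have htB : T - t ∈ Ioo (-ε₂) (τ₂ + ε₂) := by
          constructor
          · linarith [ht.2]
          · rw [hrrdef] at h2; linarith
        have hFC : ContDiffAt ℝ 1 (fun z : ℝ × ℝ => u₂ z.1 z.2) (T - t, x) :=
          hu₂C.contDiffAt ((isOpen_Ioo.prod isOpen_univ).mem_nhds ⟨htB, trivial⟩)
        have hevt : (fun s => uu s x) =ᶠ[nhds t] (fun s => u₂ (T - s) x) := by
          filter_upwards [Ioi_mem_nhds h2] with s hs
          have hsτ₁ : ¬ s ≤ τ₁ := by push_neg; linarith [mem_Ioi.1 hs]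
          simp only [huudef]
          rw [if_neg hsτ₁, if_neg (not_lt.2 (le_of_lt (mem_Ioi.1 hs)))]
        have hevx : (fun y => uu t y) =ᶠ[nhds x] (fun y => u₂ (T - t) y) := by
          apply Filter.Eventually.of_forall
          intro y
          have htτ₁ : ¬ t ≤ τ₁ := by push_neg; linarith
          simp only [huudef]
          rw [if_neg htτ₁, if_neg (not_lt.2 (le_of_lt h2))]
        have hdt2 : DifferentiableAt ℝ (fun s' => u₂ s' x) (T - t) :=
          by have := (hFC.differentiableAt one_ne_zero).comp (T - t)
                (differentiableAt_id.prodMk (differentiableAt_const x) : DifferentiableAt ℝ (fun s : ℝ => (s, x)) (T - t)); exact this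
        have hdt : DifferentiableAt ℝ (fun s => u₂ (T - s) x) t := by
          have := hdt2.comp t ((differentiableAt_const T).sub differentiableAt_id)
          exact this
        have hdx : DifferentiableAt ℝ (fun y => u₂ (T - t) y) x :=
          (hFC.differentiableAt one_ne_zero).comp x ((differentiableAt_const (T - t)).prodMk
            differentiableAt_id)
        rw [derivWithin_eq_of_nhds hevt hdt ((uniqueDiffOn_Icc h0T) t ht),
          derivWithin_eq_of_nhds hevx hdx ((uniqueDiffOn_Icc hab) x hx)]
        have hval : uu t x = u₂ (T - t) x := by
          simp only [huudef]
          rw [if_neg (by push_neg; linarith : ¬ t ≤ τ₁), if_neg (not_lt.2 (le_of_lt h2))]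
        rw [hval]
        have hPDE₂ := hu₂PDE (T - t) htB x
        rw [show deriv g₂ (u₂ (T - t) x) = -(deriv f (u₂ (T - t) x)) from
          congrFun hderivg₂ _] at hPDE₂
        have hrev : deriv (fun s => u₂ (T - s) x) t = -(deriv (fun s' => u₂ s' x) (T - t)) :=
          deriv_comp_const_sub (fun s' => u₂ s' x) T t
        rw [hrev]
        rw [show hh t = -σ₂ by
          simp only [hhhdef]
          rw [if_neg (by push_neg; linarith : ¬ t ≤ τ₁), if_neg (not_lt.2 (le_of_lt h2))]]
        linear_combination -hPDE₂
  · -- initial state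
    intro x hx
    simp only [huudef]
    rw [if_pos hτ₁0.le]
    exact hu₁0 x hx
  · -- final state
    intro x hx
    simp only [huudef]
    rw [if_neg (by push_neg; linarith : ¬ T ≤ τ₁), if_neg (not_lt.2 hrrT.le), sub_self]
    exact hu₂0 x hx
end

section
/- Let I ⊆ ℝ be an open interval containing 0, f : I → ℝ continuously differentiable, a < b, and T₁, T₂ > 0 with T := T₁ + T₂. For i = 1,2 let hᵢ ∈ C⁰([0,Tᵢ]) with hᵢ(Tᵢ) = 0, and let uᵢ ∈ C¹([0,Tᵢ]×[a,b]) be classical solutions of ∂ₜuᵢ + ∂ₓf(uᵢ) = hᵢ(t) on [0,Tᵢ]×[a,b] with uᵢ(Tᵢ,x) = 0 for all x ∈ [a,b]. Define u(t,x) := u₁(t,x) for t ∈ [0,T₁] and u(t,x) := u₂(T−t, a+b−x) for t ∈ [T₁,T], and h(t) := h₁(t) for t ∈ [0,T₁], h(t) := −h₂(T−t) for t ∈ [T₁,T]. Then h is continuous on [0,T], u is continuously differentiable on [0,T]×[a,b], u is a classical solution of ∂ₜu + ∂ₓf(u) = h(t) on [0,T]×[a,b], and u(0,x) = u₁(0,x),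 u(T,x) = u₂(0, a+b−x) for all x ∈ [a,b]. -/
open Set Filter MeasureTheory Topology

private lemma clm_eq_zero' {L : ℝ × ℝ →L[ℝ] ℝ} (h1 : L (1, 0) = 0) (h2 : L (0, 1) = 0) :
    L = 0 := by
  apply ContinuousLinearMap.ext
  intro v
  have hv : v = v.1 • ((1:ℝ), (0:ℝ)) + v.2 • ((0:ℝ), (1:ℝ)) := by ext <;> simp
  rw [hv, map_add, _root_.map_smul, _root_.map_smul, h1, h2]
  simp

private lemma hasDerivWithinAt_comp_line' {u : ℝ → ℝ → ℝ} {S : Set (ℝ × ℝ)}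
    {L : ℝ × ℝ →L[ℝ] ℝ} {g : ℝ → ℝ × ℝ} {g' : ℝ × ℝ} {st : Set ℝ} {t : ℝ}
    (hL : HasFDerivWithinAt (fun p : ℝ × ℝ => u p.1 p.2) L S (g t))
    (hg : HasDerivWithinAt g g' st t) (hmap : Set.MapsTo g st S) :
    HasDerivWithinAt (fun s => u (g s).1 (g s).2) (L g') st t := by
  simpa [Function.comp_def] using hL.comp_hasDerivWithinAt t hg hmap

/-- gluing a solution reaching the zero state with the reversal of a second
solution reaching the zero state produces a `C¹` classical solution on `[0, T₁+T₂]`. -/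
theorem statement11
    (I : Set ℝ) (hIopen : IsOpen I) (hIord : I.OrdConnected) (h0I : (0 : ℝ) ∈ I)
    (f : ℝ → ℝ) (hf : ContDiffOn ℝ 1 f I)
    (a b : ℝ) (hab : a < b)
    (T₁ T₂ : ℝ) (hT₁ : 0 < T₁) (hT₂ : 0 < T₂)
    (h₁ h₂ : ℝ → ℝ)
    (hh₁ : ContinuousOn h₁ (Set.Icc 0 T₁)) (hh₂ : ContinuousOn h₂ (Set.Icc 0 T₂))
    (hh₁T : h₁ T₁ = 0) (hh₂T : h₂ T₂ = 0)
    (u₁ u₂ : ℝ → ℝ → ℝ)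
    (hu₁ : IsClassicalSolution I f h₁ T₁ a b u₁)
    (hu₂ : IsClassicalSolution I f h₂ T₂ a b u₂)
    (hu₁T : ∀ x ∈ Set.Icc a b, u₁ T₁ x = 0)
    (hu₂T : ∀ x ∈ Set.Icc a b, u₂ T₂ x = 0) :
    ContinuousOn (fun t => if t ≤ T₁ then h₁ t else -h₂ (T₁ + T₂ - t)) (Set.Icc 0 (T₁ + T₂)) ∧
    IsClassicalSolution I f (fun t => if t ≤ T₁ then h₁ t else -h₂ (T₁ + T₂ - t)) (T₁ + T₂) a b
      (fun t x => if t ≤ T₁ then u₁ t x else u₂ (T₁ + T₂ - t) (a + b - x)) ∧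
    (∀ x ∈ Set.Icc a b,
      (fun t x => if t ≤ T₁ then u₁ t x else u₂ (T₁ + T₂ - t) (a + b - x)) 0 x = u₁ 0 x) ∧
    (∀ x ∈ Set.Icc a b,
      (fun t x => if t ≤ T₁ then u₁ t x else u₂ (T₁ + T₂ - t) (a + b - x)) (T₁ + T₂) x
        = u₂ 0 (a + b - x)) := by
  obtain ⟨hu₁C, hu₁I, hu₁E⟩ := hu₁
  obtain ⟨hu₂C, hu₂I, hu₂E⟩ := hu₂
  set T := T₁ + T₂ with hT
  have hT₁T : T₁ ≤ T := by rw [hT]; linarith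
  have h0T : (0:ℝ) < T := by rw [hT]; linarith
  have hT₁ltT : T₁ < T := by rw [hT]; linarith
  have hIccU : Set.Icc (0:ℝ) T = Set.Icc 0 T₁ ∪ Set.Icc T₁ T :=
    (Set.Icc_union_Icc_eq_Icc hT₁.le hT₁T).symm
  have hUD1 : UniqueDiffOn ℝ (Set.Icc (0:ℝ) T₁) := uniqueDiffOn_Icc hT₁
  have hUD2 : UniqueDiffOn ℝ (Set.Icc (0:ℝ) T₂) := uniqueDiffOn_Icc hT₂
  have hUDx : UniqueDiffOn ℝ (Set.Icc a b) := uniqueDiffOn_Icc hab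
  have hUDT : UniqueDiffOn ℝ (Set.Icc (0:ℝ) T) := uniqueDiffOn_Icc h0T
  have hUD2' : UniqueDiffOn ℝ (Set.Icc T₁ T) := uniqueDiffOn_Icc hT₁ltT
  set S : Set (ℝ×ℝ) := Set.Icc (0:ℝ) T ×ˢ Set.Icc a b with hS
  set S₁ : Set (ℝ×ℝ) := Set.Icc (0:ℝ) T₁ ×ˢ Set.Icc a b with hS₁
  set S₂ : Set (ℝ×ℝ) := Set.Icc (0:ℝ) T₂ ×ˢ Set.Icc a b with hS₂
  set S₂' : Set (ℝ×ℝ) := Set.Icc T₁ T ×ˢ Set.Icc a b with hS₂'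
  have hSU : S = S₁ ∪ S₂' := by rw [hS, hS₁, hS₂', hIccU, Set.union_prod]
  have hUDS : UniqueDiffOn ℝ S := hUDT.prod hUDx
  have hUDS₁ : UniqueDiffOn ℝ S₁ := hUD1.prod hUDx
  have hUDS₂ : UniqueDiffOn ℝ S₂ := hUD2.prod hUDx
  have hUDS₂' : UniqueDiffOn ℝ S₂' := hUD2'.prod hUDx
  have hmx : ∀ x ∈ Set.Icc a b, a + b - x ∈ Set.Icc a b := by
    intro x hx; exact ⟨by linarith [hx.2], by linarith [hx.1]⟩
  have hmr : ∀ t ∈ Set.Icc T₁ T, T - t ∈ Set.Icc (0:ℝ) T₂ := by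
    intro t ht; exact ⟨by linarith [ht.2], by rw [hT] at ht ⊢; linarith [ht.1]⟩
  set U : ℝ → ℝ → ℝ := fun t x => if t ≤ T₁ then u₁ t x else u₂ (T - t) (a + b - x) with hUdef
  set H : ℝ → ℝ := fun t => if t ≤ T₁ then h₁ t else -h₂ (T - t) with hHdef
  -- seam zero derivative for u₁ at (T₁, x)
  have hL₁0 : ∀ x ∈ Set.Icc a b, HasFDerivWithinAt (fun p : ℝ×ℝ => u₁ p.1 p.2)
      (0 : ℝ×ℝ →L[ℝ] ℝ) S₁ (T₁, x) := by
    intro x hx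
    have hmem : ((T₁:ℝ), x) ∈ S₁ := ⟨⟨hT₁.le, le_rfl⟩, hx⟩
    have hd := (hu₁C.differentiableOn one_ne_zero (T₁, x) hmem).hasFDerivWithinAt
    set L := fderivWithin ℝ (fun p : ℝ×ℝ => u₁ p.1 p.2) S₁ (T₁, x) with hLdef
    have hx0 : derivWithin (fun z => u₁ T₁ z) (Set.Icc a b) x = 0 := by
      rw [derivWithin_congr (fun z hz => hu₁T z hz) (hu₁T x hx)]
      simp
    have hpx : HasDerivWithinAt (fun z => u₁ T₁ z) (L (0, 1)) (Set.Icc a b) x := by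
      exact hasDerivWithinAt_comp_line' hd
        (HasDerivWithinAt.prodMk (hasDerivWithinAt_const x _ T₁) (hasDerivWithinAt_id x _))
        (fun z hz => ⟨⟨hT₁.le, le_rfl⟩, hz⟩)
    have hLx : L (0, 1) = 0 := by rw [← hpx.derivWithin (hUDx x hx)]; exact hx0
    have hpt : HasDerivWithinAt (fun s => u₁ s x) (L (1, 0)) (Set.Icc 0 T₁) T₁ := by
      exact hasDerivWithinAt_comp_line' (u := u₁) (g := fun s => (s, x)) hd
        (HasDerivWithinAt.prodMk (hasDerivWithinAt_id T₁ _) (hasDerivWithinAt_const T₁ _ x))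
        (fun s hs => ⟨hs, hx⟩)
    have hE := hu₁E T₁ ⟨hT₁.le, le_rfl⟩ x hx
    rw [hpt.derivWithin (hUD1 T₁ ⟨hT₁.le, le_rfl⟩), hx0, hh₁T, mul_zero, add_zero] at hE
    have : L = 0 := clm_eq_zero' hE hLx
    rw [← this]; exact hd
  -- seam zero derivative for u₂ at (T₂, y)
  have hL₂0 : ∀ y ∈ Set.Icc a b, HasFDerivWithinAt (fun p : ℝ×ℝ => u₂ p.1 p.2)
      (0 : ℝ×ℝ →L[ℝ] ℝ) S₂ (T₂, y) := by
    intro y hy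
    have hmem : ((T₂:ℝ), y) ∈ S₂ := ⟨⟨hT₂.le, le_rfl⟩, hy⟩
    have hd := (hu₂C.differentiableOn one_ne_zero (T₂, y) hmem).hasFDerivWithinAt
    set L := fderivWithin ℝ (fun p : ℝ×ℝ => u₂ p.1 p.2) S₂ (T₂, y) with hLdef
    have hy0 : derivWithin (fun z => u₂ T₂ z) (Set.Icc a b) y = 0 := by
      rw [derivWithin_congr (fun z hz => hu₂T z hz) (hu₂T y hy)]
      simp
    have hpx : HasDerivWithinAt (fun z => u₂ T₂ z) (L (0, 1)) (Set.Icc a b) y := by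
      exact hasDerivWithinAt_comp_line' hd
        (HasDerivWithinAt.prodMk (hasDerivWithinAt_const y _ T₂) (hasDerivWithinAt_id y _))
        (fun z hz => ⟨⟨hT₂.le, le_rfl⟩, hz⟩)
    have hLx : L (0, 1) = 0 := by rw [← hpx.derivWithin (hUDx y hy)]; exact hy0
    have hpt : HasDerivWithinAt (fun s => u₂ s y) (L (1, 0)) (Set.Icc 0 T₂) T₂ := by
      exact hasDerivWithinAt_comp_line' (u := u₂) (g := fun s => (s, y)) hd
        (HasDerivWithinAt.prodMk (hasDerivWithinAt_id T₂ _) (hasDerivWithinAt_const T₂ _ y))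
        (fun s hs => ⟨hs, hy⟩)
    have hE := hu₂E T₂ ⟨hT₂.le, le_rfl⟩ y hy
    rw [hpt.derivWithin (hUD2 T₂ ⟨hT₂.le, le_rfl⟩), hy0, hh₂T, mul_zero, add_zero] at hE
    have : L = 0 := clm_eq_zero' hE hLx
    rw [← this]; exact hd
  -- the reversed second solution is C¹ on S₂'
  have hσmaps : Set.MapsTo (fun p : ℝ×ℝ => ((T - p.1 : ℝ), (a + b - p.2 : ℝ))) S₂' S₂ := by
    rintro ⟨t, x⟩ ⟨ht, hx⟩; exact ⟨hmr t ht, hmx x hx⟩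
  have hvC : ContDiffOn ℝ 1 (fun p : ℝ×ℝ => u₂ (T - p.1) (a + b - p.2)) S₂' := by
    have hσ : ContDiff ℝ 1 (fun p : ℝ×ℝ => ((T - p.1 : ℝ), (a + b - p.2 : ℝ))) :=
      ContDiff.prodMk (contDiff_const.sub contDiff_fst) (contDiff_const.sub contDiff_snd)
    exact hu₂C.comp hσ.contDiffOn hσmaps
  -- seam zero derivative for the reversed second solution
  have hv₂0 : ∀ x ∈ Set.Icc a b, HasFDerivWithinAt (fun p : ℝ×ℝ => u₂ (T - p.1) (a + b - p.2))
      (0 : ℝ×ℝ →L[ℝ] ℝ) S₂' (T₁, x) := by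
    intro x hx
    have hσd : HasFDerivWithinAt (fun p : ℝ×ℝ => ((T - p.1 : ℝ), (a + b - p.2 : ℝ)))
        (((-(ContinuousLinearMap.fst ℝ ℝ ℝ)).prod (-(ContinuousLinearMap.snd ℝ ℝ ℝ)))) S₂' (T₁, x) := by
      exact (HasFDerivAt.prodMk (HasFDerivAt.const_sub hasFDerivAt_fst T) (HasFDerivAt.const_sub hasFDerivAt_snd (a+b))).hasFDerivWithinAt
    have h20 := hL₂0 (a + b - x) (hmx x hx)
    rw [show (T₂ : ℝ) = T - T₁ by rw [hT]; ring] at h20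
    have hcomp := h20.comp (T₁, x) hσd hσmaps
    simpa [Function.comp_def] using hcomp
  -- U agrees with the pieces
  have hUeq₁ : ∀ p ∈ S₁, U p.1 p.2 = u₁ p.1 p.2 := fun p hp => if_pos hp.1.2
  have hUeq₂ : ∀ p ∈ S₂', U p.1 p.2 = u₂ (T - p.1) (a + b - p.2) := by
    rintro ⟨t, x⟩ ⟨⟨ht1, ht2⟩, hx⟩
    by_cases h : t ≤ T₁
    · have hteq : t = T₁ := le_antisymm h ht1
      subst hteq
      simp only [hUdef, if_pos le_rfl]
      rw [hu₁T x hx, show T - t = T₂ by rw [hT]; ring, hu₂T _ (hmx x hx)]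
    · simp only [hUdef, if_neg h]
  -- seam zero derivative for U
  have hUseam : ∀ x ∈ Set.Icc a b,
      HasFDerivWithinAt (fun p : ℝ×ℝ => U p.1 p.2) (0 : ℝ×ℝ →L[ℝ] ℝ) S (T₁, x) := by
    intro x hx
    have hmem₁ : ((T₁:ℝ), x) ∈ S₁ := ⟨⟨hT₁.le, le_rfl⟩, hx⟩
    have h1 : HasFDerivWithinAt (fun p : ℝ×ℝ => U p.1 p.2) 0 S₁ (T₁, x) :=
      (hL₁0 x hx).congr (fun p hp => hUeq₁ p hp) (hUeq₁ _ hmem₁)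
    have h2 : HasFDerivWithinAt (fun p : ℝ×ℝ => U p.1 p.2) 0 S₂' (T₁, x) :=
      (hv₂0 x hx).congr (fun p hp => hUeq₂ p hp) (hUeq₂ _ ⟨⟨le_rfl, hT₁T⟩, hx⟩)
    rw [hSU]; exact h1.union h2
  -- eventual set equalities
  have hSevl : ∀ p : ℝ×ℝ, p.1 < T₁ → S =ᶠ[𝓝 p] S₁ := by
    intro p hp
    apply Filter.eventuallyEq_set.2
    filter_upwards [(isOpen_lt continuous_fst continuous_const).mem_nhds hp] with q hq
    simp only [hS, hS₁, Set.mem_prod, Set.mem_Icc]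
    constructor
    · rintro ⟨⟨h1, _⟩, h3⟩; exact ⟨⟨h1, le_of_lt hq⟩, h3⟩
    · rintro ⟨⟨h1, h2⟩, h3⟩; exact ⟨⟨h1, le_trans h2 hT₁T⟩, h3⟩
  have hSevr : ∀ p : ℝ×ℝ, T₁ < p.1 → S =ᶠ[𝓝 p] S₂' := by
    intro p hp
    apply Filter.eventuallyEq_set.2
    filter_upwards [(isOpen_lt continuous_const continuous_fst).mem_nhds hp] with q hq
    simp only [hS, hS₂', Set.mem_prod, Set.mem_Icc]
    constructor
    · rintro ⟨⟨_, h2⟩, h3⟩; exact ⟨⟨le_of_lt hq, h2⟩, h3⟩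
    · rintro ⟨⟨h1, h2⟩, h3⟩; exact ⟨⟨le_trans hT₁.le h1, h2⟩, h3⟩
  -- eventual function equalities
  have hUevl : ∀ p : ℝ×ℝ, p.1 < T₁ →
      (fun q : ℝ×ℝ => U q.1 q.2) =ᶠ[𝓝 p] (fun q : ℝ×ℝ => u₁ q.1 q.2) := by
    intro p hp
    filter_upwards [(isOpen_lt continuous_fst continuous_const).mem_nhds hp] with q hq
    simp only [hUdef]
    rw [if_pos (le_of_lt hq)]
  have hUevr : ∀ p : ℝ×ℝ, T₁ < p.1 →
      (fun q : ℝ×ℝ => U q.1 q.2) =ᶠ[𝓝 p] (fun q : ℝ×ℝ => u₂ (T - q.1) (a + b - q.2)) := by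
    intro p hp
    filter_upwards [(isOpen_lt continuous_const continuous_fst).mem_nhds hp] with q hq
    simp only [hUdef]
    rw [if_neg (not_le.2 hq)]
  -- differentiability of U
  have hUdiff : DifferentiableOn ℝ (fun p : ℝ×ℝ => U p.1 p.2) S := by
    rintro ⟨t, x⟩ hp
    rcases lt_trichotomy t T₁ with h | h | h
    · have h1 : DifferentiableWithinAt ℝ (fun q : ℝ×ℝ => u₁ q.1 q.2) S₁ (t, x) :=
        hu₁C.differentiableOn one_ne_zero (t, x) ⟨⟨hp.1.1, h.le⟩, hp.2⟩
      have h2 : DifferentiableWithinAt ℝ (fun q : ℝ×ℝ => u₁ q.1 q.2) S (t, x) :=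
        (differentiableWithinAt_congr_set (hSevl (t, x) h)).2 h1
      exact h2.congr_of_eventuallyEq ((hUevl (t, x) h).filter_mono nhdsWithin_le_nhds)
        (hUeq₁ (t, x) ⟨⟨hp.1.1, h.le⟩, hp.2⟩)
    · subst h
      exact (hUseam x hp.2).differentiableWithinAt
    · have h1 : DifferentiableWithinAt ℝ (fun q : ℝ×ℝ => u₂ (T - q.1) (a + b - q.2)) S₂' (t, x) :=
        hvC.differentiableOn one_ne_zero (t, x) ⟨⟨h.le, hp.1.2⟩, hp.2⟩
      have h2 : DifferentiableWithinAt ℝ (fun q : ℝ×ℝ => u₂ (T - q.1) (a + b - q.2)) S (t, x) :=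
        (differentiableWithinAt_congr_set (hSevr (t, x) h)).2 h1
      exact h2.congr_of_eventuallyEq ((hUevr (t, x) h).filter_mono nhdsWithin_le_nhds)
        (hUeq₂ (t, x) ⟨⟨h.le, hp.1.2⟩, hp.2⟩)
  -- identification of the derivative of U on the pieces
  have hF₁ : ∀ p ∈ S₁, fderivWithin ℝ (fun q : ℝ×ℝ => U q.1 q.2) S p
      = fderivWithin ℝ (fun q : ℝ×ℝ => u₁ q.1 q.2) S₁ p := by
    rintro ⟨t, x⟩ hp
    rcases eq_or_lt_of_le hp.1.2 with h | h
    · subst h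
      rw [(hUseam x hp.2).fderivWithin (hUDS _ (by rw [hSU]; exact Or.inl hp)),
        (hL₁0 x hp.2).fderivWithin (hUDS₁ _ hp)]
    · have e1 : fderivWithin ℝ (fun q : ℝ×ℝ => U q.1 q.2) S (t, x)
          = fderivWithin ℝ (fun q : ℝ×ℝ => u₁ q.1 q.2) S (t, x) :=
        Filter.EventuallyEq.fderivWithin_eq
          ((hUevl (t, x) h).filter_mono nhdsWithin_le_nhds) (hUeq₁ (t, x) hp)
      rw [e1, fderivWithin_congr_set (hSevl (t, x) h)]
  have hF₂ : ∀ p ∈ S₂', fderivWithin ℝ (fun q : ℝ×ℝ => U q.1 q.2) S p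
      = fderivWithin ℝ (fun q : ℝ×ℝ => u₂ (T - q.1) (a + b - q.2)) S₂' p := by
    rintro ⟨t, x⟩ hp
    rcases eq_or_lt_of_le hp.1.1 with h | h
    · have ht : t = T₁ := h.symm
      subst ht
      rw [(hUseam x hp.2).fderivWithin (hUDS _ (by rw [hSU]; exact Or.inr hp)),
        (hv₂0 x hp.2).fderivWithin (hUDS₂' _ hp)]
    · have e1 : fderivWithin ℝ (fun q : ℝ×ℝ => U q.1 q.2) S (t, x)
          = fderivWithin ℝ (fun q : ℝ×ℝ => u₂ (T - q.1) (a + b - q.2)) S (t, x) :=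
        Filter.EventuallyEq.fderivWithin_eq
          ((hUevr (t, x) h).filter_mono nhdsWithin_le_nhds) (hUeq₂ (t, x) hp)
      rw [e1, fderivWithin_congr_set (hSevr (t, x) h)]
  -- continuity of the derivative
  have hFcont : ContinuousOn (fderivWithin ℝ (fun q : ℝ×ℝ => U q.1 q.2) S) S := by
    have hG₁ : ContinuousOn (fderivWithin ℝ (fun q : ℝ×ℝ => U q.1 q.2) S) S₁ :=
      (hu₁C.continuousOn_fderivWithin hUDS₁ le_rfl).congr hF₁
    have hG₂ : ContinuousOn (fderivWithin ℝ (fun q : ℝ×ℝ => U q.1 q.2) S) S₂' :=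
      (hvC.continuousOn_fderivWithin hUDS₂' le_rfl).congr hF₂
    suffices hsuf : ContinuousOn (fderivWithin ℝ (fun q : ℝ×ℝ => U q.1 q.2) S) (S₁ ∪ S₂') by
      rwa [← hSU] at hsuf
    intro p hp
    apply ContinuousWithinAt.union
    · by_cases h : p ∈ S₁
      · exact hG₁ p h
      · refine continuousWithinAt_of_notMem_closure ?_
        rwa [IsClosed.closure_eq (by rw [hS₁]; exact isClosed_Icc.prod isClosed_Icc)]
    · by_cases h : p ∈ S₂'
      · exact hG₂ p h
      · refine continuousWithinAt_of_notMem_closure ?_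
        rwa [IsClosed.closure_eq (by rw [hS₂']; exact isClosed_Icc.prod isClosed_Icc)]
  -- U is C¹
  have hUC : ContDiffOn ℝ 1 (fun q : ℝ×ℝ => U q.1 q.2) S := by
    rw [show (1 : WithTop ℕ∞) = 0 + 1 by norm_num, contDiffOn_succ_iff_fderivWithin hUDS]
    exact ⟨hUdiff, by simp, contDiffOn_zero.2 hFcont⟩
  -- 1-d eventual set equalities
  have htevl : ∀ t : ℝ, t < T₁ → Set.Icc (0:ℝ) T =ᶠ[𝓝 t] Set.Icc 0 T₁ := by
    intro t ht
    apply Filter.eventuallyEq_set.2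
    filter_upwards [Iio_mem_nhds ht] with s hs
    simp only [Set.mem_Icc]
    constructor
    · rintro ⟨h1, _⟩; exact ⟨h1, le_of_lt hs⟩
    · rintro ⟨h1, h2⟩; exact ⟨h1, le_trans h2 hT₁T⟩
  have htevr : ∀ t : ℝ, T₁ < t → Set.Icc (0:ℝ) T =ᶠ[𝓝 t] Set.Icc T₁ T := by
    intro t ht
    apply Filter.eventuallyEq_set.2
    filter_upwards [Ioi_mem_nhds ht] with s hs
    simp only [Set.mem_Icc]
    constructor
    · rintro ⟨_, h2⟩; exact ⟨le_of_lt hs, h2⟩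
    · rintro ⟨h1, h2⟩; exact ⟨le_trans hT₁.le h1, h2⟩
  -- values in I
  have hUI : ∀ t ∈ Set.Icc (0:ℝ) T, ∀ x ∈ Set.Icc a b, U t x ∈ I := by
    intro t ht x hx
    by_cases h : t ≤ T₁
    · rw [show U t x = u₁ t x from if_pos h]
      exact hu₁I t ⟨ht.1, h⟩ x hx
    · rw [show U t x = u₂ (T - t) (a + b - x) from if_neg h]
      exact hu₂I _ (hmr t ⟨(not_le.1 h).le, ht.2⟩) _ (hmx x hx)
  -- the PDE
  have hPDE : ∀ t ∈ Set.Icc (0:ℝ) T, ∀ x ∈ Set.Icc a b,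
      derivWithin (fun s => U s x) (Set.Icc 0 T) t
        + deriv f (U t x) * derivWithin (fun y => U t y) (Set.Icc a b) x = H t := by
    intro t ht x hx
    rcases lt_trichotomy t T₁ with h | h | h
    · have ht1 : t ∈ Set.Icc (0:ℝ) T₁ := ⟨ht.1, h.le⟩
      have e1 : derivWithin (fun s => U s x) (Set.Icc 0 T) t
          = derivWithin (fun s => u₁ s x) (Set.Icc 0 T₁) t := by
        rw [derivWithin_congr_set (htevl t h)]
        exact derivWithin_congr (fun s hs => if_pos hs.2) (if_pos h.le)
      have e2 : derivWithin (fun y => U t y) (Set.Icc a b) x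
          = derivWithin (fun y => u₁ t y) (Set.Icc a b) x :=
        derivWithin_congr (fun y _ => if_pos h.le) (if_pos h.le)
      have hUtx : U t x = u₁ t x := if_pos h.le
      have hHt : H t = h₁ t := if_pos h.le
      rw [e1, e2, hUtx, hHt]
      exact hu₁E t ht1 x hx
    · subst h
      have e2 : derivWithin (fun y => U t y) (Set.Icc a b) x = 0 := by
        have heq : Set.EqOn (fun y => U t y) (fun _ => (0:ℝ)) (Set.Icc a b) := by
          intro y hy
          show U t y = 0
          rw [show U t y = u₁ t y from if_pos le_rfl, hu₁T y hy]
        rw [derivWithin_congr heq (heq hx)]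
        simp
      have e1 : derivWithin (fun s => U s x) (Set.Icc 0 T) t = 0 := by
        have hder := hasDerivWithinAt_comp_line' (u := U) (g := fun s => (s, x)) (hUseam x hx)
          (HasDerivWithinAt.prodMk (hasDerivWithinAt_id t _) (hasDerivWithinAt_const t _ x))
          (fun s hs => ⟨hs, hx⟩)
        simpa using hder.derivWithin (hUDT t ⟨hT₁.le, hT₁T⟩)
      rw [e1, e2, mul_zero, add_zero, show H t = h₁ t from if_pos le_rfl, hh₁T]
    · have htr : t ∈ Set.Icc T₁ T := ⟨h.le, ht.2⟩
      have hrT : T - t ∈ Set.Icc (0:ℝ) T₂ := hmr t htr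
      have hy : a + b - x ∈ Set.Icc a b := hmx x hx
      have hmem₂ : ((T - t : ℝ), a + b - x) ∈ S₂ := ⟨hrT, hy⟩
      have hd := (hu₂C.differentiableOn one_ne_zero _ hmem₂).hasFDerivWithinAt
      set L := fderivWithin ℝ (fun p : ℝ×ℝ => u₂ p.1 p.2) S₂ (T - t, a + b - x) with hLdef
      have hgt : HasDerivWithinAt (fun s : ℝ => ((T - s : ℝ), (a + b - x : ℝ)))
          ((-1 : ℝ), (0:ℝ)) (Set.Icc T₁ T) t := by
        apply HasDerivWithinAt.prodMk
        · simpa using ((hasDerivWithinAt_id t (Set.Icc T₁ T)).const_sub T)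
        · exact hasDerivWithinAt_const _ _ _
      have hcomp := hasDerivWithinAt_comp_line' (u := u₂) (g := fun s => ((T - s : ℝ), (a + b - x : ℝ))) hd hgt
        (fun s hs => ⟨hmr s hs, hy⟩)
      have eU1 : derivWithin (fun s => U s x) (Set.Icc 0 T) t = L (-1, 0) := by
        rw [derivWithin_congr_set (htevr t h),
          derivWithin_congr (fun s hs => hUeq₂ (s, x) ⟨hs, hx⟩) (hUeq₂ (t, x) ⟨htr, hx⟩)]
        exact hcomp.derivWithin (hUD2' t htr)
      have hgx : HasDerivWithinAt (fun z : ℝ => ((T - t : ℝ), (a + b - z : ℝ)))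
          ((0:ℝ), (-1:ℝ)) (Set.Icc a b) x := by
        apply HasDerivWithinAt.prodMk
        · exact hasDerivWithinAt_const _ _ _
        · simpa using ((hasDerivWithinAt_id x (Set.Icc a b)).const_sub (a + b))
      have hcompx := hasDerivWithinAt_comp_line' (u := u₂) (g := fun z => ((T - t : ℝ), (a + b - z : ℝ))) hd hgx
        (fun z hz => ⟨hrT, hmx z hz⟩)
      have eU2 : derivWithin (fun z => U t z) (Set.Icc a b) x = L (0, -1) := by
        rw [derivWithin_congr (fun z hz => hUeq₂ (t, z) ⟨htr, hz⟩) (hUeq₂ (t, x) ⟨htr, hx⟩)]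
        exact hcompx.derivWithin (hUDx x hx)
      have hpt₂ : HasDerivWithinAt (fun s => u₂ s (a + b - x)) (L (1, 0))
          (Set.Icc 0 T₂) (T - t) :=
        hasDerivWithinAt_comp_line' (u := u₂) (g := fun s => (s, a + b - x)) hd
          (HasDerivWithinAt.prodMk (hasDerivWithinAt_id _ _) (hasDerivWithinAt_const _ _ _))
          (fun s hs => ⟨hs, hy⟩)
      have hpx₂ : HasDerivWithinAt (fun z => u₂ (T - t) z) (L (0, 1))
          (Set.Icc a b) (a + b - x) :=
        hasDerivWithinAt_comp_line' hd
          (HasDerivWithinAt.prodMk (hasDerivWithinAt_const _ _ _) (hasDerivWithinAt_id _ _))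
          (fun z hz => ⟨hrT, hz⟩)
      have hE := hu₂E (T - t) hrT (a + b - x) hy
      rw [hpt₂.derivWithin (hUD2 _ hrT), hpx₂.derivWithin (hUDx _ hy)] at hE
      have hUtx : U t x = u₂ (T - t) (a + b - x) := if_neg (not_le.2 h)
      have hHt : H t = -h₂ (T - t) := if_neg (not_le.2 h)
      have l1 : L (-1, 0) = -L (1, 0) := by
        rw [show ((-1 : ℝ), (0:ℝ)) = -((1:ℝ), (0:ℝ)) by ext <;> norm_num, map_neg]
      have l2 : L (0, -1) = -L (0, 1) := by
        rw [show ((0:ℝ), (-1 : ℝ)) = -((0:ℝ), (1:ℝ)) by ext <;> norm_num, map_neg]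
      rw [eU1, eU2, hUtx, hHt, l1, l2]
      linear_combination -hE
  -- continuity of H
  have hHcont : ContinuousOn H (Set.Icc (0:ℝ) T) := by
    have hH1 : ContinuousOn H (Set.Icc 0 T₁) := hh₁.congr (fun t ht => if_pos ht.2)
    have hH2 : ContinuousOn H (Set.Icc T₁ T) := by
      have hc : ContinuousOn (fun t => -h₂ (T - t)) (Set.Icc T₁ T) :=
        ((hh₂.comp ((continuous_const.sub continuous_id).continuousOn) hmr).neg)
      apply hc.congr
      intro t ht
      by_cases hle : t ≤ T₁
      · have hteq : t = T₁ := le_antisymm hle ht.1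
        subst hteq
        show H t = -h₂ (T - t)
        rw [show H t = h₁ t from if_pos le_rfl, hh₁T,
          show T - t = T₂ by rw [hT]; ring, hh₂T, neg_zero]
      · exact if_neg hle
    rw [hIccU]
    intro t htm
    apply ContinuousWithinAt.union
    · by_cases hmem : t ∈ Set.Icc (0:ℝ) T₁
      · exact hH1 t hmem
      · exact continuousWithinAt_of_notMem_closure (by rwa [isClosed_Icc.closure_eq])
    · by_cases hmem : t ∈ Set.Icc T₁ T
      · exact hH2 t hmem
      · exact continuousWithinAt_of_notMem_closure (by rwa [isClosed_Icc.closure_eq])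
  refine ⟨hHcont, ⟨hUC, hUI, hPDE⟩, ?_, ?_⟩
  · intro x hx
    exact if_pos hT₁.le
  · intro x hx
    show U T x = u₂ 0 (a + b - x)
    rw [show U T x = u₂ (T - T) (a + b - x) from if_neg (by rw [hT]; intro hc; linarith),
      sub_self]
end

section
/- Let I ⊆ ℝ be an open interval, a < b, M > 0, and let φ ∈ BV([a,b]) with Im(φ) ⊊ I satisfy D⁺φ(x) < M for all x ∈ [a,b]. Then there exists a sequence (φₙ)_{n≥1} ⊂ C¹([a,b]) such that Im(φₙ) ⊆ I for all sufficiently large n, φₙ'(x) < M for all x ∈ [a,b] and all n ≥ 1, and φₙ → φ in L¹([a,b]). -/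
open Set Filter MeasureTheory Topology
open intervalIntegral

/-- Sliding average of `f` over `[x-h, x]`. -/
noncomputable def mavg (h : ℝ) (f : ℝ → ℝ) (x : ℝ) : ℝ :=
  h⁻¹ * ∫ t in (x - h)..x, f t

lemma mavg_eq_primitive {h : ℝ} {f : ℝ → ℝ}
    (hf : ∀ p q : ℝ, IntervalIntegrable f volume p q) (x : ℝ) :
    mavg h f x = h⁻¹ * ((∫ t in (0:ℝ)..x, f t) - ∫ t in (0:ℝ)..(x - h), f t) := by
  rw [integral_interval_sub_left (hf 0 x) (hf 0 (x - h))]; rfl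

lemma mavg_continuous {h : ℝ} {f : ℝ → ℝ}
    (hf : ∀ p q : ℝ, IntervalIntegrable f volume p q) :
    Continuous (mavg h f) := by
  have hP : Continuous (fun x : ℝ => ∫ t in (0:ℝ)..x, f t) := continuous_primitive hf 0
  have h2 : Continuous (fun x : ℝ =>
      h⁻¹ * ((∫ t in (0:ℝ)..x, f t) - ∫ t in (0:ℝ)..(x - h), f t)) :=
    continuous_const.mul (hP.sub (hP.comp (continuous_id.sub continuous_const)))
  exact h2.congr fun x => (mavg_eq_primitive hf x).symm

lemma mavg_hasDerivAt {h : ℝ} {f : ℝ → ℝ}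
    (hf : ∀ p q : ℝ, IntervalIntegrable f volume p q) (hc : Continuous f) (x : ℝ) :
    HasDerivAt (mavg h f) (h⁻¹ * (f x - f (x - h))) x := by
  have hP : ∀ y : ℝ, HasDerivAt (fun z : ℝ => ∫ t in (0:ℝ)..z, f t) (f y) y := fun y =>
    integral_hasDerivAt_right (hf 0 y) (hc.stronglyMeasurableAtFilter _ _) hc.continuousAt
  have h1 : HasDerivAt (fun z : ℝ => ∫ t in (0:ℝ)..(z - h), f t) (f (x - h)) x := by
    have := HasDerivAt.comp x (hP (x - h)) ((hasDerivAt_id x).sub_const h)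
    simpa [Function.comp_def] using this
  have h2 := ((hP x).sub h1).const_mul (h⁻¹)
  exact h2.congr_of_eventuallyEq (Filter.Eventually.of_forall fun y => mavg_eq_primitive hf y)

lemma mavg_le {h : ℝ} (hh : 0 < h) {f : ℝ → ℝ}
    (hf : ∀ p q : ℝ, IntervalIntegrable f volume p q) {s x : ℝ}
    (hs : ∀ t ∈ Icc (x - h) x, f t ≤ s) : mavg h f x ≤ s := by
  have hx : x - h ≤ x := by linarith
  have h1 : (∫ t in (x - h)..x, f t) ≤ ∫ t in (x - h)..x, s :=
    integral_mono_on hx (hf _ _) intervalIntegrable_const hs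
  rw [intervalIntegral.integral_const, smul_eq_mul] at h1
  have h2 : h⁻¹ * ∫ t in (x - h)..x, f t ≤ h⁻¹ * ((x - (x - h)) * s) :=
    mul_le_mul_of_nonneg_left h1 (by positivity)
  have h3 : h⁻¹ * ((x - (x - h)) * s) = s := by field_simp; ring
  rw [mavg]; linarith

lemma mavg_ge {h : ℝ} (hh : 0 < h) {f : ℝ → ℝ}
    (hf : ∀ p q : ℝ, IntervalIntegrable f volume p q) {s x : ℝ}
    (hs : ∀ t ∈ Icc (x - h) x, s ≤ f t) : s ≤ mavg h f x := by
  have hx : x - h ≤ x := by linarith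
  have h1 : (∫ t in (x - h)..x, s) ≤ ∫ t in (x - h)..x, f t :=
    integral_mono_on hx intervalIntegrable_const (hf _ _) hs
  rw [intervalIntegral.integral_const, smul_eq_mul] at h1
  have h2 : h⁻¹ * ((x - (x - h)) * s) ≤ h⁻¹ * ∫ t in (x - h)..x, f t :=
    mul_le_mul_of_nonneg_left h1 (by positivity)
  have h3 : h⁻¹ * ((x - (x - h)) * s) = s := by field_simp; ring
  rw [mavg]; linarith

lemma mavg_mono {h : ℝ} (hh : 0 < h) {g : ℝ → ℝ} (hm : Monotone g) :
    Monotone (mavg h g) := by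
  have hg : ∀ p q : ℝ, IntervalIntegrable g volume p q := fun p q => hm.intervalIntegrable
  intro x y hxy
  have hcomp : (∫ t in (x - h)..x, g (t + (y - x))) = ∫ t in (y - h)..y, g t := by
    rw [integral_comp_add_right g (y - x)]
    congr 1 <;> ring
  have key : (∫ t in (x - h)..x, g t) ≤ ∫ t in (x - h)..x, g (t + (y - x)) := by
    apply integral_mono_on (by linarith) (hg _ _)
    · have := (hg (x - h + (y - x)) (x + (y - x))).comp_add_right (y - x)
      simpa using this
    · exact fun t _ => hm (by linarith)
  rw [hcomp] at key
  exact mul_le_mul_of_nonneg_left key (by positivity)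

lemma mavg_le_self {h : ℝ} (hh : 0 < h) {g : ℝ → ℝ} (hm : Monotone g) (x : ℝ) :
    mavg h g x ≤ g x :=
  mavg_le hh (fun p q => hm.intervalIntegrable) fun t ht => hm ht.2

lemma self_shift_le_mavg {h : ℝ} (hh : 0 < h) {g : ℝ → ℝ} (hm : Monotone g) (x : ℝ) :
    g (x - h) ≤ mavg h g x :=
  mavg_ge hh (fun p q => hm.intervalIntegrable) fun t ht => hm ht.1

lemma mavg_sub_shift {h : ℝ} {f : ℝ → ℝ}
    (hf : ∀ p q : ℝ, IntervalIntegrable f volume p q) (x : ℝ) :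
    mavg h f x - mavg h f (x - h) = h⁻¹ * ∫ t in (x - h)..x, (f t - f (t - h)) := by
  have hint : IntervalIntegrable (fun t => f (t - h)) volume (x - h) x := by
    have := (hf (x - h - h) (x - h)).comp_sub_right h
    simpa [sub_add_cancel] using this
  rw [integral_sub (hf _ _) hint, integral_comp_sub_right f h, mavg, mavg]
  ring

lemma mavg_linear_sub {h : ℝ} (hh : 0 < h) {g : ℝ → ℝ}
    (hg : ∀ p q : ℝ, IntervalIntegrable g volume p q) (M x : ℝ) :
    mavg h (fun t => M * t - g t) x = M * x - M * h / 2 - mavg h g x := by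
  rw [mavg, integral_sub ((continuous_mul_left M).intervalIntegrable _ _) (hg _ _)]
  have h1 : (∫ t in (x - h)..x, M * t) = M * (x ^ 2 - (x - h) ^ 2) / 2 := by
    rw [intervalIntegral.integral_const_mul, integral_id]; ring
  rw [h1, mavg]
  have hne : h ≠ 0 := ne_of_gt hh
  field_simp
  ring

lemma mavg_const_add {h : ℝ} (hh : 0 < h) {g : ℝ → ℝ}
    (hg : ∀ p q : ℝ, IntervalIntegrable g volume p q) (c x : ℝ) :
    mavg h (fun t => c + g t) x = c + mavg h g x := by
  rw [mavg, integral_add intervalIntegrable_const (hg _ _), intervalIntegral.integral_const, smul_eq_mul, mavg]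
  have hne : h ≠ 0 := ne_of_gt hh
  field_simp
  ring

lemma avg_loss {h : ℝ} (hh : 0 < h) (hh1 : h ≤ 1) {a b : ℝ} (hab : a ≤ b)
    {g : ℝ → ℝ} (hm : Monotone g) :
    (∫ x in a..b, (g x - mavg h g x)) ≤ h * (g b - g (a - 2)) := by
  have hg : ∀ p q : ℝ, IntervalIntegrable g volume p q := fun p q => hm.intervalIntegrable
  have hcont : Continuous (mavg h g) := mavg_continuous hg
  have hshiftint : IntervalIntegrable (fun t => g (t - h)) volume a b := by
    have := (hg (a - h) (b - h)).comp_sub_right h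
    simpa [sub_add_cancel] using this
  have step1 : (∫ x in a..b, (g x - mavg h g x)) ≤ ∫ x in a..b, (g x - g (x - h)) := by
    apply integral_mono_on hab ((hg a b).sub (hcont.intervalIntegrable a b))
      ((hg a b).sub hshiftint)
    exact fun x _ => by linarith [self_shift_le_mavg hh hm x]
  have split : (∫ x in a..b, (g x - g (x - h)))
      = (∫ x in (b - h)..b, g x) - ∫ x in (a - h)..a, g x := by
    rw [integral_sub (hg a b) hshiftint, integral_comp_sub_right g h]
    have c1 : (∫ x in (a - h)..(b - h), g x) + (∫ x in (b - h)..b, g x)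
        = ∫ x in (a - h)..b, g x := integral_add_adjacent_intervals (hg _ _) (hg _ _)
    have c2 : (∫ x in (a - h)..a, g x) + (∫ x in a..b, g x)
        = ∫ x in (a - h)..b, g x := integral_add_adjacent_intervals (hg _ _) (hg _ _)
    linarith
  have up : (∫ x in (b - h)..b, g x) ≤ h * g b := by
    have h1 : (∫ x in (b - h)..b, g x) ≤ ∫ x in (b - h)..b, g b :=
      integral_mono_on (by linarith) (hg _ _) intervalIntegrable_const (fun t ht => hm ht.2)
    rw [intervalIntegral.integral_const, smul_eq_mul] at h1
    have : (b - (b - h)) * g b = h * g b := by ring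
    linarith
  have low : h * g (a - 2) ≤ ∫ x in (a - h)..a, g x := by
    have h1 : (∫ x in (a - h)..a, g (a - 2)) ≤ ∫ x in (a - h)..a, g x :=
      integral_mono_on (by linarith) intervalIntegrable_const (hg _ _)
        (fun t ht => hm (by linarith [ht.1]))
    rw [intervalIntegral.integral_const, smul_eq_mul] at h1
    have : (a - (a - h)) * g (a - 2) = h * g (a - 2) := by ring
    linarith
  linarith

lemma double_avg_loss {h : ℝ} (hh : 0 < h) (hh1 : h ≤ 1) {a b : ℝ} (hab : a ≤ b)
    {g : ℝ → ℝ} (hm : Monotone g) :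
    (∫ x in a..b, (g x - mavg h (mavg h g) x)) ≤ 2 * h * (g b - g (a - 3)) := by
  have hg : ∀ p q : ℝ, IntervalIntegrable g volume p q := fun p q => hm.intervalIntegrable
  have hm2 : Monotone (mavg h g) := mavg_mono hh hm
  have hg2 : ∀ p q : ℝ, IntervalIntegrable (mavg h g) volume p q :=
    fun p q => (mavg_continuous hg).intervalIntegrable p q
  have hcont2 : Continuous (mavg h (mavg h g)) := mavg_continuous hg2
  have e1 : (∫ x in a..b, (g x - mavg h g x)) ≤ h * (g b - g (a - 2)) := avg_loss hh hh1 hab hm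
  have e2 : (∫ x in a..b, (mavg h g x - mavg h (mavg h g) x))
      ≤ h * (mavg h g b - mavg h g (a - 2)) := avg_loss hh hh1 hab hm2
  have e3 : mavg h g b ≤ g b := mavg_le_self hh hm b
  have e4 : g (a - 3) ≤ mavg h g (a - 2) := by
    have := self_shift_le_mavg hh hm (a - 2)
    have h5 : g (a - 3) ≤ g (a - 2 - h) := hm (by linarith)
    linarith
  have esum : (∫ x in a..b, (g x - mavg h (mavg h g) x))
      = (∫ x in a..b, (g x - mavg h g x)) + ∫ x in a..b, (mavg h g x - mavg h (mavg h g) x) := by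
    rw [← integral_add ((hg a b).sub ((mavg_continuous hg).intervalIntegrable a b))
      (((mavg_continuous hg).intervalIntegrable a b).sub (hcont2.intervalIntegrable a b))]
    congr 1
    funext x
    ring
  have hgb2 : g (a - 2) ≥ g (a - 3) := hm (by linarith)
  nlinarith [hh]

lemma chain_aux {a b M : ℝ} {φ : ℝ → ℝ}
    (key : ∀ c ∈ Icc a b, ∃ δ > 0, ∀ k : ℝ, k ≠ 0 → |k| < δ → c + k ∈ Icc a b →
      (φ (c + k) - φ c) / k < M)
    {x y : ℝ} (hx : x ∈ Icc a b) (hy : y ∈ Icc a b) (hxy : x < y) :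
    φ y - φ x < M * (y - x) := by
  set S : Set ℝ := {z | z ∈ Icc x y ∧ (z = x ∨ φ z - φ x < M * (z - x))} with hS
  have hxS : x ∈ S := ⟨⟨le_refl x, hxy.le⟩, Or.inl rfl⟩
  have hne : S.Nonempty := ⟨x, hxS⟩
  have hbdd : BddAbove S := ⟨y, fun z hz => hz.1.2⟩
  have hcx : x ≤ sSup S := le_csSup hbdd hxS
  have hcy : sSup S ≤ y := csSup_le hne fun z hz => hz.1.2
  set c := sSup S with hcdef
  have hcab : c ∈ Icc a b := ⟨le_trans hx.1 hcx, le_trans hcy hy.2⟩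
  obtain ⟨δ, hδ, hkey⟩ := key c hcab
  have hcS : c = x ∨ φ c - φ x < M * (c - x) := by
    rcases eq_or_lt_of_le hcx with h | h
    · exact Or.inl h.symm
    · right
      obtain ⟨z, hzS, hz⟩ := exists_lt_of_lt_csSup hne
        (show max x (c - δ) < c from max_lt h (by linarith))
      have hzc : z ≤ c := le_csSup hbdd hzS
      have hzab : z ∈ Icc a b := ⟨le_trans hx.1 hzS.1.1, le_trans hzS.1.2 hy.2⟩
      rcases eq_or_lt_of_le hzc with rfl | hzc'
      · rcases hzS.2 with h' | h'
        · exact absurd h' (by intro e; rw [e] at h; exact lt_irrefl _ h)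
        · exact h'
      · have hk : φ c - φ z < M * (c - z) := by
          have hmem : c + (z - c) ∈ Icc a b := by
            have : c + (z - c) = z := by ring
            rw [this]; exact hzab
          have habs : |z - c| < δ := abs_lt.mpr
            ⟨by linarith [le_max_right x (c - δ)], by linarith⟩
          have h1 := hkey (z - c) (by intro e; apply absurd e; intro e'; exact
            (by linarith : ¬ (z - c = 0)) e') habs hmem
          have hneg : z - c < 0 := by linarith
          rw [div_lt_iff_of_neg hneg] at h1
          have heq : c + (z - c) = z := by ring
          rw [heq] at h1
          nlinarith
        rcases hzS.2 with h' | h'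
        · rw [h'] at hk; nlinarith
        · nlinarith
  have hC : φ c - φ x ≤ M * (c - x) := by
    rcases hcS with h2 | h2
    · have h3 : φ c = φ x := by rw [h2]
      have h4 : M * (c - x) = 0 := by rw [h2]; ring
      linarith
    · linarith
  rcases eq_or_lt_of_le hcy with hcy' | hlt
  · rcases hcS with h2 | h2
    · exact absurd (h2 ▸ hcy') (by intro e; rw [← e] at hxy; exact lt_irrefl _ hxy)
    · rw [← hcy']; exact h2
  · exfalso
    set k := min (δ / 2) (y - c) with hkdef
    have hk0 : 0 < k := lt_min (by linarith) (by linarith)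
    have hcky : c + k ≤ y := by
      have := min_le_right (δ / 2) (y - c); simp only [hkdef] at *; linarith
    have hckab : c + k ∈ Icc a b := ⟨by linarith [hcab.1], le_trans hcky hy.2⟩
    have habs : |k| < δ := by
      rw [abs_of_pos hk0]
      have := min_le_left (δ / 2) (y - c); linarith
    have h1 := hkey k (ne_of_gt hk0) habs hckab
    rw [div_lt_iff₀ hk0] at h1
    have hmem : c + k ∈ S := by
      refine ⟨⟨by linarith, hcky⟩, Or.inr ?_⟩
      have heq : M * (c + k - x) = M * k + M * (c - x) := by ring
      linarith
    have := le_csSup hbdd hmem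
    linarith

lemma key_of_dini {a b M : ℝ} {φ : ℝ → ℝ}
    (hdini : ∀ x ∈ Icc a b, upperDini φ (Icc a b) x < ((M : ℝ) : EReal)) :
    ∀ c ∈ Icc a b, ∃ δ > 0, ∀ k : ℝ, k ≠ 0 → |k| < δ → c + k ∈ Icc a b →
      (φ (c + k) - φ c) / k < M := by
  intro c hc
  have h1 : ∀ᶠ k in nhdsWithin 0 {k : ℝ | k ≠ 0 ∧ c + k ∈ Icc a b},
      (((φ (c + k) - φ c) / k : ℝ) : EReal) < ((M : ℝ) : EReal) :=
    eventually_lt_of_limsup_lt (hdini c hc)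
  rw [eventually_nhdsWithin_iff, Metric.eventually_nhds_iff] at h1
  obtain ⟨ε, hε, h2⟩ := h1
  refine ⟨ε, hε, fun k hk hkε hmem => ?_⟩
  have := h2 (y := k) (by simpa [Real.dist_eq] using hkε) ⟨hk, hmem⟩
  exact EReal.coe_lt_coe_iff.mp this

theorem statement14
    (I : Set ℝ) (hIopen : IsOpen I) (hIord : I.OrdConnected)
    (a b : ℝ) (hab : a < b) (M : ℝ) (hM : 0 < M)
    (φ : ℝ → ℝ) (hbv : BoundedVariationOn φ (Set.Icc a b))
    (him : φ '' Set.Icc a b ⊂ I)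
    (hdini : ∀ x ∈ Set.Icc a b, upperDini φ (Set.Icc a b) x < ((M : ℝ) : EReal)) :
    ∃ φn : ℕ → ℝ → ℝ,
      (∀ n, ContDiffOn ℝ 1 (φn n) (Set.Icc a b)) ∧
      (∃ N : ℕ, ∀ n ≥ N, (φn n) '' Set.Icc a b ⊆ I) ∧
      (∀ n, ∀ x ∈ Set.Icc a b, derivWithin (φn n) (Set.Icc a b) x < M) ∧
      Filter.Tendsto (fun n => ∫ x in Set.Icc a b, |φn n x - φ x|) Filter.atTop (nhds 0) := by
  have hIsub : φ '' Icc a b ⊆ I := him.subset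
  obtain ⟨z₀, hz₀I, -⟩ := exists_of_ssubset him
  have key := key_of_dini hdini
  have lemA : ∀ x ∈ Icc a b, ∀ y ∈ Icc a b, x < y → φ y - φ x < M * (y - x) :=
    fun x hx y hy hxy => chain_aux key hx hy hxy
  -- the clamped extension ψ of φ
  set ψ : ℝ → ℝ := fun t => φ (max a (min t b)) with hψdef
  have hclmem : ∀ t : ℝ, max a (min t b) ∈ Icc a b :=
    fun t => ⟨le_max_left _ _, max_le hab.le (min_le_right t b)⟩
  have hclmono : ∀ s t : ℝ, s ≤ t → max a (min s b) ≤ max a (min t b) :=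
    fun s t hst => max_le_max le_rfl (min_le_min hst le_rfl)
  have hclid : ∀ x ∈ Icc a b, max a (min x b) = x := by
    intro x hx; rw [min_eq_left hx.2, max_eq_right hx.1]
  have hcllip : ∀ s t : ℝ, s ≤ t → max a (min t b) - max a (min s b) ≤ t - s := by
    intro s t hst
    rcases le_total (min t b) a with h1 | h1
    · have h2 : min s b ≤ a := le_trans (min_le_min hst le_rfl) h1
      rw [max_eq_left h1, max_eq_left h2]; linarith
    · rw [max_eq_right h1]
      rcases le_total (min s b) a with h2 | h2
      · have hsa : s ≤ a := by
          rcases le_total s b with h4 | h4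
          · rwa [min_eq_left h4] at h2
          · rw [min_eq_right h4] at h2; linarith
        rw [max_eq_left h2]
        rcases le_total t b with h3 | h3
        · rw [min_eq_left h3]; linarith
        · rw [min_eq_right h3]; linarith
      · rw [max_eq_right h2]
        rcases le_total t b with h3 | h3
        · rw [min_eq_left h3, min_eq_left (le_trans hst h3)]
        · rw [min_eq_right h3]
          rcases le_total s b with h4 | h4
          · rw [min_eq_left h4]; linarith
          · rw [min_eq_right h4]; linarith
  have hψval : ∀ x ∈ Icc a b, ψ x = φ x := fun x hx => by rw [hψdef]; simp only; rw [hclid x hx]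
  -- increment bounds for ψ
  have hψA : ∀ s t : ℝ, s ≤ t → ψ t - ψ s ≤ M * (t - s) := by
    intro s t hst
    rcases eq_or_lt_of_le (hclmono s t hst) with h | h
    · rw [hψdef]; simp only; rw [h]
      have : (0:ℝ) ≤ M * (t - s) := mul_nonneg hM.le (by linarith)
      linarith
    · have h1 := lemA _ (hclmem s) _ (hclmem t) h
      have h2 := hcllip s t hst
      have h3 : M * (max a (min t b) - max a (min s b)) ≤ M * (t - s) :=
        mul_le_mul_of_nonneg_left h2 hM.le
      rw [hψdef]; simp only; linarith
  have hψstrict : ∀ t : ℝ, ∀ k : ℝ, 0 < k → ψ t - ψ (t - k) < M * k := by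
    intro t k hk
    rcases eq_or_lt_of_le (hclmono (t - k) t (by linarith)) with h | h
    · rw [hψdef]; simp only; rw [h]
      have : (0:ℝ) < M * k := mul_pos hM hk
      linarith
    · have h1 := lemA _ (hclmem (t - k)) _ (hclmem t) h
      have h2 := hcllip (t - k) t (by linarith)
      have h3 : M * (max a (min t b) - max a (min (t - k) b)) ≤ M * (t - (t - k)) :=
        mul_le_mul_of_nonneg_left h2 hM.le
      have h4 : M * (t - (t - k)) = M * k := by ring
      rw [hψdef]; simp only; linarith
  -- the monotone part g
  set g : ℝ → ℝ := fun t => M * t - ψ t with hgdef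
  have hg : Monotone g := by
    intro s t hst
    have h1 := hψA s t hst
    have h2 : M * (t - s) = M * t - M * s := by ring
    simp only [hgdef]; linarith
  have hgint : ∀ p q : ℝ, IntervalIntegrable g volume p q := fun p q => hg.intervalIntegrable
  have hψeq : ψ = fun t => M * t - g t := by funext t; simp only [hgdef]; ring
  have hψint : ∀ p q : ℝ, IntervalIntegrable ψ volume p q := by
    intro p q
    rw [hψeq]
    exact ((continuous_const.mul continuous_id').intervalIntegrable _ _).sub (hgint p q)
  -- the image set J and its bounds
  set J : Set ℝ := φ '' Icc a b with hJdef
  have hJne : J.Nonempty := ⟨φ a, mem_image_of_mem φ (left_mem_Icc.mpr hab.le)⟩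
  have hψJ : ∀ t : ℝ, ψ t ∈ J := fun t => mem_image_of_mem φ (hclmem t)
  have hJbddA : BddAbove J := by
    refine ⟨M * b - g a, ?_⟩
    rintro z ⟨t, ht, rfl⟩
    have h1 : g a ≤ g t := hg ht.1
    have h2 : M * t ≤ M * b := mul_le_mul_of_nonneg_left ht.2 hM.le
    have h3 : φ t = M * t - g t := by
      have := hψval t ht; simp only [hgdef] at *; linarith
    linarith
  have hJbddB : BddBelow J := by
    refine ⟨M * a - g b, ?_⟩
    rintro z ⟨t, ht, rfl⟩
    have h1 : g t ≤ g b := hg ht.2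
    have h2 : M * a ≤ M * t := mul_le_mul_of_nonneg_left ht.1 hM.le
    have h3 : φ t = M * t - g t := by
      have := hψval t ht; simp only [hgdef] at *; linarith
    linarith
  set m : ℝ := sInf J with hmdef
  set s : ℝ := sSup J with hsdef
  have hmψ : ∀ t : ℝ, m ≤ ψ t := fun t => csInf_le hJbddB (hψJ t)
  have hψs : ∀ t : ℝ, ψ t ≤ s := fun t => le_csSup hJbddA (hψJ t)
  -- membership lemma
  have memI : ∀ θ : ℝ, 0 < θ → θ < 1 → ∀ v : ℝ, m ≤ v → v ≤ s →
      (1 - θ) * v + θ * z₀ ∈ I := by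
    intro θ hθ0 hθ1 v hmv hvs
    rcases lt_trichotomy v z₀ with hvz | hvz | hvz
    · have hval1 : v < (1 - θ) * v + θ * z₀ := by nlinarith
      have hval2 : (1 - θ) * v + θ * z₀ ≤ z₀ := by nlinarith
      obtain ⟨p, hpJ, hp⟩ := exists_lt_of_csInf_lt hJne (lt_of_le_of_lt hmv hval1)
      exact hIord.out (hIsub hpJ) hz₀I ⟨hp.le, hval2⟩
    · have : (1 - θ) * v + θ * z₀ = z₀ := by rw [hvz]; ring
      rw [this]; exact hz₀I
    · have hval1 : (1 - θ) * v + θ * z₀ < v := by nlinarith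
      have hval2 : z₀ ≤ (1 - θ) * v + θ * z₀ := by nlinarith
      obtain ⟨q, hqJ, hq⟩ := exists_lt_of_lt_csSup hJne (lt_of_lt_of_le hval1 hvs)
      exact hIord.out hz₀I (hIsub hqJ) ⟨hval2, hq.le⟩
  -- sequence parameters
  have hepos : ∀ n : ℕ, (0:ℝ) < 1 / (n + 1) := fun n => by positivity
  have hele : ∀ n : ℕ, (1:ℝ) / (n + 1) ≤ 1 := fun n => by
    rw [div_le_one (by positivity)]
    linarith [Nat.cast_nonneg (α := ℝ) n]
  have hθpos : ∀ n : ℕ, (0:ℝ) < 1 / (n + 2) := fun n => by positivity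
  have hθlt : ∀ n : ℕ, (1:ℝ) / (n + 2) < 1 := fun n => by
    rw [div_lt_one (by positivity)]
    linarith [Nat.cast_nonneg (α := ℝ) n]
  have hθle : ∀ n : ℕ, (1:ℝ) / (n + 2) ≤ 1 / (n + 1) := fun n =>
    one_div_le_one_div_of_le (by positivity) (by linarith)
  set Cst : ℝ := (M * (b - a) + 2 * (g b - g (a - 3))) + ((|z₀| + max |m| |s|) + 1) * (b - a)
    with hCstdef
  have master : ∀ n : ℕ,
      ContDiffOn ℝ 1 (fun x => (1 - 1 / ((n:ℝ) + 2)) *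
          mavg (1 / ((n:ℝ) + 1)) (mavg (1 / ((n:ℝ) + 1)) ψ) x + (1 / ((n:ℝ) + 2)) * z₀)
        (Icc a b) ∧
      (∀ x ∈ Icc a b, (1 - 1 / ((n:ℝ) + 2)) *
          mavg (1 / ((n:ℝ) + 1)) (mavg (1 / ((n:ℝ) + 1)) ψ) x + (1 / ((n:ℝ) + 2)) * z₀ ∈ I) ∧
      (∀ x ∈ Icc a b, derivWithin (fun x => (1 - 1 / ((n:ℝ) + 2)) *
          mavg (1 / ((n:ℝ) + 1)) (mavg (1 / ((n:ℝ) + 1)) ψ) x + (1 / ((n:ℝ) + 2)) * z₀)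
          (Icc a b) x < M) ∧
      (∫ x in Icc a b, |((1 - 1 / ((n:ℝ) + 2)) *
          mavg (1 / ((n:ℝ) + 1)) (mavg (1 / ((n:ℝ) + 1)) ψ) x + (1 / ((n:ℝ) + 2)) * z₀) - φ x|)
        ≤ Cst * (1 / ((n:ℝ) + 1)) := by
    intro n
    have he : (0:ℝ) < 1 / ((n:ℝ) + 1) := hepos n
    have he1 : (1:ℝ) / ((n:ℝ) + 1) ≤ 1 := hele n
    have hθ0 : (0:ℝ) < 1 / ((n:ℝ) + 2) := hθpos n
    have hθ1 : (1:ℝ) / ((n:ℝ) + 2) < 1 := hθlt n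
    have hθe : (1:ℝ) / ((n:ℝ) + 2) ≤ 1 / ((n:ℝ) + 1) := hθle n
    set e : ℝ := 1 / ((n:ℝ) + 1) with hedef
    set θ : ℝ := 1 / ((n:ℝ) + 2) with hθdef
    -- continuity chain
    have hucont : Continuous (mavg e ψ) := mavg_continuous hψint
    have huint : ∀ p q : ℝ, IntervalIntegrable (mavg e ψ) volume p q :=
      fun p q => hucont.intervalIntegrable p q
    have hWcont : Continuous (mavg e (mavg e ψ)) := mavg_continuous huint
    have hWd : ∀ x : ℝ, HasDerivAt (mavg e (mavg e ψ))
        (e⁻¹ * (mavg e ψ x - mavg e ψ (x - e))) x :=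
      fun x => mavg_hasDerivAt huint hucont x
    have hΦd : ∀ x : ℝ, HasDerivAt (fun x => (1 - θ) * mavg e (mavg e ψ) x + θ * z₀)
        ((1 - θ) * (e⁻¹ * (mavg e ψ x - mavg e ψ (x - e)))) x :=
      fun x => ((hWd x).const_mul _).add_const _
    have hdc : Continuous (fun x => e⁻¹ * (mavg e ψ x - mavg e ψ (x - e))) :=
      continuous_const.mul (hucont.sub (hucont.comp (continuous_id.sub continuous_const)))
    -- (1) smoothness
    have hsmooth : ContDiff ℝ 1 (fun x => (1 - θ) * mavg e (mavg e ψ) x + θ * z₀) := by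
      rw [contDiff_one_iff_deriv]
      refine ⟨fun x => (hΦd x).differentiableAt, ?_⟩
      have hde : deriv (fun x => (1 - θ) * mavg e (mavg e ψ) x + θ * z₀)
          = fun x => (1 - θ) * (e⁻¹ * (mavg e ψ x - mavg e ψ (x - e))) :=
        funext fun x => (hΦd x).deriv
      rw [hde]
      exact continuous_const.mul hdc
    -- (3) slope bound
    have hslope : ∀ x : ℝ, e⁻¹ * (mavg e ψ x - mavg e ψ (x - e)) < M := by
      intro x
      have hshift := mavg_sub_shift (h := e) hψint x
      have hψsh : IntervalIntegrable (fun t => ψ t - ψ (t - e)) volume (x - e) x := by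
        refine (hψint _ _).sub ?_
        have := (hψint (x - e - e) (x - e)).comp_sub_right e
        simpa [sub_add_cancel] using this
      have hpos : 0 < ∫ t in (x - e)..x, (M * e - (ψ t - ψ (t - e))) :=
        intervalIntegral_pos_of_pos_on (intervalIntegrable_const.sub hψsh)
          (fun t _ => by linarith [hψstrict t e he]) (by linarith)
      have hsplit : (∫ t in (x - e)..x, (M * e - (ψ t - ψ (t - e))))
          = (x - (x - e)) * (M * e) - ∫ t in (x - e)..x, (ψ t - ψ (t - e)) := by
        rw [integral_sub intervalIntegrable_const hψsh, intervalIntegral.integral_const,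
          smul_eq_mul]
      have hQ : (∫ t in (x - e)..x, (ψ t - ψ (t - e))) < M * e ^ 2 := by
        have h5 : (x - (x - e)) * (M * e) = M * e ^ 2 := by ring
        linarith
      rw [hshift]
      have h2 : e⁻¹ * (e⁻¹ * (M * e ^ 2)) = M := by
        have hne : e ≠ 0 := ne_of_gt he
        field_simp
      have h3 : e⁻¹ * (e⁻¹ * (∫ t in (x - e)..x, (ψ t - ψ (t - e))))
          < e⁻¹ * (e⁻¹ * (M * e ^ 2)) := by
        apply mul_lt_mul_of_pos_left (mul_lt_mul_of_pos_left hQ (by positivity)) (by positivity)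
      linarith
    have hderiv : ∀ x ∈ Icc a b, derivWithin (fun x => (1 - θ) * mavg e (mavg e ψ) x + θ * z₀)
        (Icc a b) x < M := by
      intro x hx
      rw [(hΦd x).differentiableAt.derivWithin (uniqueDiffOn_Icc hab x hx), (hΦd x).deriv]
      rcases le_or_gt (e⁻¹ * (mavg e ψ x - mavg e ψ (x - e))) 0 with h | h
      · have : (1 - θ) * (e⁻¹ * (mavg e ψ x - mavg e ψ (x - e))) ≤ 0 :=
          mul_nonpos_of_nonneg_of_nonpos (by linarith) h
        linarith
      · have h4 := hslope x
        nlinarith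
    -- (2) membership
    have humem : ∀ t : ℝ, m ≤ mavg e ψ t ∧ mavg e ψ t ≤ s := fun t =>
      ⟨mavg_ge he hψint (fun r _ => hmψ r), mavg_le he hψint (fun r _ => hψs r)⟩
    have hWmem : ∀ t : ℝ, m ≤ mavg e (mavg e ψ) t ∧ mavg e (mavg e ψ) t ≤ s := fun t =>
      ⟨mavg_ge he huint (fun r _ => (humem r).1), mavg_le he huint (fun r _ => (humem r).2)⟩
    have hmem : ∀ x ∈ Icc a b, (1 - θ) * mavg e (mavg e ψ) x + θ * z₀ ∈ I :=
      fun x _ => memI θ hθ0 hθ1 _ (hWmem x).1 (hWmem x).2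
    -- (4) L¹ bound
    have hu2 : mavg e ψ = fun t => M * t - (M * e / 2 + mavg e g t) := by
      rw [hψeq]
      funext t
      rw [mavg_linear_sub he hgint M t]
      ring
    have hWeq : ∀ x : ℝ, mavg e (mavg e ψ) x = M * x - M * e - mavg e (mavg e g) x := by
      intro x
      rw [hu2, mavg_linear_sub (g := fun t => M * e / 2 + mavg e g t) he
        (fun p q => (continuous_const.add (mavg_continuous hgint)).intervalIntegrable p q) M x,
        mavg_const_add he (fun p q => (mavg_continuous hgint).intervalIntegrable p q)]
      ring
    have hG2cont : Continuous (mavg e (mavg e g)) :=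
      mavg_continuous (fun p q => (mavg_continuous hgint).intervalIntegrable p q)
    have hG2le : ∀ x : ℝ, mavg e (mavg e g) x ≤ g x := fun x =>
      le_trans (mavg_le_self he (mavg_mono he hg) x) (mavg_le_self he hg x)
    have habs : ∀ x : ℝ, |mavg e (mavg e ψ) x - ψ x|
        ≤ M * e + (g x - mavg e (mavg e g) x) := by
      intro x
      have hψx : ψ x = M * x - g x := by simp only [hψeq]
      have h0 : 0 ≤ g x - mavg e (mavg e g) x := sub_nonneg.mpr (hG2le x)
      have hMe : 0 ≤ M * e := by positivity
      rw [hWeq x, hψx, abs_le]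
      constructor <;> [linarith; linarith]
    have hL1W : (∫ x in a..b, |mavg e (mavg e ψ) x - ψ x|)
        ≤ (M * (b - a) + 2 * (g b - g (a - 3))) * e := by
      have hint1 : IntervalIntegrable (fun x => |mavg e (mavg e ψ) x - ψ x|) volume a b :=
        ((hWcont.intervalIntegrable a b).sub (hψint a b)).abs
      have hint2 : IntervalIntegrable (fun x => M * e + (g x - mavg e (mavg e g) x))
          volume a b :=
        intervalIntegrable_const.add ((hgint a b).sub (hG2cont.intervalIntegrable a b))
      have step := integral_mono_on hab.le hint1 hint2 (fun x _ => habs x)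
      have hsplit : (∫ x in a..b, (M * e + (g x - mavg e (mavg e g) x)))
          = (b - a) * (M * e) + ∫ x in a..b, (g x - mavg e (mavg e g) x) := by
        rw [integral_add intervalIntegrable_const ((hgint a b).sub
          (hG2cont.intervalIntegrable a b)), intervalIntegral.integral_const, smul_eq_mul]
      have hdl := double_avg_loss he he1 hab.le hg
      rw [hsplit] at step
      have heq : (b - a) * (M * e) + 2 * e * (g b - g (a - 3))
          = (M * (b - a) + 2 * (g b - g (a - 3))) * e := by ring
      linarith
    have hL1 : (∫ x in Icc a b, |((1 - θ) * mavg e (mavg e ψ) x + θ * z₀) - φ x|)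
        ≤ Cst * e := by
      have hIcc : (∫ x in Icc a b, |((1 - θ) * mavg e (mavg e ψ) x + θ * z₀) - φ x|)
          = ∫ x in a..b, |((1 - θ) * mavg e (mavg e ψ) x + θ * z₀) - φ x| := by
        rw [MeasureTheory.integral_Icc_eq_integral_Ioc,
          ← intervalIntegral.integral_of_le hab.le]
      have hcongr : (∫ x in a..b, |((1 - θ) * mavg e (mavg e ψ) x + θ * z₀) - φ x|)
          = ∫ x in a..b, |((1 - θ) * mavg e (mavg e ψ) x + θ * z₀) - ψ x| := by
        apply intervalIntegral.integral_congr
        intro x hx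
        show |((1 - θ) * mavg e (mavg e ψ) x + θ * z₀) - φ x|
            = |((1 - θ) * mavg e (mavg e ψ) x + θ * z₀) - ψ x|
        rw [hψval x (by rwa [uIcc_of_le hab.le] at hx)]
      have hKb : ∀ x : ℝ, |((1 - θ) * mavg e (mavg e ψ) x + θ * z₀) - ψ x|
          ≤ |mavg e (mavg e ψ) x - ψ x| + θ * (|z₀| + max |m| |s|) := by
        intro x
        have h1 : ((1 - θ) * mavg e (mavg e ψ) x + θ * z₀) - ψ x
            = (1 - θ) * (mavg e (mavg e ψ) x - ψ x) + θ * (z₀ - ψ x) := by ring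
        have e2 : |ψ x| ≤ max |m| |s| := by
          rw [abs_le]
          constructor
          · linarith [neg_abs_le m, le_max_left |m| |s|, hmψ x]
          · linarith [le_abs_self s, le_max_right |m| |s|, hψs x]
        have e1 : |z₀ - ψ x| ≤ |z₀| + |ψ x| := by
          have := abs_add_le z₀ (-(ψ x))
          simpa [sub_eq_add_neg] using this
        have e3 : (0:ℝ) ≤ |mavg e (mavg e ψ) x - ψ x| := abs_nonneg _
        have e4 : |z₀ - ψ x| ≤ |z₀| + max |m| |s| := by linarith
        have e5 : θ * |z₀ - ψ x| ≤ θ * (|z₀| + max |m| |s|) :=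
          mul_le_mul_of_nonneg_left e4 hθ0.le
        have e6 : (1 - θ) * |mavg e (mavg e ψ) x - ψ x| ≤ 1 * |mavg e (mavg e ψ) x - ψ x| :=
          mul_le_mul_of_nonneg_right (by linarith) e3
        calc |((1 - θ) * mavg e (mavg e ψ) x + θ * z₀) - ψ x|
            = |(1 - θ) * (mavg e (mavg e ψ) x - ψ x) + θ * (z₀ - ψ x)| := by rw [h1]
          _ ≤ |(1 - θ) * (mavg e (mavg e ψ) x - ψ x)| + |θ * (z₀ - ψ x)| := abs_add_le _ _
          _ = (1 - θ) * |mavg e (mavg e ψ) x - ψ x| + θ * |z₀ - ψ x| := by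
              rw [abs_mul, abs_mul, abs_of_nonneg (by linarith : (0:ℝ) ≤ 1 - θ),
                abs_of_pos hθ0]
          _ ≤ |mavg e (mavg e ψ) x - ψ x| + θ * (|z₀| + max |m| |s|) := by linarith
      have hintΦ : IntervalIntegrable
          (fun x => |((1 - θ) * mavg e (mavg e ψ) x + θ * z₀) - ψ x|) volume a b := by
        refine IntervalIntegrable.abs ?_
        exact (((continuous_const.mul hWcont).add continuous_const).intervalIntegrable a b).sub
          (hψint a b)
      have hintR : IntervalIntegrable
          (fun x => |mavg e (mavg e ψ) x - ψ x| + θ * (|z₀| + max |m| |s|)) volume a b :=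
        (((hWcont.intervalIntegrable a b).sub (hψint a b)).abs).add intervalIntegrable_const
      have hmono := integral_mono_on hab.le hintΦ hintR (fun x _ => hKb x)
      have hsplit2 : (∫ x in a..b, (|mavg e (mavg e ψ) x - ψ x| + θ * (|z₀| + max |m| |s|)))
          = (∫ x in a..b, |mavg e (mavg e ψ) x - ψ x|) + (b - a) * (θ * (|z₀| + max |m| |s|)) := by
        rw [integral_add (((hWcont.intervalIntegrable a b).sub (hψint a b)).abs)
          intervalIntegrable_const, intervalIntegral.integral_const, smul_eq_mul]
      have hK0 : (0:ℝ) ≤ |z₀| + max |m| |s| := by positivity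
      have hbd : (b - a) * (θ * (|z₀| + max |m| |s|)) ≤ (b - a) * (e * (|z₀| + max |m| |s|)) := by
        apply mul_le_mul_of_nonneg_left _ (by linarith)
        exact mul_le_mul_of_nonneg_right hθe hK0
      have heq2 : (M * (b - a) + 2 * (g b - g (a - 3))) * e
          + (b - a) * (e * (|z₀| + max |m| |s|)) ≤ Cst * e := by
        rw [hCstdef]
        have : (0:ℝ) ≤ e := he.le
        nlinarith [he.le, sub_nonneg.mpr hab.le]
      rw [hIcc, hcongr]
      rw [hsplit2] at hmono
      linarith
    exact ⟨hsmooth.contDiffOn, hmem, hderiv, hL1⟩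
  refine ⟨fun n x => (1 - 1 / ((n:ℝ) + 2)) * mavg (1 / ((n:ℝ) + 1)) (mavg (1 / ((n:ℝ) + 1)) ψ) x
      + (1 / ((n:ℝ) + 2)) * z₀, fun n => (master n).1, ⟨0, fun n _ => ?_⟩,
      fun n => (master n).2.2.1, ?_⟩
  · rintro y ⟨x, hx, rfl⟩
    exact (master n).2.1 x hx
  · apply squeeze_zero (fun n => MeasureTheory.integral_nonneg fun x => abs_nonneg _)
      (fun n => (master n).2.2.2)
    have h := Filter.Tendsto.const_mul Cst tendsto_one_div_add_atTop_nhds_zero_nat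
    simpa using h
end
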